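/- arXiv:1305.2970 — 4 statements merged into one kernel-verified Lean document; each statement's English description precedes it below -/
import Mathlib

section
/- Let K ⊆ ℝ^n be a nonempty compact set, let A ⊆ ℕ^n be finite, and suppose ℝ[x]_A is K-full. Then a polynomial f ∈ ℝ[x]_A lies in the interior of the cone P_A(K) (interior taken in the finite-dimensional space ℝ[x]_A) if and only if f(u) > 0 for every u ∈ K. -/
open MeasureTheory MvPolynomial Finset

noncomputable section

/-- Exponent vectors `α ∈ ℕ^n`. -/
abbrev Exp (n : ℕ) := Fin n → ℕ

/-- Evaluation of the monomial `x^α` at a point `u ∈ ℝ^n`. -/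
def monoEval {n : ℕ} (α : Exp n) (u : Fin n → ℝ) : ℝ := ∏ i, u i ^ α i

/-- A polynomial in `ℝ[x]_A` is identified with its coefficient vector `p : A → ℝ`;
this is its evaluation at `u`. -/
def evalA {n : ℕ} (A : Finset (Exp n)) (p : A → ℝ) (u : Fin n → ℝ) : ℝ :=
  ∑ α : A, p α * monoEval (α : Exp n) u

/-- The pairing `⟨p, y⟩ = ∑_{α ∈ A} p_α y_α` between `ℝ[x]_A` and `ℝ^A`. -/
def pairA {n : ℕ} (A : Finset (Exp n)) (p y : A → ℝ) : ℝ :=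
  ∑ α : A, p α * y α

/-- The cone `P_A(K)` of polynomials in `ℝ[x]_A` nonnegative on `K`. -/
def PAcone {n : ℕ} (A : Finset (Exp n)) (K : Set (Fin n → ℝ)) : Set (A → ℝ) :=
  {p | ∀ u ∈ K, 0 ≤ evalA A p u}

/-- The cone `R_A(K)` of A-truncated moment sequences admitting a representing
(positive Borel) measure supported in `K`. -/
def RAcone {n : ℕ} (A : Finset (Exp n)) (K : Set (Fin n → ℝ)) : Set (A → ℝ) :=
  {y | ∃ μ : Measure (Fin n → ℝ), μ Kᶜ = 0 ∧
        ∀ α : A, Integrable (monoEval (α : Exp n)) μ ∧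
                 y α = ∫ u, monoEval (α : Exp n) u ∂μ}

/-- `ℝ[x]_A` is `K`-full: some `p ∈ ℝ[x]_A` is strictly positive on `K`. -/
def KFull {n : ℕ} (A : Finset (Exp n)) (K : Set (Fin n → ℝ)) : Prop :=
  ∃ p : A → ℝ, ∀ u ∈ K, 0 < evalA A p u

/-- The semialgebraic set `K = {x : h(x) = 0, g(x) ≥ 0}`. -/
def semiK {n m1 m2 : ℕ} (h : Fin m1 → MvPolynomial (Fin n) ℝ)
    (g : Fin m2 → MvPolynomial (Fin n) ℝ) : Set (Fin n → ℝ) :=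
  {x | (∀ i, eval x (h i) = 0) ∧ (∀ j, 0 ≤ eval x (g j))}

/-- `I_{2k}(h) = h_1 ℝ[x]_{2k - deg h_1} + ⋯ + h_{m1} ℝ[x]_{2k - deg h_{m1}}`. -/
def IhSet {n m1 : ℕ} (h : Fin m1 → MvPolynomial (Fin n) ℝ) (k : ℕ) :
    Set (MvPolynomial (Fin n) ℝ) :=
  {p | ∃ q : Fin m1 → MvPolynomial (Fin n) ℝ,
        (∀ i, q i = 0 ∨ (h i).totalDegree + (q i).totalDegree ≤ 2 * k) ∧
        p = ∑ i, h i * q i}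

/-- `Q_k(g) = Σ_{n,2k} + g_1 Σ_{n,2k-deg g_1} + ⋯ + g_{m2} Σ_{n,2k-deg g_{m2}}`. -/
def QgSet {n m2 : ℕ} (g : Fin m2 → MvPolynomial (Fin n) ℝ) (k : ℕ) :
    Set (MvPolynomial (Fin n) ℝ) :=
  {p | ∃ σ₀ : MvPolynomial (Fin n) ℝ, ∃ σ : Fin m2 → MvPolynomial (Fin n) ℝ,
        IsSumSq σ₀ ∧ σ₀.totalDegree ≤ 2 * k ∧
        (∀ j, IsSumSq (σ j) ∧ (σ j = 0 ∨ (g j).totalDegree + (σ j).totalDegree ≤ 2 * k)) ∧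
        p = σ₀ + ∑ j, g j * σ j}

/-- The truncated preordering `I_{2k}(h) + Q_k(g)`. -/
def IQSet {n m1 m2 : ℕ} (h : Fin m1 → MvPolynomial (Fin n) ℝ)
    (g : Fin m2 → MvPolynomial (Fin n) ℝ) (k : ℕ) : Set (MvPolynomial (Fin n) ℝ) :=
  {p | ∃ a ∈ IhSet h k, ∃ b ∈ QgSet g k, p = a + b}

/-- `I(h) + Q(g)` is archimedean: `R - ‖x‖² ∈ I_{2k}(h) + Q_k(g)` for some `R > 0` and `k`. -/
def ArchQM {n m1 m2 : ℕ} (h : Fin m1 → MvPolynomial (Fin n) ℝ)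
    (g : Fin m2 → MvPolynomial (Fin n) ℝ) : Prop :=
  ∃ R : ℝ, 0 < R ∧ ∃ k : ℕ, (C R - ∑ i : Fin n, X i ^ 2) ∈ IQSet h g k

/-- The Riesz functional `L_z(p) = ∑_α p_α z_α` of a (truncated) moment sequence `z`. -/
def riesz {n : ℕ} (z : Exp n → ℝ) (p : MvPolynomial (Fin n) ℝ) : ℝ :=
  ∑ α ∈ p.support, coeff α p * z α

/-- `Φ_k(g)`: all localizing matrices `L_{g_j}^{(k)}(z) ⪰ 0` for `j = 0,1,…,m2`
(with `g_0 = 1`), expressed via the quadratic forms `L_z(g_j p²) ≥ 0`. -/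
def PhiSet {n m2 : ℕ} (g : Fin m2 → MvPolynomial (Fin n) ℝ) (k : ℕ) : Set (Exp n → ℝ) :=
  {z | (∀ p : MvPolynomial (Fin n) ℝ, (p ^ 2).totalDegree ≤ 2 * k → 0 ≤ riesz z (p ^ 2)) ∧
       (∀ j, ∀ p : MvPolynomial (Fin n) ℝ,
          (g j * p ^ 2).totalDegree ≤ 2 * k → 0 ≤ riesz z (g j * p ^ 2))}

/-- `E_k(h)`: all localizing matrices `L_{h_i}^{(k)}(z) = 0`, expressed via the
vanishing of the quadratic forms `L_z(h_i p²)`. -/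
def ESet {n m1 : ℕ} (h : Fin m1 → MvPolynomial (Fin n) ℝ) (k : ℕ) : Set (Exp n → ℝ) :=
  {z | ∀ i, ∀ p : MvPolynomial (Fin n) ℝ,
        (h i * p ^ 2).totalDegree ≤ 2 * k → riesz z (h i * p ^ 2) = 0}

/-- Restriction `z|_A` of a moment sequence to the indices in `A`. -/
def restrA {n : ℕ} (A : Finset (Exp n)) (z : Exp n → ℝ) : A → ℝ := fun α => z α

/-- `deg(A) = max { |α| : α ∈ A }`. -/
def degA {n : ℕ} (A : Finset (Exp n)) : ℕ := A.sup fun α => ∑ i, α i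

/-- The polynomial `∑_{α ∈ A} p_α x^α` associated to a coefficient vector `p : A → ℝ`. -/
def toPoly {n : ℕ} (A : Finset (Exp n)) (p : A → ℝ) : MvPolynomial (Fin n) ℝ :=
  ∑ α : A, monomial (Finsupp.equivFunOnFinite.symm (α : Exp n)) (p α)

/-- `c(λ) = c - λ_1 a_1 - ⋯ - λ_m a_m` (as coefficient vectors in `ℝ[x]_A`). -/
def cLam {n m : ℕ} {A : Finset (Exp n)} (c : A → ℝ) (a : Fin m → (A → ℝ))
    (lam : Fin m → ℝ) : A → ℝ :=
  c - ∑ i, lam i • a i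

/-- Feasibility of `w` for the `k`-th primal relaxation (4.3). -/
def RelaxFeas {n m1 m2 m : ℕ} (h : Fin m1 → MvPolynomial (Fin n) ℝ)
    (g : Fin m2 → MvPolynomial (Fin n) ℝ) (A : Finset (Exp n))
    (a : Fin m → (A → ℝ)) (b : Fin m → ℝ) (k : ℕ) (w : Exp n → ℝ) : Prop :=
  w ∈ PhiSet g k ∩ ESet h k ∧ ∀ i, pairA A (a i) (restrA A w) = b i

/-- `w` is a minimizer of the `k`-th primal relaxation (4.3). -/
def RelaxMin {n m1 m2 m : ℕ} (h : Fin m1 → MvPolynomial (Fin n) ℝ)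
    (g : Fin m2 → MvPolynomial (Fin n) ℝ) (A : Finset (Exp n)) (c : A → ℝ)
    (a : Fin m → (A → ℝ)) (b : Fin m → ℝ) (k : ℕ) (w : Exp n → ℝ) : Prop :=
  RelaxFeas h g A a b k w ∧
  ∀ w' : Exp n → ℝ, RelaxFeas h g A a b k w' →
    pairA A c (restrA A w) ≤ pairA A c (restrA A w')

/-- The exponents `α ∈ ℕ^n` with `|α| ≤ r`, as a finite set. -/
def expSet (n r : ℕ) : Finset (Exp n) :=
  (Fintype.piFinset fun _ : Fin n => Finset.range (r + 1)).filter fun α => ∑ i, α i ≤ r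

/-- The `r`-th order moment matrix `M_r(z)`, with rows and columns indexed by
exponents of degree `≤ r` and entries `z_{α+β}`. -/
def momMat {n : ℕ} (z : Exp n → ℝ) (r : ℕ) :
    Matrix (expSet n r) (expSet n r) ℝ :=
  fun α β => z ((α : Exp n) + (β : Exp n))

/-- The degree bound `d_K = max{1, ⌈deg h_i / 2⌉, ⌈deg g_j / 2⌉}`. -/
def dKnum {n m1 m2 : ℕ} (h : Fin m1 → MvPolynomial (Fin n) ℝ)
    (g : Fin m2 → MvPolynomial (Fin n) ℝ) : ℕ :=
  max 1 (max (Finset.univ.sup fun i => ((h i).totalDegree + 1) / 2)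
             (Finset.univ.sup fun j => ((g j).totalDegree + 1) / 2))

/-- The truncation `z|_{2t}` is flat: the localizing conditions hold at order `t`
and `rank M_{t - d_K}(z) = rank M_t(z)`. -/
def IsFlat {n m1 m2 : ℕ} (h : Fin m1 → MvPolynomial (Fin n) ℝ)
    (g : Fin m2 → MvPolynomial (Fin n) ℝ) (t : ℕ) (z : Exp n → ℝ) : Prop :=
  z ∈ PhiSet g t ∩ ESet h t ∧
  (momMat z (t - dKnum h g)).rank = (momMat z t).rank

/-- `u` is a KKT point of `min f(x) s.t. h(x) = 0, g(x) ≥ 0`. -/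
def IsKKT {n m1 m2 : ℕ} (h : Fin m1 → MvPolynomial (Fin n) ℝ)
    (g : Fin m2 → MvPolynomial (Fin n) ℝ) (f : MvPolynomial (Fin n) ℝ)
    (u : Fin n → ℝ) : Prop :=
  u ∈ semiK h g ∧ ∃ μ : Fin m1 → ℝ, ∃ ν : Fin m2 → ℝ,
    (∀ j, 0 ≤ ν j) ∧ (∀ j, ν j * eval u (g j) = 0) ∧
    ∀ l : Fin n, eval u (pderiv l f) =
      ∑ i, μ i * eval u (pderiv l (h i)) + ∑ j, ν j * eval u (pderiv l (g j))


lemma evalA_sub {n : ℕ} (A : Finset (Exp n)) (p q : A → ℝ) (u : Fin n → ℝ) :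
    evalA A (p - q) u = evalA A p u - evalA A q u := by
  simp [evalA, sub_mul, Finset.sum_sub_distrib]

lemma evalA_smul {n : ℕ} (A : Finset (Exp n)) (c : ℝ) (p : A → ℝ) (u : Fin n → ℝ) :
    evalA A (c • p) u = c * evalA A p u := by
  simp [evalA, Finset.mul_sum, mul_assoc]

lemma continuous_evalA {n : ℕ} (A : Finset (Exp n)) (p : A → ℝ) :
    Continuous (evalA A p) := by
  unfold evalA monoEval
  exact continuous_finset_sum _ fun α _ => continuous_const.mul
    (continuous_finset_prod _ fun i _ => (continuous_apply i).pow _)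

/-- For a nonempty compact `K` and `K`-full `ℝ[x]_A`,
`f ∈ ℝ[x]_A` is interior to `P_A(K)` iff `f > 0` on `K`. -/
theorem statement_0 {n : ℕ} (hn : 1 ≤ n) {A : Finset (Exp n)} (hA : A.Nonempty)
    {K : Set (Fin n → ℝ)} (hKne : K.Nonempty) (hKcpt : IsCompact K)
    (hfull : KFull A K) (f : A → ℝ) :
    f ∈ interior (PAcone A K) ↔ ∀ u ∈ K, 0 < evalA A f u := by
  constructor
  · intro hint u hu
    obtain ⟨p, hp⟩ := hfull
    obtain ⟨ε, hε, hball⟩ := Metric.isOpen_iff.1 isOpen_interior f hint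
    set δ : ℝ := ε / (2 * (‖p‖ + 1)) with hδdef
    have hpnorm : (0:ℝ) < ‖p‖ + 1 := by positivity
    have hδ : 0 < δ := by positivity
    have hmem : f - δ • p ∈ PAcone A K := by
      apply interior_subset
      apply hball
      rw [Metric.mem_ball, dist_eq_norm]
      have : f - δ • p - f = -(δ • p) := by abel
      rw [this, norm_neg, norm_smul, Real.norm_of_nonneg hδ.le]
      calc δ * ‖p‖ ≤ δ * (‖p‖ + 1) := by
            exact mul_le_mul_of_nonneg_left (by linarith) hδ.le
        _ = ε / 2 := by rw [hδdef, div_mul_eq_mul_div, div_eq_div_iff (by positivity) (by norm_num)]; ring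
        _ < ε := by linarith
    have h0 := hmem u hu
    rw [evalA_sub, evalA_smul] at h0
    have hpu := hp u hu
    nlinarith
  · intro hpos
    -- bound on monomials over K
    have hcont : Continuous fun u : Fin n → ℝ => ∑ α : A, |monoEval (α : Exp n) u| := by
      apply continuous_finset_sum _ fun α _ => ?_
      exact (continuous_finset_prod _ fun i _ => (continuous_apply i).pow _).abs
    obtain ⟨C, hC⟩ := (hKcpt.image hcont).bddAbove
    have hCb : ∀ u ∈ K, ∑ α : A, |monoEval (α : Exp n) u| ≤ C := fun u hu =>
      hC ⟨u, hu, rfl⟩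
    have hC0 : 0 ≤ C := by
      obtain ⟨u, hu⟩ := hKne
      exact le_trans (Finset.sum_nonneg fun α _ => abs_nonneg _) (hCb u hu)
    -- minimum of f on K
    obtain ⟨u₀, hu₀, hmin⟩ := hKcpt.exists_isMinOn hKne (continuous_evalA A f).continuousOn
    set m : ℝ := evalA A f u₀ with hm
    have hm0 : 0 < m := hpos u₀ hu₀
    rw [mem_interior]
    refine ⟨Metric.ball f (m / (C + 1)), ?_, Metric.isOpen_ball,
      Metric.mem_ball_self (by positivity)⟩
    intro q hq u hu
    have hdist : ‖q - f‖ < m / (C + 1) := by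
      rw [← dist_eq_norm]; exact Metric.mem_ball.1 hq
    have hkey : |evalA A q u - evalA A f u| ≤ ‖q - f‖ * C := by
      rw [← evalA_sub]
      calc |evalA A (q - f) u| ≤ ∑ α : A, |(q - f) α * monoEval (α : Exp n) u| :=
            Finset.abs_sum_le_sum_abs _ _
        _ ≤ ∑ α : A, ‖q - f‖ * |monoEval (α : Exp n) u| := by
            apply Finset.sum_le_sum
            intro α _
            rw [abs_mul]
            exact mul_le_mul_of_nonneg_right (by
              have := norm_le_pi_norm (q - f) α
              simpa [Real.norm_eq_abs] using this) (abs_nonneg _)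
        _ = ‖q - f‖ * ∑ α : A, |monoEval (α : Exp n) u| := by rw [Finset.mul_sum]
        _ ≤ ‖q - f‖ * C := mul_le_mul_of_nonneg_left (hCb u hu) (norm_nonneg _)
    have hfu : m ≤ evalA A f u := hmin hu
    have hbound : ‖q - f‖ * C < m := by
      calc ‖q - f‖ * C ≤ ‖q - f‖ * (C + 1) := by
            exact mul_le_mul_of_nonneg_left (by linarith) (norm_nonneg _)
        _ < m / (C + 1) * (C + 1) := by
            exact mul_lt_mul_of_pos_right hdist (by positivity)
        _ = m := by field_simp
    have := abs_le.1 hkey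
    linarith [this.1]

end
end

section
/- Let K ⊆ ℝ^n be a nonempty compact set, let A ⊆ ℕ^n be finite, and suppose ℝ[x]_A is K-full. Then R_A(K) equals the dual cone of P_A(K), i.e., R_A(K) = {y ∈ ℝ^A : ⟨p, y⟩ ≥ 0 for all p ∈ P_A(K)}. -/
open MeasureTheory MvPolynomial Finset

noncomputable section

variable {E : Type*} [NormedAddCommGroup E] [NormedSpace ℝ E] [FiniteDimensional ℝ E]

private theorem sum_comp_embed {α β M : Type*} [Fintype α] [Fintype β] [DecidableEq β]
    [AddCommMonoid M] (g : α ↪ β) (F : β → M)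
    (hF : ∀ i, (¬∃ a : α, g a = i) → F i = 0) : ∑ i, F i = ∑ a, F (g a) := by
  classical
  rw [← Finset.sum_image (s := Finset.univ) (g := fun a => g a) (f := F)
      (fun a _ b _ hab => g.injective hab)]
  symm
  apply Finset.sum_subset (Finset.subset_univ _)
  intro i _ hi
  exact hF i fun ⟨a, ha⟩ => hi (Finset.mem_image.2 ⟨a, Finset.mem_univ _, ha⟩)

theorem my_isCompact_convexHull {S : Set E} (hS : IsCompact S) :
    IsCompact (convexHull ℝ S) := by
  rcases S.eq_empty_or_nonempty with rfl | ⟨s₀, hs₀⟩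
  · simp
  set N := Module.finrank ℝ E + 1 with hN
  set T : Set ((Fin N → ℝ) × (Fin N → E)) :=
    (stdSimplex ℝ (Fin N)) ×ˢ (Set.univ.pi fun _ => S) with hT
  have hTc : IsCompact T := IsCompact.prod (isCompact_stdSimplex ℝ (Fin N)) (isCompact_univ_pi fun _ => hS)
  have hf : Continuous fun wz : (Fin N → ℝ) × (Fin N → E) => ∑ i, wz.1 i • wz.2 i := by
    apply continuous_finset_sum
    intro i _
    exact ((continuous_apply i).comp continuous_fst).smul
      ((continuous_apply i).comp continuous_snd)
  have key : convexHull ℝ S = (fun wz : (Fin N → ℝ) × (Fin N → E) => ∑ i, wz.1 i • wz.2 i) '' T := by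
    apply Set.Subset.antisymm
    · intro x hx
      rw [convexHull_eq_union] at hx
      simp only [Set.mem_iUnion] at hx
      obtain ⟨t, hts, hai, hxt⟩ := hx
      have hcard : t.card ≤ N := by
        classical
        have := hai.card_le_finrank_succ
        rw [Fintype.card_coe] at this
        exact this.trans (Nat.add_le_add_right (Submodule.finrank_le _) 1)
      rw [Finset.convexHull_eq] at hxt
      obtain ⟨w, hw0, hw1, hwx⟩ := hxt
      obtain ⟨g⟩ : Nonempty (↥t ↪ Fin N) := by
        apply Function.Embedding.nonempty_of_card_le
        simpa [Fintype.card_coe] using hcard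
      classical
      set z : Fin N → E := fun i =>
        if h : ∃ a : t, g a = i then ((h.choose : E)) else s₀ with hz
      set w' : Fin N → ℝ := fun i =>
        if h : ∃ a : t, g a = i then w ((h.choose : E)) else 0 with hw'
      have hchoose : ∀ a : t, (show ∃ b : t, g b = g a from ⟨a, rfl⟩).choose = a := by
        intro a
        exact g.injective (show ∃ b : t, g b = g a from ⟨a, rfl⟩).choose_spec
      have hterm : ∀ a : t, w' (g a) = w (a : E) ∧ z (g a) = (a : E) := by
        intro a
        have h : ∃ b : t, g b = g a := ⟨a, rfl⟩
        constructor
        · simp only [hw', dif_pos h, hchoose a]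
        · simp only [hz, dif_pos h, hchoose a]
      have hw'0 : ∀ i, ¬ (∃ a : t, g a = i) → w' i = 0 := by
        intro i hi; simp only [hw']; rw [dif_neg hi]
      have h2 := sum_comp_embed g w' hw'0
      have h4 := sum_comp_embed g (fun i => w' i • z i)
        (fun i hi => by show w' i • z i = 0; rw [hw'0 i hi, zero_smul])
      refine ⟨⟨w', z⟩, ⟨⟨fun i => ?_, ?_⟩, fun i _ => ?_⟩, ?_⟩
      · simp only [hw']
        split
        · next h => exact hw0 _ (h.choose).2
        · exact le_rfl
      · show ∑ i : Fin N, w' i = 1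
        rw [h2, show ∑ a : ↥t, w' (g a) = ∑ a : ↥t, w ↑a from
          Finset.sum_congr rfl fun a _ => (hterm a).1, Finset.sum_coe_sort t w, hw1]
      · show z i ∈ S
        simp only [hz]
        split
        · next h => exact hts (h.choose).2
        · exact hs₀
      · show ∑ i : Fin N, w' i • z i = x
        rw [h4, show ∑ a : ↥t, w' (g a) • z (g a) = ∑ a : ↥t, w ↑a • (↑a : E) from
          Finset.sum_congr rfl fun a _ => by rw [(hterm a).1, (hterm a).2],
          Finset.sum_coe_sort t (fun y => w y • y), ← hwx,
          Finset.centerMass_eq_of_sum_1 _ _ hw1]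
        rfl
    · rintro x ⟨⟨w, z⟩, ⟨hw, hzS⟩, rfl⟩
      have := Finset.centerMass_mem_convexHull (Finset.univ : Finset (Fin N))
        (w := w) (z := z) (fun i _ => hw.1 i) (by rw [hw.2]; norm_num)
        (fun i _ => hzS i (Set.mem_univ i))
      rwa [Finset.centerMass_eq_of_sum_1 _ _ hw.2] at this
  rw [key]
  exact hTc.image hf


variable {E : Type*} [NormedAddCommGroup E] [NormedSpace ℝ E]

theorem cone_isClosed {D : Set E} (hD : IsCompact D) (L : E →L[ℝ] ℝ)
    (hL : ∀ d ∈ D, L d = 1) :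
    IsClosed {x : E | ∃ t : ℝ, 0 ≤ t ∧ ∃ d ∈ D, x = t • d} := by
  apply IsSeqClosed.isClosed
  intro xs x hxs hlim
  choose ts hts ds hds hx using hxs
  obtain ⟨d, hdD, φ, hφ, hdlim⟩ := hD.tendsto_subseq hds
  have hLx : ∀ k, L (xs k) = ts k := by
    intro k
    rw [hx k, _root_.map_smul, hL _ (hds k), smul_eq_mul, mul_one]
  have htlim : Filter.Tendsto (fun k => ts (φ k)) Filter.atTop (nhds (L x)) := by
    have : Filter.Tendsto (fun k => L (xs (φ k))) Filter.atTop (nhds (L x)) :=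
      (L.continuous.tendsto x).comp (hlim.comp hφ.tendsto_atTop)
    simpa only [hLx] using this
  have hxlim : Filter.Tendsto (fun k => xs (φ k)) Filter.atTop (nhds ((L x) • d)) := by
    have : Filter.Tendsto (fun k => ts (φ k) • ds (φ k)) Filter.atTop (nhds ((L x) • d)) :=
      htlim.smul hdlim
    simpa only [← hx] using this
  have hxeq : x = (L x) • d :=
    tendsto_nhds_unique (hlim.comp hφ.tendsto_atTop) hxlim
  exact ⟨L x, le_of_tendsto_of_tendsto' tendsto_const_nhds htlim fun k => hts (φ k), d, hdD, hxeq⟩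

theorem cone_convex {D : Set E} (hDc : Convex ℝ D) (hDne : D.Nonempty) :
    Convex ℝ {x : E | ∃ t : ℝ, 0 ≤ t ∧ ∃ d ∈ D, x = t • d} := by
  rintro x ⟨t, ht, d, hd, rfl⟩ x' ⟨t', ht', d', hd', rfl⟩ a b ha hb hab
  rcases eq_or_lt_of_le (by positivity : (0:ℝ) ≤ a * t + b * t') with hT | hT
  · obtain ⟨d₀, hd₀⟩ := hDne
    refine ⟨0, le_rfl, d₀, hd₀, ?_⟩
    have h1 : a * t = 0 := by nlinarith [mul_nonneg ha ht, mul_nonneg hb ht']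
    have h2 : b * t' = 0 := by nlinarith [mul_nonneg ha ht, mul_nonneg hb ht']
    rw [smul_smul, smul_smul, h1, h2]
    simp
  · set T := a * t + b * t' with hTdef
    refine ⟨T, le_of_lt hT, (a * t / T) • d + (b * t' / T) • d', ?_, ?_⟩
    · apply hDc hd hd' (by positivity) (by positivity)
      field_simp
      exact hTdef.symm
    · rw [smul_add, smul_smul, smul_smul, smul_smul, smul_smul]
      rw [mul_div_cancel₀ _ (ne_of_gt hT), mul_div_cancel₀ _ (ne_of_gt hT)]

section MainAux

variable {n : ℕ} {A : Finset (Exp n)}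

/-- The moment curve `u ↦ (u^α)_{α ∈ A}`. -/
def vmom (A : Finset (Exp n)) (u : Fin n → ℝ) : ↥A → ℝ := fun α => monoEval (α : Exp n) u

theorem vmom_continuous (A : Finset (Exp n)) : Continuous (vmom A) := by
  unfold vmom monoEval
  apply continuous_pi
  intro α
  exact continuous_finset_prod _ fun i _ => (continuous_apply i).pow _

theorem pairA_vmom (p : ↥A → ℝ) (u : Fin n → ℝ) : pairA A p (vmom A u) = evalA A p u := rfl

/-- The pairing with a fixed `p₀` as a continuous linear map. -/
def pairCLM (A : Finset (Exp n)) (p₀ : ↥A → ℝ) : (↥A → ℝ) →L[ℝ] ℝ :=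
  LinearMap.toContinuousLinearMap
    { toFun := fun x => pairA A p₀ x
      map_add' := fun x y => by
        simp [pairA, mul_add, Finset.sum_add_distrib]
      map_smul' := fun c x => by
        simp only [pairA, RingHom.id_apply, smul_eq_mul, Finset.mul_sum, Pi.smul_apply]
        exact Finset.sum_congr rfl fun α _ => by ring }

theorem pairCLM_apply (p₀ x : ↥A → ℝ) : pairCLM A p₀ x = pairA A p₀ x := rfl

end MainAux

/-- For a nonempty compact `K` and `K`-full `ℝ[x]_A`,
`R_A(K)` equals the dual cone of `P_A(K)`. -/
theorem statement_3 {n : ℕ} (hn : 1 ≤ n) {A : Finset (Exp n)} (hA : A.Nonempty)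
    {K : Set (Fin n → ℝ)} (hKne : K.Nonempty) (hKcpt : IsCompact K)
    (hfull : KFull A K) :
    RAcone A K = {y : A → ℝ | ∀ p ∈ PAcone A K, 0 ≤ pairA A p y} := by
  classical
  ext y
  simp only [Set.mem_setOf_eq]
  constructor
  · rintro ⟨μ, hμK, hint⟩ p hp
    have hInt : ∀ α : ↥A, Integrable (fun u => p α * monoEval (α : Exp n) u) μ :=
      fun α => ((hint α).1).const_mul _
    have hkey : pairA A p y = ∫ u, evalA A p u ∂μ := by
      unfold pairA evalA
      rw [integral_finset_sum _ fun α _ => hInt α]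
      exact Finset.sum_congr rfl fun α _ => by
        rw [(hint α).2, MeasureTheory.integral_const_mul]
    rw [hkey]
    apply integral_nonneg_of_ae
    rw [Filter.EventuallyLE, MeasureTheory.ae_iff]
    apply measure_mono_null _ hμK
    intro u hu
    simp only [Set.mem_setOf_eq, Pi.zero_apply, not_le] at hu
    intro huK
    exact absurd (hp u huK) (not_le.mpr hu)
  · intro hy
    obtain ⟨p₀, hp₀⟩ := hfull
    set v := vmom A with hvdef
    set L := pairCLM A p₀ with hLdef
    have hLv : ∀ u ∈ K, 0 < L (v u) := fun u hu => by
      rw [hLdef, pairCLM_apply, hvdef, pairA_vmom]; exact hp₀ u hu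
    set S : Set (↥A → ℝ) := v '' K with hSdef
    have hScpt : IsCompact S := hKcpt.image (vmom_continuous A)
    have hLS : ∀ x ∈ S, 0 < L x := by rintro x ⟨u, hu, rfl⟩; exact hLv u hu
    set D' : Set (↥A → ℝ) := (fun x => (L x)⁻¹ • x) '' S with hD'def
    have hD'cpt : IsCompact D' := by
      apply hScpt.image_of_continuousOn
      exact ((L.continuous.continuousOn.inv₀ fun x hx => (hLS x hx).ne').smul continuousOn_id)
    set D : Set (↥A → ℝ) := convexHull ℝ D' with hDdef
    have hDcpt : IsCompact D := my_isCompact_convexHull hD'cpt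
    have hDconv : Convex ℝ D := convex_convexHull ℝ D'
    have hLD : ∀ d ∈ D, L d = 1 := by
      intro d hd
      have : D ⊆ {x | L x = 1} := by
        rw [hDdef]
        apply convexHull_min
        · rintro x ⟨s, hs, rfl⟩
          simp only [Set.mem_setOf_eq, _root_.map_smul, smul_eq_mul]
          exact inv_mul_cancel₀ (hLS s hs).ne'
        · intro x hx z hz a b ha hb hab
          simp only [Set.mem_setOf_eq] at hx hz ⊢
          rw [map_add, _root_.map_smul, _root_.map_smul, smul_eq_mul, smul_eq_mul, hx, hz]
          simpa using hab
      exact this hd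
    have hDne : D.Nonempty := by
      obtain ⟨u₀, hu₀⟩ := hKne
      exact ⟨_, subset_convexHull ℝ D' ⟨v u₀, ⟨u₀, hu₀, rfl⟩, rfl⟩⟩
    set C : Set (↥A → ℝ) := {x | ∃ t : ℝ, 0 ≤ t ∧ ∃ d ∈ D, x = t • d} with hCdef
    have hCclosed : IsClosed C := cone_isClosed hDcpt L hLD
    have hCconv : Convex ℝ C := cone_convex hDconv hDne
    have hyC : y ∈ C := by
      by_contra hyC
      obtain ⟨f, u0, hfy, hfb⟩ := geometric_hahn_banach_point_closed hCconv hCclosed hyC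
      obtain ⟨d₀, hd₀⟩ := hDne
      have h00 : (0 : ↥A → ℝ) ∈ C := ⟨0, le_rfl, d₀, hd₀, by simp⟩
      have h0 : u0 < 0 := by simpa using hfb 0 h00
      have hfD : ∀ d ∈ D, 0 ≤ f d := by
        intro d hd
        by_contra hneg
        push_neg at hneg
        have ht : 0 ≤ (u0 - 1) / f d := div_nonneg_of_nonpos (by linarith) hneg.le
        have := hfb (((u0 - 1) / f d) • d) ⟨_, ht, d, hd, rfl⟩
        rw [_root_.map_smul, smul_eq_mul, div_mul_cancel₀ _ (ne_of_lt hneg)] at this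
        linarith
      set p : ↥A → ℝ := fun α => f (Pi.single α 1 : _) with hpdef
      have hfx : ∀ x : ↥A → ℝ, f x = pairA A p x := by
        intro x
        have hxdec : x = ∑ α : ↥A, x α • (Pi.single α 1 : ↥A → ℝ) := by
          funext β
          rw [Finset.sum_apply]
          simp only [Pi.smul_apply, Pi.single_apply, smul_eq_mul, mul_ite, mul_one, mul_zero]
          rw [Finset.sum_ite_eq Finset.univ β (fun β => x β)]
          simp
        conv_lhs => rw [hxdec]
        rw [map_sum]
        unfold pairA
        exact Finset.sum_congr rfl fun α _ => by
          rw [_root_.map_smul, smul_eq_mul, mul_comm]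
      have hpP : p ∈ PAcone A K := by
        intro u hu
        have hd : (L (v u))⁻¹ • v u ∈ D := subset_convexHull ℝ D' ⟨v u, ⟨u, hu, rfl⟩, rfl⟩
        have h1 : 0 ≤ f ((L (v u))⁻¹ • v u) := hfD _ hd
        rw [_root_.map_smul, smul_eq_mul] at h1
        have hpos := hLv u hu
        have h2 : 0 ≤ f (v u) := by
          by_contra hneg
          push_neg at hneg
          nlinarith [inv_pos.mpr hpos]
        calc (0:ℝ) ≤ f (v u) := h2
          _ = pairA A p (v u) := hfx _
          _ = evalA A p u := pairA_vmom p u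
      have := hy p hpP
      rw [← hfx y] at this
      linarith
    obtain ⟨t, ht, d, hdD, hyeq⟩ := hyC
    rw [hDdef, _root_.convexHull_eq] at hdD
    obtain ⟨ι, s, w, zf, hw0, hw1, hzD', hcm⟩ := hdD
    have hz' : ∀ j : ↥s, ∃ u ∈ K, zf (j : ι) = (L (v u))⁻¹ • v u := by
      rintro ⟨j, hj⟩
      obtain ⟨x, ⟨u, hu, rfl⟩, hxe⟩ := hzD' j hj
      exact ⟨u, hu, hxe.symm⟩
    choose uu huK hzu using hz'
    set c : ↥s → ℝ := fun j => t * w (j : ι) * (L (v (uu j)))⁻¹ with hcdef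
    have hc0 : ∀ j : ↥s, 0 ≤ c j := fun j =>
      mul_nonneg (mul_nonneg ht (hw0 _ j.2)) (inv_nonneg.mpr (hLv _ (huK j)).le)
    have hyα : ∀ α : ↥A, y α = ∑ j : ↥s, c j * monoEval (α : Exp n) (uu j) := by
      intro α
      have h1 : y α = t * ∑ j ∈ s, w j * zf j α := by
        rw [hyeq, ← hcm, Finset.centerMass_eq_of_sum_1 _ _ hw1]
        simp only [Pi.smul_apply, smul_eq_mul]
        rw [Finset.sum_apply]
        simp only [Pi.smul_apply, smul_eq_mul]
      rw [h1, Finset.mul_sum, ← Finset.sum_coe_sort s (fun j => t * (w j * zf j α))]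
      apply Finset.sum_congr rfl
      intro j _
      rw [hzu j]
      simp only [Pi.smul_apply, smul_eq_mul]
      show t * (w (j:ι) * ((L (v (uu j)))⁻¹ * v (uu j) α)) = c j * monoEval (α : Exp n) (uu j)
      rw [hcdef]
      show t * (w (j:ι) * ((L (v (uu j)))⁻¹ * monoEval (α : Exp n) (uu j))) = _
      ring
    refine ⟨∑ j : ↥s, ENNReal.ofReal (c j) • MeasureTheory.Measure.dirac (uu j), ?_, ?_⟩
    · rw [MeasureTheory.Measure.finset_sum_apply]
      apply Finset.sum_eq_zero
      intro j _
      rw [MeasureTheory.Measure.smul_apply,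
        MeasureTheory.Measure.dirac_apply' _ hKcpt.isClosed.measurableSet.compl,
        Set.indicator_of_notMem (by simp [huK j])]
      simp
    · intro α
      have hIntj : ∀ j : ↥s,
          Integrable (monoEval (α : Exp n)) (ENNReal.ofReal (c j) • MeasureTheory.Measure.dirac (uu j)) := by
        intro j
        apply Integrable.smul_measure _ ENNReal.ofReal_ne_top
        exact (integrable_const (monoEval (α : Exp n) (uu j))).congr
          (MeasureTheory.ae_eq_dirac (monoEval (α : Exp n))).symm
      constructor
      · exact MeasureTheory.integrable_finset_sum_measure.mpr fun j _ => hIntj j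
      · rw [MeasureTheory.integral_finset_sum_measure fun j _ => hIntj j]
        rw [hyα α]
        apply Finset.sum_congr rfl
        intro j _
        rw [MeasureTheory.integral_smul_measure, MeasureTheory.integral_dirac,
          ENNReal.toReal_ofReal (hc0 j)]
        rfl

end
end

section
/- Let K be the nonempty semialgebraic set defined by h and g, let A ⊆ ℕ^n be finite, suppose I(h)+Q(g) is archimedean, and let f ∈ ℝ[x]_A satisfy f > 0 on K. Then the normalized relaxation sections are uniformly bounded: there exist N ∈ ℕ and C > 0 such that for all k ≥ N and every y ∈ S_A^k(K) with ⟨f, y⟩ = 1, one has |y_α| ≤ C for all α ∈ A. -/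
open MeasureTheory MvPolynomial Finset

noncomputable section

namespace S6aux
section


variable {n m1 m2 : ℕ}

local notation "P" => MvPolynomial (Fin n) ℝ

/-- Quadratic module predicate. -/
structure IsQM (Q : Set (MvPolynomial (Fin n) ℝ)) : Prop where
  add_mem : ∀ {p q}, p ∈ Q → q ∈ Q → p + q ∈ Q
  sq_mul_mem : ∀ (t : MvPolynomial (Fin n) ℝ) {p}, p ∈ Q → t^2 * p ∈ Q
  sq_mem : ∀ t : MvPolynomial (Fin n) ℝ, t^2 ∈ Q

namespace IsQM

variable {Q : Set (MvPolynomial (Fin n) ℝ)}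

lemma zero_mem (hQ : IsQM Q) : (0 : P) ∈ Q := by
  simpa using hQ.sq_mem 0

lemma one_mem (hQ : IsQM Q) : (1 : P) ∈ Q := by
  simpa using hQ.sq_mem 1

lemma sumsq_mem (hQ : IsQM Q) {σ : P} (h : IsSumSq σ) : σ ∈ Q := by
  induction h with
  | zero => exact hQ.zero_mem
  | @sq_add a S _ ih =>
      have : a^2 + S ∈ Q := hQ.add_mem (hQ.sq_mem a) ih
      simpa [pow_two] using this

lemma sumsq_mul_mem (hQ : IsQM Q) {σ p : P} (h : IsSumSq σ) (hp : p ∈ Q) : σ * p ∈ Q := by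
  induction h with
  | zero => simpa using hQ.zero_mem
  | @sq_add a S _ ih =>
      have : a^2 * p + S * p ∈ Q := hQ.add_mem (hQ.sq_mul_mem a hp) ih
      have e : (a * a + S) * p = a^2 * p + S * p := by ring
      rw [e]; exact this

lemma posC_mul_mem (hQ : IsQM Q) {c : ℝ} (hc : 0 < c) {p : P} (hp : p ∈ Q) : C c * p ∈ Q := by
  have : (C (Real.sqrt c) : P)^2 * p ∈ Q := hQ.sq_mul_mem _ hp
  have e : (C (Real.sqrt c) : P)^2 = C c := by
    rw [← C_pow, Real.sq_sqrt hc.le]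
  rwa [e] at this

lemma nonnegC_mem (hQ : IsQM Q) {c : ℝ} (hc : 0 ≤ c) : (C c : P) ∈ Q := by
  have : (C (Real.sqrt c) : P)^2 ∈ Q := hQ.sq_mem _
  have e : (C (Real.sqrt c) : P)^2 = C c := by
    rw [← C_pow, Real.sq_sqrt hc]
  rwa [e] at this

/-- The magic identity: bounded elements have bounded squares. -/
lemma magic (hQ : IsQM Q) {lam : ℝ} (hl : 0 < lam) {v : P}
    (h1 : C lam + v ∈ Q) (h2 : C lam - v ∈ Q) : C (lam^2) - v^2 ∈ Q := by
  have hmem : (C lam - v)^2 * (C lam + v) + (C lam + v)^2 * (C lam - v) ∈ Q :=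
    hQ.add_mem (hQ.sq_mul_mem _ h1) (hQ.sq_mul_mem _ h2)
  have hmem2 : C (1/(2*lam)) * ((C lam - v)^2 * (C lam + v) + (C lam + v)^2 * (C lam - v)) ∈ Q :=
    hQ.posC_mul_mem (by positivity) hmem
  have e : C (1/(2*lam)) * ((C lam - v)^2 * (C lam + v) + (C lam + v)^2 * (C lam - v))
      = C (lam^2) - v^2 := by
    have h2l : (C (1/(2*lam)) : P) * (2 * C lam) = 1 := by
      have : (2 : P) * C lam = C (2 * lam) := by
        rw [C_mul, map_ofNat]
      rw [this, ← C_mul]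
      rw [one_div, inv_mul_cancel₀ (by positivity)]
      simp
    calc C (1/(2*lam)) * ((C lam - v)^2 * (C lam + v) + (C lam + v)^2 * (C lam - v))
        = (C (1/(2*lam)) * (2 * C lam)) * ((C lam)^2 - v^2) := by ring
      _ = C (lam^2) - v^2 := by rw [h2l, one_mul, ← C_pow]
  rwa [e] at hmem2

end IsQM


-- sumsq times square
lemma sumsq_sqMul {t σ : MvPolynomial (Fin n) ℝ} (h : IsSumSq σ) : IsSumSq (t^2 * σ) := by
  induction h with
  | zero => simpa using IsSumSq.zero
  | @sq_add a S hS ih =>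
      have e : t^2 * (a*a + S) = (t*a) * (t*a) + t^2 * S := by ring
      rw [e]; exact IsSumSq.sq_add _ ih

/-- The full (untruncated) quadratic module generated by `g` and the ideal of `h`. -/
def Mqm (h : Fin m1 → MvPolynomial (Fin n) ℝ) (g : Fin m2 → MvPolynomial (Fin n) ℝ) :
    Set (MvPolynomial (Fin n) ℝ) :=
  {p | ∃ σ₀ : MvPolynomial (Fin n) ℝ, ∃ σ : Fin m2 → MvPolynomial (Fin n) ℝ,
      ∃ q : Fin m1 → MvPolynomial (Fin n) ℝ,
      IsSumSq σ₀ ∧ (∀ j, IsSumSq (σ j)) ∧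
      p = σ₀ + ∑ j, g j * σ j + ∑ i, h i * q i}

variable {h : Fin m1 → MvPolynomial (Fin n) ℝ} {g : Fin m2 → MvPolynomial (Fin n) ℝ}

lemma Mqm_isQM : IsQM (Mqm h g) := by
  constructor
  · rintro p q ⟨σ₀, σ, u, hσ₀, hσ, rfl⟩ ⟨τ₀, τ, v, hτ₀, hτ, rfl⟩
    exact ⟨σ₀ + τ₀, fun j => σ j + τ j, fun i => u i + v i, hσ₀.add hτ₀,
      fun j => (hσ j).add (hτ j), by
        simp only [mul_add, Finset.sum_add_distrib]; ring⟩
  · rintro t p ⟨σ₀, σ, u, hσ₀, hσ, rfl⟩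
    exact ⟨t^2 * σ₀, fun j => t^2 * σ j, fun i => t^2 * u i, (sumsq_sqMul hσ₀),
      fun j => (sumsq_sqMul (hσ j)), by
        simp only [mul_add, Finset.mul_sum]
        congr 1
        · congr 1
          exact Finset.sum_congr rfl fun j _ => by ring
        · exact Finset.sum_congr rfl fun i _ => by ring⟩
  · intro t
    exact ⟨t^2, 0, 0, by simpa [pow_two] using IsSumSq.sq_add t IsSumSq.zero,
      fun j => by simpa using IsSumSq.zero, by simp⟩

lemma g_mem_Mqm (j : Fin m2) : g j ∈ Mqm h g := by
  refine ⟨0, fun j' => if j' = j then 1 else 0, 0, IsSumSq.zero, ?_, ?_⟩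
  · intro j'
    by_cases hj : j' = j
    · simp only [hj, if_pos rfl]
      have h1 := IsSumSq.sq_add (1 : MvPolynomial (Fin n) ℝ) IsSumSq.zero
      rwa [mul_one, add_zero] at h1
    · simp only [if_neg hj]
      exact IsSumSq.zero
  · simp [Finset.mul_sum, mul_ite]

lemma hmul_mem_Mqm (i : Fin m1) (w : MvPolynomial (Fin n) ℝ) : h i * w ∈ Mqm h g := by
  refine ⟨0, 0, fun i' => if i' = i then w else 0, IsSumSq.zero, fun j => IsSumSq.zero, ?_⟩
  simp [mul_ite]


end

section

variable {n m1 m2 : ℕ}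
local notation "P" => MvPolynomial (Fin n) ℝ

/-- Elements bounded (in absolute value) by a constant modulo `Q`. -/
def Bnd (Q : Set (MvPolynomial (Fin n) ℝ)) : Set (MvPolynomial (Fin n) ℝ) :=
  {p | ∃ lam : ℝ, 0 < lam ∧ C lam + p ∈ Q ∧ C lam - p ∈ Q}

variable {Q : Set (MvPolynomial (Fin n) ℝ)}

lemma bnd_const (hQ : IsQM Q) (c : ℝ) : (C c : P) ∈ Bnd Q := by
  refine ⟨|c| + 1, by positivity, ?_, ?_⟩
  · rw [← C_add]; exact hQ.nonnegC_mem (by cases abs_cases c <;> linarith)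
  · rw [← C_sub]; exact hQ.nonnegC_mem (by cases abs_cases c <;> linarith)

lemma bnd_add (hQ : IsQM Q) {p q : P} (hp : p ∈ Bnd Q) (hq : q ∈ Bnd Q) : p + q ∈ Bnd Q := by
  obtain ⟨a, ha, ha1, ha2⟩ := hp
  obtain ⟨b, hb, hb1, hb2⟩ := hq
  refine ⟨a + b, by positivity, ?_, ?_⟩
  · have := hQ.add_mem ha1 hb1
    rwa [show C a + p + (C b + q) = C (a+b) + (p+q) by rw [C_add]; ring] at this
  · have := hQ.add_mem ha2 hb2
    rwa [show C a - p + (C b - q) = C (a+b) - (p+q) by rw [C_add]; ring] at this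

lemma bnd_neg {p : P} (hp : p ∈ Bnd Q) : -p ∈ Bnd Q := by
  obtain ⟨a, ha, ha1, ha2⟩ := hp
  exact ⟨a, ha, by simpa [sub_eq_add_neg] using ha2, by simpa [sub_eq_add_neg] using ha1⟩

lemma bnd_sq (hQ : IsQM Q) {p : P} (hp : p ∈ Bnd Q) : p^2 ∈ Bnd Q := by
  obtain ⟨a, ha, ha1, ha2⟩ := hp
  refine ⟨a^2, by positivity, ?_, hQ.magic ha ha1 ha2⟩
  have := hQ.add_mem (hQ.nonnegC_mem (c := a^2) (by positivity)) (hQ.sq_mem p)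
  exact this

lemma bnd_mul (hQ : IsQM Q) {p q : P} (hp : p ∈ Bnd Q) (hq : q ∈ Bnd Q) : p * q ∈ Bnd Q := by
  obtain ⟨a, ha, ha1, ha2⟩ := hp
  obtain ⟨b, hb, hb1, hb2⟩ := hq
  -- |p+q| ≤ a+b and |p-q| ≤ a+b modulo Q
  have hs1 : C (a+b) + (p+q) ∈ Q := by
    have := hQ.add_mem ha1 hb1
    rwa [show C a + p + (C b + q) = C (a+b) + (p+q) by rw [C_add]; ring] at this
  have hs2 : C (a+b) - (p+q) ∈ Q := by
    have := hQ.add_mem ha2 hb2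
    rwa [show C a - p + (C b - q) = C (a+b) - (p+q) by rw [C_add]; ring] at this
  have hd1 : C (a+b) + (p-q) ∈ Q := by
    have := hQ.add_mem ha1 hb2
    rwa [show C a + p + (C b - q) = C (a+b) + (p-q) by rw [C_add]; ring] at this
  have hd2 : C (a+b) - (p-q) ∈ Q := by
    have := hQ.add_mem ha2 hb1
    rwa [show C a - p + (C b + q) = C (a+b) - (p-q) by rw [C_add]; ring] at this
  have hab : (0:ℝ) < a + b := by positivity
  have m1 : C ((a+b)^2) - (p+q)^2 ∈ Q := hQ.magic hab hs1 hs2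
  have m2 : C ((a+b)^2) - (p-q)^2 ∈ Q := hQ.magic hab hd1 hd2
  refine ⟨(a+b)^2/4, by positivity, ?_, ?_⟩
  all_goals
    have h4 : (C ((1:ℝ)/4) : P) * 4 = 1 := by
      rw [show ((4:P)) = C (4:ℝ) from (map_ofNat C 4).symm, ← C_mul]
      norm_num
    have hq4 : (C ((1:ℝ)/4) : P) * C ((a+b)^2) = C ((a+b)^2/4) := by
      rw [← C_mul]; congr 1; ring
  · have hmem := hQ.posC_mul_mem (c := (1:ℝ)/4) (by norm_num)
      (hQ.add_mem (hQ.sq_mem (p+q)) m2)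
    rwa [show (C ((1:ℝ)/4) : P) * ((p+q)^2 + (C ((a+b)^2) - (p-q)^2))
        = C ((a+b)^2/4) + p*q by linear_combination (p*q) * h4 + hq4] at hmem
  · have hmem := hQ.posC_mul_mem (c := (1:ℝ)/4) (by norm_num)
      (hQ.add_mem m1 (hQ.sq_mem (p-q)))
    rwa [show (C ((1:ℝ)/4) : P) * ((C ((a+b)^2) - (p+q)^2) + (p-q)^2)
        = C ((a+b)^2/4) - p*q by linear_combination (-(p*q)) * h4 + hq4] at hmem

/-- With an archimedean certificate, every variable is bounded. -/
lemma bnd_X (hQ : IsQM Q) {R₀ : ℝ} (hR : 0 < R₀)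
    (harch : C R₀ - (∑ i : Fin n, X i ^ 2) ∈ Q) (i : Fin n) : (X i : P) ∈ Bnd Q := by
  have hXsq : C R₀ - X i ^ 2 ∈ Q := by
    have hsum : IsSumSq (∑ j ∈ Finset.univ.erase i, (X j : P)^2) := by
      have e : (∑ j ∈ Finset.univ.erase i, (X j : P)^2)
          = ∑ j ∈ Finset.univ.erase i, (X j : P) * X j :=
        Finset.sum_congr rfl fun j _ => by ring
      rw [e]; exact IsSumSq.sum_mul_self _ _
    have hmem := hQ.add_mem harch (hQ.sumsq_mem hsum)
    rwa [show C R₀ - (∑ j : Fin n, X j ^ 2) + (∑ j ∈ Finset.univ.erase i, (X j : P)^2)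
        = C R₀ - X i ^ 2 by
      rw [show (∑ j : Fin n, (X j : P) ^ 2)
          = X i ^ 2 + ∑ j ∈ Finset.univ.erase i, (X j : P)^2 by
        rw [← Finset.add_sum_erase _ _ (Finset.mem_univ i)]]
      ring] at hmem
  have hC : (C ((R₀+1)/2) : P) = C ((1:ℝ)/2) * C R₀ + C ((1:ℝ)/2) := by
    rw [← C_mul, ← C_add]; congr 1; ring
  have h2' : (C ((1:ℝ)/2) : P) * 2 = 1 := by
    rw [show ((2:P)) = C (2:ℝ) from (map_ofNat C 2).symm, ← C_mul]
    norm_num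
  refine ⟨(R₀+1)/2, by positivity, ?_, ?_⟩
  · have hmem := hQ.posC_mul_mem (c := (1:ℝ)/2) (by norm_num)
      (hQ.add_mem (hQ.sq_mem (X i + 1)) hXsq)
    rwa [show (C ((1:ℝ)/2) : P) * ((X i + 1)^2 + (C R₀ - X i ^ 2))
        = C ((R₀+1)/2) + X i by linear_combination (X i) * h2' - hC] at hmem
  · have hmem := hQ.posC_mul_mem (c := (1:ℝ)/2) (by norm_num)
      (hQ.add_mem (hQ.sq_mem (X i - 1)) hXsq)
    rwa [show (C ((1:ℝ)/2) : P) * ((X i - 1)^2 + (C R₀ - X i ^ 2))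
        = C ((R₀+1)/2) - X i by linear_combination (-(X i)) * h2' - hC] at hmem

/-- Every polynomial is bounded modulo an archimedean quadratic module. -/
lemma bnd_all (hQ : IsQM Q) {R₀ : ℝ} (hR : 0 < R₀)
    (harch : C R₀ - (∑ i : Fin n, X i ^ 2) ∈ Q) (p : P) : p ∈ Bnd Q := by
  induction p using MvPolynomial.induction_on with
  | C c => exact bnd_const hQ c
  | add p q hp hq => exact bnd_add hQ hp hq
  | mul_X p i hp => exact bnd_mul hQ hp (bnd_X hQ hR harch i)

/-- If `Q` contains a negative constant then it is everything (given archimedean bounds). -/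
lemma all_of_neg_const (hQ : IsQM Q) {R₀ : ℝ} (hR : 0 < R₀)
    (harch : C R₀ - (∑ i : Fin n, X i ^ 2) ∈ Q)
    {c : ℝ} (hc : c < 0) (hcQ : (C c : P) ∈ Q) (p : P) : p ∈ Q := by
  obtain ⟨lam, hlam, h1, _⟩ := bnd_all hQ hR harch p
  have hcpos : (0:ℝ) < -c := by linarith
  have h2 : (C (lam / (-c)) : P) * C c ∈ Q := hQ.posC_mul_mem (div_pos hlam hcpos) hcQ
  have e : (C (lam / (-c)) : P) * C c = C (-lam) := by
    rw [← C_mul]; congr 1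
    field_simp [hc.ne]
  have hmem := hQ.add_mem h1 (e ▸ h2)
  rwa [show C lam + p + C (-lam) = p by rw [map_neg]; ring] at hmem


end

section


open Polynomial in
/-- Key univariate approximation lemma: there are SOS approximations of `1/(1-x)`-truncations:
`E = 1 - (1-X) S^2` has nonnegative coefficients and vanishes to any prescribed order. -/
lemma exists_SE (m : ℕ) : ∃ S : Polynomial ℝ,
    (∀ i, 0 ≤ (1 - (1 - Polynomial.X) * S^2).coeff i) ∧
    (∀ i < m + 1, (1 - (1 - Polynomial.X) * S^2).coeff i = 0) := by
  induction m with
  | zero =>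
      refine ⟨1, ?_, ?_⟩
      · intro i
        have e : (1 - (1 - Polynomial.X) * (1:Polynomial ℝ)^2) = Polynomial.X := by ring
        rw [e, Polynomial.coeff_X]
        split_ifs <;> norm_num
      · intro i hi
        interval_cases i
        have e : (1 - (1 - Polynomial.X) * (1:Polynomial ℝ)^2) = Polynomial.X := by ring
        rw [e, Polynomial.coeff_X]
        norm_num
  | succ m ih =>
      obtain ⟨S, hnn, hvan⟩ := ih
      set E : Polynomial ℝ := 1 - (1 - Polynomial.X) * S^2 with hEdef
      obtain ⟨k, hk⟩ : ∃ k, k = m + 1 := ⟨_, rfl⟩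
      obtain ⟨γ, hγ⟩ : ∃ γ, γ = E.coeff k := ⟨_, rfl⟩
      have hk1 : 1 ≤ k := by omega
      have hγnn : 0 ≤ γ := hγ ▸ hnn k
      rcases eq_or_lt_of_le hγnn with hγ0 | hγpos
      · refine ⟨S, hnn, ?_⟩
        intro i hi
        rcases Nat.lt_succ_iff_lt_or_eq.mp hi with hlt | heq
        · exact hvan i (by omega)
        · rw [heq, ← hk, ← hγ]; exact hγ0.symm
      · set c : Polynomial ℝ := Polynomial.C (γ/2) with hc
        have hcc : Polynomial.C γ = 2 * c := by
          rw [hc, show ((2:Polynomial ℝ)) = Polynomial.C (2:ℝ) from (map_ofNat _ 2).symm,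
            ← Polynomial.C_mul]
          congr 1; ring
        have hcc2 : Polynomial.C (γ^2/4) = c^2 := by
          rw [hc, ← Polynomial.C_pow]
          congr 1; ring
        have key : (1 - (1 - Polynomial.X) * (S * (1 + c * Polynomial.X ^ k))^2)
            = E - Polynomial.C γ * Polynomial.X^k - Polynomial.C (γ^2/4) * Polynomial.X^(2*k)
              + Polynomial.C γ * (Polynomial.X^k * E)
              + Polynomial.C (γ^2/4) * (Polynomial.X^(2*k) * E) := by
          have hE : (1 - Polynomial.X) * S^2 = 1 - E := by rw [hEdef]; ring
          rw [hcc, hcc2, show (Polynomial.X:Polynomial ℝ)^(2*k) = (Polynomial.X^k)^2 by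
            rw [← pow_mul, Nat.mul_comm]]
          calc (1 - (1 - Polynomial.X) * (S * (1 + c * Polynomial.X ^ k))^2)
              = 1 - ((1 - Polynomial.X) * S^2) * (1 + c * Polynomial.X ^ k)^2 := by ring
            _ = 1 - (1 - E) * (1 + c * Polynomial.X ^ k)^2 := by rw [hE]
            _ = _ := by ring
        have hco : ∀ i, (1 - (1 - Polynomial.X) * (S * (1 + c * Polynomial.X ^ k))^2).coeff i
            = E.coeff i - (if i = k then γ else 0) - (if i = 2*k then γ^2/4 else 0)
              + γ * (if k ≤ i then E.coeff (i - k) else 0)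
              + γ^2/4 * (if 2*k ≤ i then E.coeff (i - 2*k) else 0) := by
          intro i
          rw [key]
          simp only [Polynomial.coeff_add, Polynomial.coeff_sub, Polynomial.coeff_C_mul,
            Polynomial.coeff_X_pow, Polynomial.coeff_X_pow_mul', mul_ite, mul_one, mul_zero]
        have hE0 : E.coeff 0 = 0 := hvan 0 (by omega)
        have hvalk : E.coeff k - (if k = k then γ else 0) - (if k = 2*k then γ^2/4 else 0)
              + γ * (if k ≤ k then E.coeff (k - k) else 0)
              + γ^2/4 * (if 2*k ≤ k then E.coeff (k - 2*k) else 0) = 0 := by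
          rw [if_pos rfl, if_neg (show ¬(k = 2*k) by omega), if_pos le_rfl,
            if_neg (show ¬(2*k ≤ k) by omega), Nat.sub_self, hE0, ← hγ]
          ring
        refine ⟨S * (1 + c * Polynomial.X ^ k), ?_, ?_⟩
        · intro i
          rw [hco i]
          by_cases h1 : i = k
          · subst h1
            rw [hvalk]
          · by_cases h2 : i = 2*k
            · subst h2
              rw [if_neg h1, if_pos rfl, if_pos (show k ≤ 2*k by omega),
                if_pos (le_refl (2*k)), show 2*k - k = k by omega, Nat.sub_self, hE0, ← hγ]
              have h2k := hnn (2*k)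
              have hsq : γ * γ = γ^2 := by ring
              have h34 : (0:ℝ) ≤ γ^2 := sq_nonneg γ
              linarith
            · rw [if_neg h1, if_neg h2]
              have t2 : 0 ≤ (if k ≤ i then E.coeff (i - k) else 0) := by
                split_ifs with hsi
                · exact hnn _
                · exact le_rfl
              have t3 : 0 ≤ (if 2*k ≤ i then E.coeff (i - 2*k) else 0) := by
                split_ifs with hsi
                · exact hnn _
                · exact le_rfl
              have u2 := mul_nonneg hγnn t2
              have u3 := mul_nonneg (show (0:ℝ) ≤ γ^2/4 by positivity) t3
              have t1 := hnn i
              linarith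
        · intro i hi
          rw [hco i]
          by_cases h1 : i = k
          · subst h1
            rw [hvalk]
          · have hik : i < k := by omega
            rw [if_neg h1, if_neg (show ¬(i = 2*k) by omega), if_neg (show ¬(k ≤ i) by omega),
              if_neg (show ¬(2*k ≤ i) by omega)]
            rw [hvan i (by omega)]
            ring


end

section

variable {n : ℕ}
local notation "P" => MvPolynomial (Fin n) ℝ
variable {Q : Set (MvPolynomial (Fin n) ℝ)}

lemma IsQM.nonnegC_mul_mem (hQ : IsQM Q) {c : ℝ} (hc : 0 ≤ c) {p : P} (hp : p ∈ Q) :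
    C c * p ∈ Q := by
  rcases eq_or_lt_of_le hc with h | h
  · rw [← h]; simpa using hQ.zero_mem
  · exact hQ.posC_mul_mem h hp

lemma IsQM.sum_mem (hQ : IsQM Q) {ι : Type*} (s : Finset ι) (f : ι → P)
    (hf : ∀ i ∈ s, f i ∈ Q) : (∑ i ∈ s, f i) ∈ Q := by
  classical
  induction s using Finset.induction_on with
  | empty => simpa using hQ.zero_mem
  | insert _ _ hx ih =>
      rw [Finset.sum_insert hx]
      exact hQ.add_mem (hf _ (Finset.mem_insert_self _ _))
        (ih fun i hi => hf i (Finset.mem_insert_of_mem hi))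

/-- Powers of a two-sided bounded element stay bounded: `C ρ^i - Z^i ∈ Q`, `C ρ^i + Z^i ∈ Q`. -/
lemma pow_bounds (hQ : IsQM Q) {ρ : ℝ} (hρ : 0 < ρ) {Z : P}
    (h1 : C ρ - Z ∈ Q) (h2 : C ρ + Z ∈ Q) (i : ℕ) :
    (C (ρ^i) - Z^i ∈ Q) ∧ (C (ρ^i) + Z^i ∈ Q) := by
  have magic2 : C (ρ^2) - Z^2 ∈ Q := hQ.magic hρ h2 h1
  -- even differences
  have even_diff : ∀ j : ℕ, C (ρ^(2*j)) - Z^(2*j) ∈ Q := by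
    intro j
    have hsum : IsSumSq (∑ l ∈ Finset.range j, (C (ρ^2) : P)^l * (Z^2)^(j-1-l)) := by
      have e : (∑ l ∈ Finset.range j, (C (ρ^2) : P)^l * (Z^2)^(j-1-l))
          = ∑ l ∈ Finset.range j,
              (C (ρ^l) * Z^(j-1-l)) * (C (ρ^l) * Z^(j-1-l)) := by
        refine Finset.sum_congr rfl fun l _ => ?_
        have hL : (C (ρ^2) : P)^l = C (ρ^(2*l)) := by rw [← C_pow, ← pow_mul]
        have hR : ((Z^2 : P))^(j-1-l) = Z^(2*(j-1-l)) := by rw [← pow_mul]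
        rw [hL, hR, show ρ^(2*l) = ρ^l * ρ^l by rw [two_mul, pow_add],
          show (2*(j-1-l)) = (j-1-l) + (j-1-l) by ring, pow_add, C_mul]
        ring
      rw [e]; exact IsSumSq.sum_mul_self _ _
    have hmem := hQ.sumsq_mul_mem hsum magic2
    have e2 : (∑ l ∈ Finset.range j, (C (ρ^2) : P)^l * (Z^2)^(j-1-l)) * (C (ρ^2) - Z^2)
        = C (ρ^(2*j)) - Z^(2*j) := by
      rw [geom_sum₂_mul (C (ρ^2) : P) (Z^2) j, ← C_pow, ← pow_mul, ← pow_mul]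
    rwa [e2] at hmem
  rcases Nat.even_or_odd i with ⟨j, hj⟩ | ⟨j, hj⟩
  · subst hj
    constructor
    · rw [show j + j = 2*j by ring] at *
      exact even_diff j
    · rw [show j + j = 2*j by ring]
      have : (Z^(2*j) : P) = (Z^j)^2 := by rw [← pow_mul, Nat.mul_comm]
      rw [this]
      exact hQ.add_mem (hQ.nonnegC_mem (by positivity)) (hQ.sq_mem _)
  · subst hj
    have hZ2j : (Z^(2*j) : P) = (Z^j)^2 := by rw [← pow_mul, Nat.mul_comm]
    constructor
    · have hmem := hQ.add_mem (hQ.posC_mul_mem hρ (even_diff j)) (hQ.sq_mul_mem (Z^j) h1)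
      have hCC : (C ρ : P) * C (ρ^(2*j)) = C (ρ^(2*j+1)) := by
        rw [← C_mul]; congr 1; rw [pow_succ]; ring
      have hZZ : (Z : P)^(2*j) * Z = Z^(2*j+1) := (pow_succ Z (2*j)).symm
      have e : C ρ * (C (ρ^(2*j)) - Z^(2*j)) + (Z^j)^2 * (C ρ - Z)
          = C (ρ^(2*j+1)) - Z^(2*j+1) := by
        rw [← hZ2j]
        linear_combination hCC - hZZ
      rwa [e] at hmem
    · have hmem := hQ.add_mem (hQ.posC_mul_mem hρ (even_diff j)) (hQ.sq_mul_mem (Z^j) h2)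
      have hCC : (C ρ : P) * C (ρ^(2*j)) = C (ρ^(2*j+1)) := by
        rw [← C_mul]; congr 1; rw [pow_succ]; ring
      have hZZ : (Z : P)^(2*j) * Z = Z^(2*j+1) := (pow_succ Z (2*j)).symm
      have e : C ρ * (C (ρ^(2*j)) - Z^(2*j)) + (Z^j)^2 * (C ρ + Z)
          = C (ρ^(2*j+1)) + Z^(2*j+1) := by
        rw [← hZ2j]
        linear_combination hCC + hZZ
      rwa [e] at hmem


end

section

variable {n : ℕ}
local notation "P" => MvPolynomial (Fin n) ℝ
variable {Q : Set (MvPolynomial (Fin n) ℝ)}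

/-- The division lemma: if `Pp * Sb ∈ Q` with `Sb` bounded between positive constants and
`Pp` bounded, then `Pp` is almost in `Q`. -/
lemma div_lemma (hQ : IsQM Q) {Pp Sb : P} {ν cb μ : ℝ}
    (hν : 0 < ν) (hνc : ν < cb) (hμ : 0 < μ)
    (h1 : Pp * Sb ∈ Q) (h2 : Sb - C ν ∈ Q) (h3 : C cb - Sb ∈ Q)
    (h4 : C μ + Pp ∈ Q) (h5 : C μ - Pp ∈ Q)
    {ε : ℝ} (hε : 0 < ε) : Pp + C ε ∈ Q := by
  have hcb : 0 < cb := lt_trans hν hνc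
  set ρ : ℝ := (cb - ν)/cb with hρdef
  have hρ0 : 0 < ρ := by rw [hρdef]; exact div_pos (by linarith) hcb
  have hρ1 : ρ < 1 := by
    rw [hρdef, div_lt_one hcb]; linarith
  set Z : P := C (1/cb) * (C cb - Sb) with hZdef
  have hZmem : Z ∈ Q := hQ.posC_mul_mem (by positivity) h3
  have hZ1 : C ρ - Z ∈ Q := by
    have e : C ρ - Z = C (1/cb) * (Sb - C ν) := by
      have hsplit : (C ((cb - ν)/cb) : P) = C (1/cb) * (C cb - C ν) := by
        rw [← C_sub, ← C_mul]; congr 1; ring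
      rw [hZdef, hρdef]
      linear_combination hsplit
    rw [e]; exact hQ.posC_mul_mem (by positivity) h2
  have hZ2 : C ρ + Z ∈ Q := hQ.add_mem (hQ.nonnegC_mem hρ0.le) hZmem
  -- choose the order m
  obtain ⟨mm, hmm⟩ : ∃ mm : ℕ, ρ^mm < ε/μ := exists_pow_lt_of_lt_one (by positivity) hρ1
  set θ : ℝ := ρ^(mm+1) with hθdef
  have hθ0 : 0 < θ := by rw [hθdef]; positivity
  have hθε : μ * θ ≤ ε := by
    have h1' : θ ≤ ρ^mm := by
      rw [hθdef, pow_succ]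
      exact mul_le_of_le_one_right (by positivity) hρ1.le
    have := le_trans h1' hmm.le
    calc μ * θ ≤ μ * (ε/μ) := by nlinarith
      _ = ε := by field_simp
  obtain ⟨S, hEnn, hEvan⟩ := exists_SE mm
  set Ep : Polynomial ℝ := 1 - (1 - Polynomial.X) * S^2 with hEpdef
  set SZ : P := Polynomial.aeval Z S with hSZdef
  set EZ : P := Polynomial.aeval Z Ep with hEZdef
  have hEZid : EZ = 1 - (1 - Z) * SZ^2 := by
    rw [hEZdef, hEpdef, hSZdef]
    simp only [map_sub, map_one, map_mul, map_pow, Polynomial.aeval_X]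
  have hinv : (C (1/cb) : P) * C cb = 1 := by
    rw [← C_mul]
    rw [show (1/cb)*cb = 1 by field_simp]
    simp
  have h1Z : (1 : P) - Z = C (1/cb) * Sb := by
    rw [hZdef]
    linear_combination - hinv
  -- the evaluation bound
  set eρ : ℝ := Polynomial.eval ρ Ep with heρdef
  have hEval1 : Polynomial.eval 1 Ep = 1 := by
    rw [hEpdef]; simp
  have heρθ : eρ ≤ θ := by
    have hsum : eρ = ∑ i ∈ Finset.range (Ep.natDegree + 1), Ep.coeff i * ρ^i := by
      rw [heρdef, Polynomial.eval_eq_sum_range]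
    have hsum1 : (1:ℝ) = ∑ i ∈ Finset.range (Ep.natDegree + 1), Ep.coeff i := by
      rw [← hEval1, Polynomial.eval_eq_sum_range]
      simp
    have hterm : ∀ i ∈ Finset.range (Ep.natDegree + 1),
        Ep.coeff i * ρ^i ≤ Ep.coeff i * θ := by
      intro i _
      by_cases hi : i < mm + 1
      · rw [hEvan i hi]; simp
      · push_neg at hi
        have : ρ^i ≤ ρ^(mm+1) := pow_le_pow_of_le_one hρ0.le hρ1.le hi
        exact mul_le_mul_of_nonneg_left (hθdef ▸ this) (hEnn i)
    calc eρ ≤ ∑ i ∈ Finset.range (Ep.natDegree + 1), Ep.coeff i * θ := by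
          rw [hsum]; exact Finset.sum_le_sum hterm
      _ = (∑ i ∈ Finset.range (Ep.natDegree + 1), Ep.coeff i) * θ := by
          rw [Finset.sum_mul]
      _ = θ := by rw [← hsum1, one_mul]
  -- memberships for E(Z)
  have hEZsum : EZ = ∑ i ∈ Finset.range (Ep.natDegree + 1), C (Ep.coeff i) * Z^i := by
    rw [hEZdef, Polynomial.aeval_eq_sum_range]
    exact Finset.sum_congr rfl fun i _ => by rw [MvPolynomial.smul_eq_C_mul]
  have heρsum : (C eρ : P) = ∑ i ∈ Finset.range (Ep.natDegree + 1),
      C (Ep.coeff i) * C (ρ^i) := by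
    rw [heρdef, Polynomial.eval_eq_sum_range, map_sum]
    exact Finset.sum_congr rfl fun i _ => by rw [C_mul]
  have hEZ1 : C eρ - EZ ∈ Q := by
    have e : (C eρ : P) - EZ = ∑ i ∈ Finset.range (Ep.natDegree + 1),
        C (Ep.coeff i) * (C (ρ^i) - Z^i) := by
      rw [heρsum, hEZsum, ← Finset.sum_sub_distrib]
      exact Finset.sum_congr rfl fun i _ => by ring
    rw [e]
    exact hQ.sum_mem _ _ fun i _ =>
      hQ.nonnegC_mul_mem (hEnn i) (pow_bounds hQ hρ0 hZ1 hZ2 i).1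
  have hEZ2 : C eρ + EZ ∈ Q := by
    have e : (C eρ : P) + EZ = ∑ i ∈ Finset.range (Ep.natDegree + 1),
        C (Ep.coeff i) * (C (ρ^i) + Z^i) := by
      rw [heρsum, hEZsum, ← Finset.sum_add_distrib]
      exact Finset.sum_congr rfl fun i _ => by ring
    rw [e]
    exact hQ.sum_mem _ _ fun i _ =>
      hQ.nonnegC_mul_mem (hEnn i) (pow_bounds hQ hρ0 hZ1 hZ2 i).2
  have hθEZ1 : C θ - EZ ∈ Q := by
    have := hQ.add_mem (hQ.nonnegC_mem (show (0:ℝ) ≤ θ - eρ by linarith)) hEZ1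
    rwa [show (C (θ - eρ) : P) + (C eρ - EZ) = C θ - EZ by rw [C_sub]; ring] at this
  have hθEZ2 : C θ + EZ ∈ Q := by
    have := hQ.add_mem (hQ.nonnegC_mem (show (0:ℝ) ≤ θ - eρ by linarith)) hEZ2
    rwa [show (C (θ - eρ) : P) + (C eρ + EZ) = C θ + EZ by rw [C_sub]; ring] at this
  have magicθ : C (θ^2) - EZ^2 ∈ Q := hQ.magic hθ0 hθEZ2 hθEZ1
  -- assemble the master identity
  have hE' : (1 - Z) * SZ^2 = 1 - EZ := by rw [hEZid]; ring
  have e1 : C ((4*θ)/cb) * (SZ^2 * (Pp * Sb)) = C (4*θ) * (Pp * (1 - EZ)) := by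
    have h4c : (C ((4*θ)/cb) : P) = C (4*θ) * C (1/cb) := by
      rw [← C_mul]; congr 1; ring
    calc C ((4*θ)/cb) * (SZ^2 * (Pp * Sb))
        = C (4*θ) * (Pp * ((C (1/cb) * Sb) * SZ^2)) := by rw [h4c]; ring
      _ = C (4*θ) * (Pp * ((1 - Z) * SZ^2)) := by rw [← h1Z]
      _ = C (4*θ) * (Pp * (1 - EZ)) := by rw [hE']
  have hBsum : C ((4*θ)/cb) * (SZ^2 * (Pp * Sb))
      + ((EZ + C θ)^2 * (C μ + Pp)
      + ((EZ - C θ)^2 * (C μ - Pp)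
      + (C (4*θ*(ε - μ*θ))
      + C (2*μ) * (C (θ^2) - EZ^2)))) ∈ Q := by
    refine hQ.add_mem (hQ.posC_mul_mem (by positivity) (hQ.sq_mul_mem SZ h1)) ?_
    refine hQ.add_mem (hQ.sq_mul_mem _ h4) ?_
    refine hQ.add_mem (hQ.sq_mul_mem _ h5) ?_
    refine hQ.add_mem (hQ.nonnegC_mem ?_) (hQ.posC_mul_mem (by positivity) magicθ)
    have : 0 ≤ ε - μ*θ := by linarith
    positivity
  have master : C ((4*θ)/cb) * (SZ^2 * (Pp * Sb))
      + ((EZ + C θ)^2 * (C μ + Pp)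
      + ((EZ - C θ)^2 * (C μ - Pp)
      + (C (4*θ*(ε - μ*θ))
      + C (2*μ) * (C (θ^2) - EZ^2)))) = C (4*θ) * (Pp + C ε) := by
    rw [e1]
    simp only [C_mul, C_sub, C_pow, map_ofNat]
    ring
  rw [master] at hBsum
  have hfin := hQ.posC_mul_mem (c := 1/(4*θ)) (by positivity) hBsum
  rwa [show (C (1/(4*θ)) : P) * (C (4*θ) * (Pp + C ε)) = Pp + C ε by
    rw [← mul_assoc, ← C_mul, show (1/(4*θ))*(4*θ) = 1 by field_simp]
    simp] at hfin


end

section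

variable {n : ℕ}
local notation "P" => MvPolynomial (Fin n) ℝ

/-- `Q` avoids the ray `{fhat - t : 0 < t ≤ εs}`. -/
def Avoids (fhat : MvPolynomial (Fin n) ℝ) (εs : ℝ) (Q : Set (MvPolynomial (Fin n) ℝ)) : Prop :=
  ∀ t : ℝ, 0 < t → t ≤ εs → fhat - C t ∉ Q

/-- The quadratic module generated by `Q` and one extra element `p`. -/
def QpSig (Q : Set (MvPolynomial (Fin n) ℝ)) (p : MvPolynomial (Fin n) ℝ) :
    Set (MvPolynomial (Fin n) ℝ) :=
  {q | ∃ a ∈ Q, ∃ σ, IsSumSq σ ∧ q = a + p * σ}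

lemma QpSig_isQM {Q : Set (MvPolynomial (Fin n) ℝ)} (hQ : IsQM Q)
    (p : MvPolynomial (Fin n) ℝ) : IsQM (QpSig Q p) := by
  constructor
  · rintro x y ⟨a, ha, σ, hσ, rfl⟩ ⟨b, hb, τ, hτ, rfl⟩
    exact ⟨a + b, hQ.add_mem ha hb, σ + τ, hσ.add hτ, by ring⟩
  · rintro t x ⟨a, ha, σ, hσ, rfl⟩
    exact ⟨t^2 * a, hQ.sq_mul_mem t ha, t^2 * σ, sumsq_sqMul hσ, by ring⟩
  · intro t
    exact ⟨t^2, hQ.sq_mem t, 0, IsSumSq.zero, by ring⟩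

lemma subset_QpSig {Q : Set (MvPolynomial (Fin n) ℝ)} (hQ : IsQM Q)
    (p : MvPolynomial (Fin n) ℝ) : Q ⊆ QpSig Q p := by
  intro a ha
  exact ⟨a, ha, 0, IsSumSq.zero, by ring⟩

lemma mem_QpSig_self {Q : Set (MvPolynomial (Fin n) ℝ)} (hQ : IsQM Q)
    (p : MvPolynomial (Fin n) ℝ) : p ∈ QpSig Q p := by
  refine ⟨0, hQ.zero_mem, 1, ?_, by ring⟩
  have h1 := IsSumSq.sq_add (1 : MvPolynomial (Fin n) ℝ) IsSumSq.zero
  rwa [mul_one, add_zero] at h1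

/-- Zorn: a maximal ray-avoiding quadratic module above `M`. -/
lemma exists_maximal_avoiding {M : Set (MvPolynomial (Fin n) ℝ)} (hM : IsQM M)
    {fhat : MvPolynomial (Fin n) ℝ} {εs : ℝ} (hAv : Avoids fhat εs M) :
    ∃ Qm, M ⊆ Qm ∧ IsQM Qm ∧ Avoids fhat εs Qm ∧
      ∀ Q', IsQM Q' → Avoids fhat εs Q' → Qm ⊆ Q' → Q' ⊆ Qm := by
  set S : Set (Set (MvPolynomial (Fin n) ℝ)) :=
    {Q | IsQM Q ∧ M ⊆ Q ∧ Avoids fhat εs Q} with hS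
  have hzorn := zorn_subset_nonempty S ?_ M ⟨hM, subset_rfl, hAv⟩
  · obtain ⟨Qm, hMQm, hmax⟩ := hzorn
    obtain ⟨hQm, hMsub, hAvQm⟩ := hmax.1
    refine ⟨Qm, hMsub, hQm, hAvQm, ?_⟩
    intro Q' hQ' hAv' hsub
    exact hmax.2 ⟨hQ', subset_trans hMsub hsub, hAv'⟩ hsub
  · intro c hcS hchain hcne
    refine ⟨⋃₀ c, ⟨?_, ?_, ?_⟩, fun s hs => Set.subset_sUnion_of_mem hs⟩
    · constructor
      · rintro x y ⟨Q1, hQ1, hx⟩ ⟨Q2, hQ2, hy⟩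
        rcases hchain.total hQ1 hQ2 with hle | hle
        · exact ⟨Q2, hQ2, (hcS hQ2).1.add_mem (hle hx) hy⟩
        · exact ⟨Q1, hQ1, (hcS hQ1).1.add_mem hx (hle hy)⟩
      · rintro t x ⟨Q1, hQ1, hx⟩
        exact ⟨Q1, hQ1, (hcS hQ1).1.sq_mul_mem t hx⟩
      · intro t
        obtain ⟨Q1, hQ1⟩ := hcne
        exact ⟨Q1, hQ1, (hcS hQ1).1.sq_mem t⟩
    · obtain ⟨Q1, hQ1⟩ := hcne
      exact subset_trans (hcS hQ1).2.1 (Set.subset_sUnion_of_mem hQ1)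
    · intro t ht htε ⟨Q1, hQ1, hx⟩
      exact (hcS hQ1).2.2 t ht htε hx


end

section

variable {n : ℕ}
local notation "P" => MvPolynomial (Fin n) ℝ

/-- The key totality theorem: a maximal ray-avoiding archimedean quadratic module is total. -/
lemma total_of_maximal {Qm : Set (MvPolynomial (Fin n) ℝ)} (hQ : IsQM Qm)
    {fhat : MvPolynomial (Fin n) ℝ} {εs R₀ : ℝ} (hεs : 0 < εs) (hR : 0 < R₀)
    (harch : C R₀ - (∑ i : Fin n, X i ^ 2) ∈ Qm)
    (hAv : Avoids fhat εs Qm)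
    (hmax : ∀ Q', IsQM Q' → Avoids fhat εs Q' → Qm ⊆ Q' → Q' ⊆ Qm)
    (p : MvPolynomial (Fin n) ℝ) : p ∈ Qm ∨ -p ∈ Qm := by
  by_contra hcon
  push_neg at hcon
  obtain ⟨hp1, hp2⟩ := hcon
  -- extension by p hits the ray
  have hnav1 : ¬ Avoids fhat εs (QpSig Qm p) := fun hA =>
    hp1 (hmax _ (QpSig_isQM hQ p) hA (subset_QpSig hQ p) (mem_QpSig_self hQ p))
  have hnav2 : ¬ Avoids fhat εs (QpSig Qm (-p)) := fun hA =>
    hp2 (hmax _ (QpSig_isQM hQ (-p)) hA (subset_QpSig hQ (-p)) (mem_QpSig_self hQ (-p)))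
  rw [Avoids] at hnav1 hnav2
  push_neg at hnav1 hnav2
  obtain ⟨t₁, ht₁, ht₁ε, hm1⟩ := hnav1
  obtain ⟨t₂, ht₂, ht₂ε, hm2⟩ := hnav2
  obtain ⟨s₁, hs₁mem, σ₁, hσ₁, e₁⟩ := hm1
  obtain ⟨s₂, hs₂mem, σ₂, hσ₂, e₂'⟩ := hm2
  have e₂ : fhat - C t₂ = s₂ - p * σ₂ := by rw [e₂']; ring
  -- constants
  set t₀ : ℝ := min t₁ t₂ / 2 with ht₀def
  have ht₀ : 0 < t₀ := by rw [ht₀def]; positivity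
  have ht₀1 : 2 * t₀ ≤ t₁ := by
    rw [ht₀def]; have := min_le_left t₁ t₂; linarith
  have ht₀2 : 2 * t₀ ≤ t₂ := by
    rw [ht₀def]; have := min_le_right t₁ t₂; linarith
  have ht₀ε : t₀ ≤ εs := by
    rw [ht₀def]; have := min_le_left t₁ t₂; linarith
  obtain ⟨lam, hlam, hlp1, hlp2⟩ := bnd_all hQ hR harch p
  obtain ⟨L1, hL1, hL11, hL12⟩ := bnd_all hQ hR harch σ₁
  obtain ⟨L2, hL2, hL21, hL22⟩ := bnd_all hQ hR harch σ₂
  obtain ⟨cF, hcF, hcF1, hcF2⟩ := bnd_all hQ hR harch fhat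
  set G : MvPolynomial (Fin n) ℝ := fhat - C t₀ with hGdef
  -- (B)
  have hB : G * (σ₁ + σ₂) ∈ Qm := by
    have mm1 : σ₂ * s₁ ∈ Qm := hQ.sumsq_mul_mem hσ₂ hs₁mem
    have mm2 : σ₁ * s₂ ∈ Qm := hQ.sumsq_mul_mem hσ₁ hs₂mem
    have mm3 : C (t₁ - t₀) * σ₂ ∈ Qm :=
      hQ.nonnegC_mul_mem (by linarith) (hQ.sumsq_mem hσ₂)
    have mm4 : C (t₂ - t₀) * σ₁ ∈ Qm :=
      hQ.nonnegC_mul_mem (by linarith) (hQ.sumsq_mem hσ₁)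
    have htot := hQ.add_mem (hQ.add_mem mm1 mm2) (hQ.add_mem mm3 mm4)
    have hC1 : (C (t₁ - t₀) : MvPolynomial (Fin n) ℝ) = C t₁ - C t₀ := C_sub _ _ _
    have hC2 : (C (t₂ - t₀) : MvPolynomial (Fin n) ℝ) = C t₂ - C t₀ := C_sub _ _ _
    have e : σ₂ * s₁ + σ₁ * s₂ + (C (t₁ - t₀) * σ₂ + C (t₂ - t₀) * σ₁)
        = G * (σ₁ + σ₂) := by
      rw [hGdef]
      linear_combination (-σ₂) * e₁ + (-σ₁) * e₂ + σ₂ * hC1 + σ₁ * hC2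
    rwa [e] at htot
  -- (A1)
  have hA1 : G + C lam * σ₁ - C t₀ ∈ Qm := by
    have mm1 : σ₁ * (C lam + p) ∈ Qm := hQ.sumsq_mul_mem hσ₁ hlp1
    have mm2 : (C (t₁ - 2*t₀) : MvPolynomial (Fin n) ℝ) ∈ Qm :=
      hQ.nonnegC_mem (by linarith)
    have htot := hQ.add_mem (hQ.add_mem hs₁mem mm1) mm2
    have hC3 : (C (t₁ - 2*t₀) : MvPolynomial (Fin n) ℝ) = C t₁ - 2 * C t₀ := by
      rw [C_sub, C_mul, map_ofNat]
    have e : s₁ + σ₁ * (C lam + p) + C (t₁ - 2*t₀) = G + C lam * σ₁ - C t₀ := by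
      rw [hGdef]
      linear_combination (-1 : MvPolynomial (Fin n) ℝ) * e₁ + hC3
    rwa [e] at htot
  -- division setup
  set ν : ℝ := t₀ / (2 * lam) with hνdef
  have hν : 0 < ν := by rw [hνdef]; positivity
  set P' : MvPolynomial (Fin n) ℝ := G + C (lam * ν) with hP'def
  set S' : MvPolynomial (Fin n) ℝ := σ₁ + σ₂ + C ν with hS'def
  have d1 : P' * S' ∈ Qm := by
    have mm1 : C ν * (G + C lam * σ₁ - C t₀) ∈ Qm := hQ.posC_mul_mem hν hA1
    have mm2 : C (lam * ν) * σ₂ ∈ Qm :=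
      hQ.posC_mul_mem (by positivity) (hQ.sumsq_mem hσ₂)
    have mm3 : (C (ν * t₀ + lam * ν^2) : MvPolynomial (Fin n) ℝ) ∈ Qm :=
      hQ.nonnegC_mem (by positivity)
    have htot := hQ.add_mem (hQ.add_mem hB mm1) (hQ.add_mem mm2 mm3)
    have e : G * (σ₁ + σ₂) + C ν * (G + C lam * σ₁ - C t₀)
        + (C (lam * ν) * σ₂ + C (ν * t₀ + lam * ν^2)) = P' * S' := by
      rw [hP'def, hS'def]
      simp only [C_add, C_mul, C_pow]
      ring
    rwa [e] at htot
  have d2 : S' - C ν ∈ Qm := by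
    have : S' - C ν = σ₁ + σ₂ := by rw [hS'def]; ring
    rw [this]; exact hQ.sumsq_mem (hσ₁.add hσ₂)
  set cb : ℝ := L1 + L2 + ν + 1 with hcbdef
  have hνcb : ν < cb := by rw [hcbdef]; linarith
  have d3 : C cb - S' ∈ Qm := by
    have htot := hQ.add_mem (hQ.add_mem hL12 hL22) hQ.one_mem
    have e : (C L1 - σ₁) + (C L2 - σ₂) + 1 = C cb - S' := by
      rw [hcbdef, hS'def]
      simp only [C_add, C_1]
      ring
    rwa [e] at htot
  set μb : ℝ := cF + t₀ + lam * ν + 1 with hμbdef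
  have hμb : 0 < μb := by rw [hμbdef]; positivity
  have d4 : C μb + P' ∈ Qm := by
    have htot := hQ.add_mem hcF1 (hQ.nonnegC_mem (show (0:ℝ) ≤ 2*(lam*ν) + 1 by positivity))
    have e : (C cF + fhat) + C (2*(lam*ν) + 1) = C μb + P' := by
      rw [hμbdef, hP'def, hGdef]
      simp only [C_add, C_mul, C_1, map_ofNat]
      ring
    rwa [e] at htot
  have d5 : C μb - P' ∈ Qm := by
    have htot := hQ.add_mem hcF2 (hQ.nonnegC_mem (show (0:ℝ) ≤ 2*t₀ + 1 by positivity))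
    have e : (C cF - fhat) + C (2*t₀ + 1) = C μb - P' := by
      rw [hμbdef, hP'def, hGdef]
      simp only [C_add, C_mul, C_1, map_ofNat]
      ring
    rwa [e] at htot
  have hdiv := div_lemma hQ hν hνcb hμb d1 d2 d3 d4 d5 (ε := t₀/4) (by positivity)
  have hlv : lam * ν = t₀ / 2 := by
    rw [hνdef]; field_simp
  have efin : P' + C (t₀/4) = fhat - C (t₀/4) := by
    rw [hP'def, hGdef, hlv]
    rw [show (C (t₀/2) : MvPolynomial (Fin n) ℝ) = C t₀ - C (t₀/4) - C (t₀/4) by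
      rw [← C_sub, ← C_sub]; congr 1; ring]
    ring
  rw [efin] at hdiv
  exact hAv (t₀/4) (by positivity) (by linarith) hdiv


end

section

variable {n : ℕ}
local notation "P" => MvPolynomial (Fin n) ℝ

/-- Infinitesimal elements of `Q`. -/
def oQ (Q : Set (MvPolynomial (Fin n) ℝ)) : Set (MvPolynomial (Fin n) ℝ) :=
  {v | ∀ e : ℝ, 0 < e → (C e + v ∈ Q ∧ C e - v ∈ Q)}

variable {Q : Set (MvPolynomial (Fin n) ℝ)}

lemma oQ_zero (hQ : IsQM Q) : (0 : MvPolynomial (Fin n) ℝ) ∈ oQ Q := by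
  intro e he
  constructor <;> simpa using hQ.nonnegC_mem he.le

lemma oQ_add (hQ : IsQM Q) {v w : MvPolynomial (Fin n) ℝ}
    (hv : v ∈ oQ Q) (hw : w ∈ oQ Q) : v + w ∈ oQ Q := by
  intro e he
  have h2 : (0:ℝ) < e/2 := by positivity
  obtain ⟨hv1, hv2⟩ := hv (e/2) h2
  obtain ⟨hw1, hw2⟩ := hw (e/2) h2
  have hee : (C (e/2) : MvPolynomial (Fin n) ℝ) + C (e/2) = C e := by
    rw [← C_add]; congr 1; ring
  constructor
  · have := hQ.add_mem hv1 hw1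
    rwa [show C (e/2) + v + (C (e/2) + w) = C (e/2) + C (e/2) + (v + w) by ring, hee] at this
  · have := hQ.add_mem hv2 hw2
    rwa [show C (e/2) - v + (C (e/2) - w) = C (e/2) + C (e/2) - (v + w) by ring, hee] at this

/-- Multiplying an infinitesimal by any polynomial (given archimedean bounds) stays
infinitesimal; first an auxiliary one-sided version. -/
lemma oQ_mul_aux (hQ : IsQM Q) {R₀ : ℝ} (hR : 0 < R₀)
    (harch : C R₀ - (∑ i : Fin n, X i ^ 2) ∈ Q)
    {v : MvPolynomial (Fin n) ℝ} (hv : v ∈ oQ Q) (q : MvPolynomial (Fin n) ℝ)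
    {e : ℝ} (he : 0 < e) : C e + q * v ∈ Q := by
  obtain ⟨L, hL, hL1, hL2⟩ := bnd_sq hQ (bnd_all hQ hR harch q)
  set a : ℝ := Real.sqrt (e/(2*L)) with hadef
  have ha : 0 < a := Real.sqrt_pos.mpr (by positivity)
  have ha2 : a^2 = e/(2*L) := Real.sq_sqrt (by positivity)
  set δ : ℝ := a^2 * e with hδdef
  have hδ : 0 < δ := by rw [hδdef]; positivity
  set c₀ : ℝ := 2*e - a^2*L - a⁻¹^2*δ with hc₀def
  have hinv2 : a⁻¹^2 * δ = e := by
    rw [hδdef]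
    field_simp
  have haL : a^2 * L = e/2 := by rw [ha2]; field_simp
  have hc₀ : c₀ = e/2 := by rw [hc₀def, hinv2, haL]; ring
  -- the small square bound for v
  set b : ℝ := Real.sqrt δ with hbdef
  have hb : 0 < b := Real.sqrt_pos.mpr hδ
  have hb2 : b^2 = δ := Real.sq_sqrt hδ.le
  obtain ⟨hv1, hv2⟩ := hv b hb
  have hvsq : C δ - v^2 ∈ Q := by
    have := hQ.magic hb hv1 hv2
    rwa [hb2] at this
  -- memberships
  have hA : ((C a * q + C a⁻¹ * v)^2 : MvPolynomial (Fin n) ℝ) ∈ Q := hQ.sq_mem _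
  have hBb : (C (a^2) : MvPolynomial (Fin n) ℝ) * (C L - q^2) ∈ Q :=
    hQ.posC_mul_mem (by positivity) hL2
  have hDd : (C (a⁻¹^2) : MvPolynomial (Fin n) ℝ) * (C δ - v^2) ∈ Q :=
    hQ.posC_mul_mem (by positivity) hvsq
  have hEe : (C c₀ : MvPolynomial (Fin n) ℝ) ∈ Q := hQ.nonnegC_mem (by rw [hc₀]; positivity)
  have htot := hQ.add_mem (hQ.add_mem hA hBb) (hQ.add_mem hDd hEe)
  -- collapse facts
  have g1 : (C a : MvPolynomial (Fin n) ℝ) * C a⁻¹ = 1 := by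
    rw [← C_mul, mul_inv_cancel₀ (ne_of_gt ha)]; simp
  have g2 : (C a : MvPolynomial (Fin n) ℝ)^2 = C (a^2) := by rw [← C_pow]
  have g3 : (C a⁻¹ : MvPolynomial (Fin n) ℝ)^2 = C (a⁻¹^2) := by rw [← C_pow]
  have g4 : (C (a^2) : MvPolynomial (Fin n) ℝ) * C L + C (a⁻¹^2) * C δ + C c₀ = C (2*e) := by
    rw [← C_mul, ← C_mul, ← C_add, ← C_add]
    congr 1
    rw [hc₀def]; ring
  have e1 : (C a * q + C a⁻¹ * v)^2 + C (a^2) * (C L - q^2)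
      + (C (a⁻¹^2) * (C δ - v^2) + C c₀) = C (2*e) + 2*(q*v) := by
    linear_combination q^2 * g2 + v^2 * g3 + (2*(q*v)) * g1 + g4
  rw [e1] at htot
  -- halve
  have hhalf := hQ.posC_mul_mem (c := (1:ℝ)/2) (by norm_num) htot
  have g5 : (C ((1:ℝ)/2) : MvPolynomial (Fin n) ℝ) * C (2*e) = C e := by
    rw [← C_mul]; congr 1; ring
  have g6 : (C ((1:ℝ)/2) : MvPolynomial (Fin n) ℝ) * 2 = 1 := by
    rw [show ((2:MvPolynomial (Fin n) ℝ)) = C (2:ℝ) from (map_ofNat _ 2).symm, ← C_mul]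
    norm_num
  have e2 : (C ((1:ℝ)/2) : MvPolynomial (Fin n) ℝ) * (C (2*e) + 2*(q*v)) = C e + q * v := by
    linear_combination g5 + (q*v) * g6
  rwa [e2] at hhalf

lemma oQ_mul (hQ : IsQM Q) {R₀ : ℝ} (hR : 0 < R₀)
    (harch : C R₀ - (∑ i : Fin n, X i ^ 2) ∈ Q)
    {v : MvPolynomial (Fin n) ℝ} (hv : v ∈ oQ Q) (q : MvPolynomial (Fin n) ℝ) :
    q * v ∈ oQ Q := by
  intro e he
  constructor
  · exact oQ_mul_aux hQ hR harch hv q he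
  · have := oQ_mul_aux hQ hR harch hv (-q) he
    rwa [show C e + -q * v = C e - q * v by ring] at this

lemma oQ_sum (hQ : IsQM Q) {ι : Type*} (s : Finset ι) (f : ι → MvPolynomial (Fin n) ℝ)
    (hf : ∀ i ∈ s, f i ∈ oQ Q) : (∑ i ∈ s, f i) ∈ oQ Q := by
  classical
  induction s using Finset.induction_on with
  | empty => simpa using oQ_zero hQ
  | insert _ _ hx ih =>
      rw [Finset.sum_insert hx]
      exact oQ_add hQ (hf _ (Finset.mem_insert_self _ _))
        (ih fun i hi => hf i (Finset.mem_insert_of_mem hi))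

/-- Taylor-type expansion: `p - p(a)` lies in the ideal generated by the `Xᵢ - aᵢ`. -/
lemma exists_taylor (p : MvPolynomial (Fin n) ℝ) (a : Fin n → ℝ) :
    ∃ q : Fin n → MvPolynomial (Fin n) ℝ,
      p - C (eval a p) = ∑ i, (X i - C (a i)) * q i := by
  induction p using MvPolynomial.induction_on with
  | C c => exact ⟨0, by simp⟩
  | add p₁ p₂ h1 h2 =>
      obtain ⟨q₁, hq₁⟩ := h1
      obtain ⟨q₂, hq₂⟩ := h2
      refine ⟨fun i => q₁ i + q₂ i, ?_⟩
      rw [map_add, C_add]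
      calc p₁ + p₂ - (C (eval a p₁) + C (eval a p₂))
          = (p₁ - C (eval a p₁)) + (p₂ - C (eval a p₂)) := by ring
        _ = (∑ i, (X i - C (a i)) * q₁ i) + (∑ i, (X i - C (a i)) * q₂ i) := by
            rw [hq₁, hq₂]
        _ = ∑ i, (X i - C (a i)) * (q₁ i + q₂ i) := by
            rw [← Finset.sum_add_distrib]
            exact Finset.sum_congr rfl fun i _ => by ring
  | mul_X p i h =>
      obtain ⟨q, hq⟩ := h
      refine ⟨fun j => q j * X i + (if j = i then C (eval a p) else 0), ?_⟩
      have hev : eval a (p * X i) = eval a p * a i := by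
        rw [map_mul, eval_X]
      rw [hev]
      have hsplit : ∀ j, (X j - C (a j)) * (q j * X i + (if j = i then C (eval a p) else 0))
          = (X j - C (a j)) * q j * X i + (if j = i then (X i - C (a i)) * C (eval a p) else 0) := by
        intro j
        by_cases hj : j = i
        · subst hj; rw [if_pos rfl, if_pos rfl]; ring
        · rw [if_neg hj, if_neg hj]; ring
      calc p * X i - C (eval a p * a i)
          = (p - C (eval a p)) * X i + (X i - C (a i)) * C (eval a p) := by
            rw [C_mul]; ring
        _ = (∑ j, (X j - C (a j)) * q j) * X i + (X i - C (a i)) * C (eval a p) := by rw [hq]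
        _ = ∑ j, ((X j - C (a j)) * q j * X i + (if j = i then (X i - C (a i)) * C (eval a p) else 0)) := by
            rw [Finset.sum_add_distrib, Finset.sum_mul]
            congr 1
            rw [Finset.sum_ite_eq' Finset.univ i (fun _ => (X i - C (a i)) * C (eval a p))]
            simp
        _ = ∑ j, (X j - C (a j)) * (q j * X i + (if j = i then C (eval a p) else 0)) := by
            exact (Finset.sum_congr rfl fun j _ => (hsplit j).symm)


end

section

variable {n : ℕ}

/-- Abstract Putinar theorem with slack: if `fhat ≥ 2 εs` on the nonnegativity locus of the
archimedean quadratic module `M`, then `fhat - t ∈ M` for some `0 < t ≤ εs`. -/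
theorem putinar_core {M : Set (MvPolynomial (Fin n) ℝ)} (hM : IsQM M) {R₀ : ℝ} (hR : 0 < R₀)
    (harch : C R₀ - (∑ i : Fin n, X i ^ 2) ∈ M) {fhat : MvPolynomial (Fin n) ℝ}
    {εs : ℝ} (hεs : 0 < εs)
    (hpos : ∀ x : Fin n → ℝ, (∀ q ∈ M, 0 ≤ eval x q) → 2 * εs ≤ eval x fhat) :
    ∃ t : ℝ, 0 < t ∧ t ≤ εs ∧ fhat - C t ∈ M := by
  by_contra hcontra
  push_neg at hcontra
  have hAv : Avoids fhat εs M := fun t ht htε hmem => (hcontra t ht htε) hmem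
  obtain ⟨Qm, hMsub, hQm, hAvQm, hmaxQm⟩ := exists_maximal_avoiding hM hAv
  have harchQ : C R₀ - (∑ i : Fin n, X i ^ 2) ∈ Qm := hMsub harch
  have htotal := total_of_maximal hQm hεs hR harchQ hAvQm hmaxQm
  -- no negative constants in Qm
  have hnegc : ∀ c : ℝ, c < 0 → (C c : MvPolynomial (Fin n) ℝ) ∉ Qm := by
    intro c hc hmem
    exact hAvQm εs hεs le_rfl (all_of_neg_const hQm hR harchQ hc hmem _)
  -- the cut point
  have hSne : ∀ i : Fin n, ∃ r : ℝ, C r - X i ∈ Qm := by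
    intro i
    obtain ⟨l, hl, h1, h2⟩ := bnd_all hQm hR harchQ (X i)
    exact ⟨l, h2⟩
  have hSbdd : ∀ i : Fin n, ∃ b : ℝ, ∀ r : ℝ, C r - X i ∈ Qm → b ≤ r := by
    intro i
    obtain ⟨l, hl, h1, h2⟩ := bnd_all hQm hR harchQ (X i)
    refine ⟨-l, fun r hr => ?_⟩
    by_contra hrl
    push_neg at hrl
    have := hQm.add_mem hr h1
    rw [show C r - X i + (C l + X i) = C (r + l) by rw [C_add]; ring] at this
    exact hnegc (r + l) (by linarith) this
  set a : Fin n → ℝ := fun i => sInf {r : ℝ | C r - X i ∈ Qm} with hadef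
  have hXo : ∀ i : Fin n, (X i - C (a i)) ∈ oQ Qm := by
    intro i
    set Si : Set ℝ := {r : ℝ | C r - X i ∈ Qm} with hSidef
    have hne : Si.Nonempty := hSne i
    have hbdd : BddBelow Si := by
      obtain ⟨b, hb⟩ := hSbdd i
      exact ⟨b, fun r hr => hb r hr⟩
    intro e he
    constructor
    · -- C e + (X i - C (a i)) = X i - C (a i - e)
      by_contra hmem
      have hneg : C (a i - e) - X i ∈ Qm := by
        rcases htotal (C e + (X i - C (a i))) with h | h
        · exact absurd h hmem
        · rwa [show -(C e + (X i - C (a i))) = C (a i - e) - X i by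
            rw [C_sub]; ring] at h
      have : a i - e ∈ Si := hneg
      have := csInf_le hbdd this
      rw [hadef] at *
      simp only at this
      linarith
    · -- C e - (X i - C (a i)) = C (a i + e) - X i
      obtain ⟨r, hrS, hre⟩ : ∃ r ∈ Si, r < a i + e := by
        have : sInf Si < a i + e := by
          rw [hadef]; simp only; linarith
        exact exists_lt_of_csInf_lt hne this
      have hmem := hQm.add_mem hrS (hQm.nonnegC_mem (show (0:ℝ) ≤ a i + e - r by linarith))
      rwa [show C r - X i + C (a i + e - r) = C e - (X i - C (a i)) by
        rw [C_sub, C_add]; ring] at hmem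
  -- every element of Qm is nonnegative at a
  have heval : ∀ q ∈ Qm, 0 ≤ eval a q := by
    intro q hq
    by_contra hev
    push_neg at hev
    obtain ⟨w, hw⟩ := exists_taylor q a
    have hoq : q - C (eval a q) ∈ oQ Qm := by
      rw [hw]
      exact oQ_sum hQm _ _ fun i _ => by
        rw [mul_comm]
        exact oQ_mul hQm hR harchQ (hXo i) (w i)
    set e : ℝ := -(eval a q)/2 with hedef
    have he : 0 < e := by rw [hedef]; linarith
    obtain ⟨-, h2⟩ := hoq e he
    have hmem := hQm.add_mem h2 hq
    rw [show C e - (q - C (eval a q)) + q = C (e + eval a q) by rw [C_add]; ring] at hmem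
    exact hnegc _ (by rw [hedef]; linarith) hmem
  -- contradiction with positivity of fhat
  have h2εs : 2 * εs ≤ eval a fhat := hpos a fun q hq => heval q (hMsub hq)
  have hray : fhat - C εs ∉ Qm := hAvQm εs hεs le_rfl
  have hneg : C εs - fhat ∈ Qm := by
    rcases htotal (fhat - C εs) with h | h
    · exact absurd h hray
    · rwa [show -(fhat - C εs) = C εs - fhat by ring] at h
  have := heval _ hneg
  rw [map_sub, eval_C] at this
  linarith


end

section

variable {n m1 m2 : ℕ}

/-! ### Riesz functional lemmas -/

lemma riesz_eq_sum_of_subset (z : Exp n → ℝ) {p : MvPolynomial (Fin n) ℝ}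
    {s : Finset ((Fin n) →₀ ℕ)} (hs : p.support ⊆ s) :
    riesz z p = ∑ α ∈ s, coeff α p * z α := by
  rw [riesz]
  exact Finset.sum_subset hs (fun α _ hα => by
    rw [MvPolynomial.notMem_support_iff.mp hα, zero_mul])

lemma riesz_zero (z : Exp n → ℝ) : riesz z (0 : MvPolynomial (Fin n) ℝ) = 0 := by
  simp [riesz]

lemma riesz_add (z : Exp n → ℝ) (p q : MvPolynomial (Fin n) ℝ) :
    riesz z (p + q) = riesz z p + riesz z q := by
  classical
  set s := p.support ∪ q.support ∪ (p + q).support with hs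
  rw [riesz_eq_sum_of_subset z (show (p+q).support ⊆ s by rw [hs]; exact Finset.subset_union_right),
    riesz_eq_sum_of_subset z (show p.support ⊆ s by
      rw [hs]; exact subset_trans Finset.subset_union_left Finset.subset_union_left),
    riesz_eq_sum_of_subset z (show q.support ⊆ s by
      rw [hs]; exact subset_trans Finset.subset_union_right Finset.subset_union_left),
    ← Finset.sum_add_distrib]
  exact Finset.sum_congr rfl fun α _ => by rw [coeff_add]; ring

lemma riesz_neg (z : Exp n → ℝ) (p : MvPolynomial (Fin n) ℝ) :
    riesz z (-p) = - riesz z p := by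
  classical
  have := riesz_add z p (-p)
  rw [add_neg_cancel, riesz_zero] at this
  linarith

lemma riesz_sub (z : Exp n → ℝ) (p q : MvPolynomial (Fin n) ℝ) :
    riesz z (p - q) = riesz z p - riesz z q := by
  rw [sub_eq_add_neg, riesz_add, riesz_neg]; ring

lemma riesz_sum (z : Exp n → ℝ) {ι : Type*} (s : Finset ι) (F : ι → MvPolynomial (Fin n) ℝ) :
    riesz z (∑ i ∈ s, F i) = ∑ i ∈ s, riesz z (F i) := by
  classical
  induction s using Finset.induction_on with
  | empty => simp [riesz_zero]
  | insert _ _ hx ih => rw [Finset.sum_insert hx, Finset.sum_insert hx, riesz_add, ih]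

lemma riesz_monomial (z : Exp n → ℝ) (d : (Fin n) →₀ ℕ) (c : ℝ) :
    riesz z (monomial d c) = c * z d := by
  classical
  by_cases hc : c = 0
  · subst hc; simp [riesz_zero]
  · rw [riesz, support_monomial, if_neg hc, Finset.sum_singleton, coeff_monomial, if_pos rfl]

lemma riesz_C (z : Exp n → ℝ) (c : ℝ) :
    riesz z (C c) = c * z 0 := by
  rw [show (C c : MvPolynomial (Fin n) ℝ) = monomial 0 c from rfl, riesz_monomial]
  norm_num

/-! ### Bridging the untruncated module to the truncated relaxations -/

variable {h : Fin m1 → MvPolynomial (Fin n) ℝ} {g : Fin m2 → MvPolynomial (Fin n) ℝ}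

lemma bridge_sumsq {σ : MvPolynomial (Fin n) ℝ} (hσ : IsSumSq σ) :
    ∃ N : ℕ, ∀ k, N ≤ k → ∀ z ∈ PhiSet g k, 0 ≤ riesz z σ := by
  induction hσ with
  | zero => exact ⟨0, fun k _ z _ => by rw [riesz_zero]⟩
  | @sq_add a S hS ih =>
      obtain ⟨N, hN⟩ := ih
      refine ⟨max N ((a^2).totalDegree), fun k hk z hz => ?_⟩
      have e : a * a + S = a^2 + S := by ring
      rw [e, riesz_add]
      have h1 : 0 ≤ riesz z (a^2) := by
        apply hz.1
        calc (a^2).totalDegree ≤ max N ((a^2).totalDegree) := le_max_right _ _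
          _ ≤ k := hk
          _ ≤ 2*k := by omega
      have h2 : 0 ≤ riesz z S := hN k (le_trans (le_max_left _ _) hk) z hz
      linarith

lemma bridge_gj (j : Fin m2) {σ : MvPolynomial (Fin n) ℝ} (hσ : IsSumSq σ) :
    ∃ N : ℕ, ∀ k, N ≤ k → ∀ z ∈ PhiSet g k, 0 ≤ riesz z (g j * σ) := by
  induction hσ with
  | zero => exact ⟨0, fun k _ z _ => by rw [mul_zero, riesz_zero]⟩
  | @sq_add a S hS ih =>
      obtain ⟨N, hN⟩ := ih
      refine ⟨max N ((g j * a^2).totalDegree), fun k hk z hz => ?_⟩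
      have e : g j * (a * a + S) = g j * a^2 + g j * S := by ring
      rw [e, riesz_add]
      have h1 : 0 ≤ riesz z (g j * a^2) := by
        apply hz.2 j
        calc (g j * a^2).totalDegree ≤ max N ((g j * a^2).totalDegree) := le_max_right _ _
          _ ≤ k := hk
          _ ≤ 2*k := by omega
      have h2 : 0 ≤ riesz z (g j * S) := hN k (le_trans (le_max_left _ _) hk) z hz
      linarith

lemma bridge_h (i : Fin m1) (q : MvPolynomial (Fin n) ℝ) :
    ∃ N : ℕ, ∀ k, N ≤ k → ∀ z ∈ ESet h k, riesz z (h i * q) = 0 := by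
  set u : MvPolynomial (Fin n) ℝ := C (1/2) * (q + 1) with hu
  set v : MvPolynomial (Fin n) ℝ := C (1/2) * (q - 1) with hv
  have gfact : (C ((1:ℝ)/2) : MvPolynomial (Fin n) ℝ)^2 * 4 = 1 := by
    rw [← C_pow, show ((4:MvPolynomial (Fin n) ℝ)) = C (4:ℝ) from (map_ofNat _ 4).symm, ← C_mul]
    norm_num
  have e : h i * q = h i * u^2 - h i * v^2 := by
    rw [hu, hv]
    linear_combination (-(h i * q)) * gfact
  refine ⟨max ((h i * u^2).totalDegree) ((h i * v^2).totalDegree), fun k hk z hz => ?_⟩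
  rw [e, riesz_sub]
  have h1 : riesz z (h i * u^2) = 0 := by
    apply hz i
    calc (h i * u^2).totalDegree ≤ max _ _ := le_max_left _ _
      _ ≤ k := hk
      _ ≤ 2*k := by omega
  have h2 : riesz z (h i * v^2) = 0 := by
    apply hz i
    calc (h i * v^2).totalDegree ≤ max _ _ := le_max_right _ _
      _ ≤ k := hk
      _ ≤ 2*k := by omega
  rw [h1, h2]; ring

/-- Main bridge: membership in the untruncated module eventually gives nonnegativity of the
Riesz functional on the truncated relaxations. -/
lemma bridge_Mqm {p : MvPolynomial (Fin n) ℝ} (hp : p ∈ Mqm h g) :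
    ∃ N : ℕ, ∀ k, N ≤ k → ∀ z, z ∈ PhiSet g k → z ∈ ESet h k → 0 ≤ riesz z p := by
  obtain ⟨σ₀, σ, q, hσ₀, hσ, rfl⟩ := hp
  obtain ⟨N₀, hN₀⟩ := bridge_sumsq (g := g) hσ₀
  have hgj : ∀ j : Fin m2, ∃ N : ℕ, ∀ k, N ≤ k → ∀ z ∈ PhiSet g k, 0 ≤ riesz z (g j * σ j) :=
    fun j => bridge_gj j (hσ j)
  choose Ng hNg using hgj
  have hhi : ∀ i : Fin m1, ∃ N : ℕ, ∀ k, N ≤ k → ∀ z ∈ ESet h k, riesz z (h i * q i) = 0 :=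
    fun i => bridge_h i (q i)
  choose Nh hNh using hhi
  refine ⟨max N₀ (max (Finset.univ.sup Ng) (Finset.univ.sup Nh)), fun k hk z hz1 hz2 => ?_⟩
  rw [riesz_add, riesz_add, riesz_sum, riesz_sum]
  have t0 : 0 ≤ riesz z σ₀ := hN₀ k (le_trans (le_max_left _ _) hk) z hz1
  have t1 : 0 ≤ ∑ j, riesz z (g j * σ j) := by
    apply Finset.sum_nonneg
    intro j _
    refine hNg j k ?_ z hz1
    calc Ng j ≤ Finset.univ.sup Ng := Finset.le_sup (Finset.mem_univ j)
      _ ≤ _ := le_trans (le_max_left _ _) (le_trans (le_max_right _ _) hk)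
  have t2 : (∑ i, riesz z (h i * q i)) = 0 := by
    apply Finset.sum_eq_zero
    intro i _
    refine hNh i k ?_ z hz2
    calc Nh i ≤ Finset.univ.sup Nh := Finset.le_sup (Finset.mem_univ i)
      _ ≤ _ := le_trans (le_max_right _ _) (le_trans (le_max_right _ _) hk)
  rw [t2]
  linarith


end

section

variable {n m1 m2 : ℕ}

lemma poly_continuous (p : MvPolynomial (Fin n) ℝ) :
    Continuous fun x : Fin n → ℝ => eval x p := by
  induction p using MvPolynomial.induction_on with
  | C c => simpa using continuous_const
  | add p q hp hq =>
      simp only [map_add]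
      exact hp.add hq
  | mul_X p i hp =>
      simp only [map_mul, eval_X]
      exact hp.mul (continuous_apply i)

lemma eval_sumsq_nonneg {σ : MvPolynomial (Fin n) ℝ} (hσ : IsSumSq σ) (x : Fin n → ℝ) :
    0 ≤ eval x σ := by
  induction hσ with
  | zero => simp
  | @sq_add a S hS ih =>
      rw [map_add, map_mul]
      nlinarith [sq_nonneg (eval x a)]

lemma Mqm_nonneg_on {h : Fin m1 → MvPolynomial (Fin n) ℝ} {g : Fin m2 → MvPolynomial (Fin n) ℝ}
    {p : MvPolynomial (Fin n) ℝ} (hp : p ∈ Mqm h g) {x : Fin n → ℝ} (hx : x ∈ semiK h g) :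
    0 ≤ eval x p := by
  obtain ⟨σ₀, σ, q, hσ₀, hσ, rfl⟩ := hp
  rw [map_add, map_add, map_sum, map_sum]
  have t0 := eval_sumsq_nonneg hσ₀ x
  have t1 : 0 ≤ ∑ j, eval x (g j * σ j) := by
    apply Finset.sum_nonneg
    intro j _
    rw [map_mul]
    exact mul_nonneg (hx.2 j) (eval_sumsq_nonneg (hσ j) x)
  have t2 : (∑ i, eval x (h i * q i)) = 0 := by
    apply Finset.sum_eq_zero
    intro i _
    rw [map_mul, hx.1 i, zero_mul]
  rw [t2]
  linarith

lemma evalA_toPoly {A : Finset (Exp n)} (f : A → ℝ) (u : Fin n → ℝ) :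
    evalA A f u = eval u (toPoly A f) := by
  rw [evalA, toPoly, map_sum]
  refine Finset.sum_congr rfl fun α _ => ?_
  rw [eval_monomial, monoEval]
  congr 1
  rw [Finsupp.prod_fintype _ _ (fun i => pow_zero (u i))]
  exact Finset.prod_congr rfl fun i _ => by
    rw [Finsupp.equivFunOnFinite_symm_apply_apply]

lemma semiK_compact {h : Fin m1 → MvPolynomial (Fin n) ℝ} {g : Fin m2 → MvPolynomial (Fin n) ℝ}
    {R : ℝ} (hR : 0 < R) (hcert : C R - (∑ i : Fin n, X i ^ 2) ∈ Mqm h g) :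
    IsCompact (semiK h g) := by
  apply Metric.isCompact_of_isClosed_isBounded
  · have : semiK h g = (⋂ i, (fun x : Fin n → ℝ => eval x (h i)) ⁻¹' {0}) ∩
        ⋂ j, (fun x : Fin n → ℝ => eval x (g j)) ⁻¹' (Set.Ici 0) := by
      ext x
      simp [semiK, Set.mem_iInter, Set.mem_preimage]
    rw [this]
    exact IsClosed.inter
      (isClosed_iInter fun i => (isClosed_singleton).preimage (poly_continuous (h i)))
      (isClosed_iInter fun j => (isClosed_Ici).preimage (poly_continuous (g j)))
  · rw [Metric.isBounded_iff_subset_closedBall 0]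
    refine ⟨Real.sqrt R, fun x hx => ?_⟩
    have hnn := Mqm_nonneg_on hcert hx
    have hev : eval x (C R - (∑ i : Fin n, X i ^ 2)) = R - ∑ i, (x i)^2 := by
      rw [map_sub, eval_C, map_sum]
      simp
    rw [hev] at hnn
    have hsq : ∀ i, (x i)^2 ≤ R := by
      intro i
      have hle : (x i)^2 ≤ ∑ j, (x j)^2 := by
        apply Finset.single_le_sum (f := fun j => (x j)^2)
        · intro j _; positivity
        · exact Finset.mem_univ i
      linarith
    rw [Metric.mem_closedBall, dist_zero_right]
    rw [pi_norm_le_iff_of_nonneg (Real.sqrt_nonneg R)]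
    intro i
    rw [Real.norm_eq_abs, ← Real.sqrt_sq_eq_abs]
    exact Real.sqrt_le_sqrt (hsq i)


end
end S6aux

open S6aux in
/-- If `I(h)+Q(g)` is archimedean and `f ∈ ℝ[x]_A` is positive on `K`,
the normalized sections of the relaxations `S_A^k(K)` are uniformly bounded. -/
theorem statement_6 {n m1 m2 : ℕ} (hn : 1 ≤ n)
    (h : Fin m1 → MvPolynomial (Fin n) ℝ) (g : Fin m2 → MvPolynomial (Fin n) ℝ)
    {A : Finset (Exp n)} (hA : A.Nonempty)
    (hKne : (semiK h g).Nonempty) (harch : ArchQM h g)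
    (f : A → ℝ) (hf : ∀ u ∈ semiK h g, 0 < evalA A f u) :
    ∃ N : ℕ, ∃ Cb : ℝ, 0 < Cb ∧ ∀ k : ℕ, N ≤ k →
      ∀ y : A → ℝ, (∃ w ∈ PhiSet g k ∩ ESet h k, ∀ α : A, w (α : Exp n) = y α) →
        pairA A f y = 1 → ∀ α : A, |y α| ≤ Cb := by
  classical
  obtain ⟨R, hR, k₀, hcert⟩ := harch
  -- the archimedean certificate lives in the untruncated module
  have hcertM : C R - (∑ i : Fin n, X i ^ 2) ∈ Mqm h g := by
    obtain ⟨a, ha, b, hb, heq⟩ := hcert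
    have haM : a ∈ Mqm h g := by
      obtain ⟨q, hdeg, rfl⟩ := ha
      exact (Mqm_isQM).sum_mem _ _ fun i _ => hmul_mem_Mqm i (q i)
    have hbM : b ∈ Mqm h g := by
      obtain ⟨σ₀, σ, hσ₀, hdeg0, hσ, rfl⟩ := hb
      exact ⟨σ₀, σ, 0, hσ₀, fun j => (hσ j).1, by simp⟩
    rw [heq]
    exact (Mqm_isQM).add_mem haM hbM
  set fhat : MvPolynomial (Fin n) ℝ := toPoly A f with hfhatdef
  -- compactness and the minimum of fhat on K
  have hK : IsCompact (semiK h g) := semiK_compact hR hcertM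
  obtain ⟨x₀, hx₀K, hx₀min⟩ := hK.exists_isMinOn hKne (poly_continuous fhat).continuousOn
  set εmin : ℝ := eval x₀ fhat with hεmindef
  have hεmin : 0 < εmin := by
    rw [hεmindef, hfhatdef, ← evalA_toPoly]
    exact hf x₀ hx₀K
  set εs : ℝ := εmin/2 with hεsdef
  have hεs : 0 < εs := by rw [hεsdef]; positivity
  -- Putinar
  have hpos : ∀ x : Fin n → ℝ, (∀ q ∈ Mqm h g, 0 ≤ eval x q) → 2 * εs ≤ eval x fhat := by
    intro x hx
    have hxK : x ∈ semiK h g := by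
      constructor
      · intro i
        have h1 := hx (h i * 1) (hmul_mem_Mqm i 1)
        have h2 := hx (h i * (-1)) (hmul_mem_Mqm i (-1))
        rw [mul_one] at h1
        rw [mul_neg_one, map_neg] at h2
        linarith
      · intro j
        exact hx (g j) (g_mem_Mqm j)
    have := hx₀min hxK
    have h2εs : 2 * εs = εmin := by rw [hεsdef]; ring
    rw [h2εs]
    exact this
  obtain ⟨ts, hts1, hts2, htsM⟩ := putinar_core (Mqm_isQM) hR hcertM hεs hpos
  -- bridges
  obtain ⟨Nf, hNf⟩ := bridge_Mqm htsM
  set xmon : Exp n → MvPolynomial (Fin n) ℝ :=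
    fun α => monomial (Finsupp.equivFunOnFinite.symm α) 1 with hxmon
  have hbnd : ∀ α : Exp n, ∃ lam : ℝ, 0 < lam ∧
      (C lam + xmon α ∈ Mqm h g) ∧ (C lam - xmon α ∈ Mqm h g) :=
    fun α => bnd_all (Mqm_isQM) hR hcertM (xmon α)
  choose lamF hlam0 hlamp hlamm using hbnd
  have hbr1 : ∀ α : Exp n, ∃ N : ℕ, ∀ k, N ≤ k → ∀ z, z ∈ PhiSet g k → z ∈ ESet h k →
      0 ≤ riesz z (C (lamF α) + xmon α) := fun α => bridge_Mqm (hlamp α)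
  have hbr2 : ∀ α : Exp n, ∃ N : ℕ, ∀ k, N ≤ k → ∀ z, z ∈ PhiSet g k → z ∈ ESet h k →
      0 ≤ riesz z (C (lamF α) - xmon α) := fun α => bridge_Mqm (hlamm α)
  choose NF1 hNF1 using hbr1
  choose NF2 hNF2 using hbr2
  refine ⟨max Nf (A.sup fun α => max (NF1 α) (NF2 α)), (∑ α ∈ A, lamF α) / ts + 1, ?_, ?_⟩
  · have hsum : 0 ≤ ∑ α ∈ A, lamF α :=
      Finset.sum_nonneg fun α _ => (hlam0 α).le
    have := div_nonneg hsum hts1.le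
    linarith
  · intro k hk y hwex hpair α
    obtain ⟨w, hw, hwy⟩ := hwex
    have hcoe : ∀ v : Exp n, ⇑(Finsupp.equivFunOnFinite.symm v) = v :=
      fun v => funext fun i => Finsupp.equivFunOnFinite_symm_apply_apply v i
    have hwPhi : w ∈ PhiSet g k := hw.1
    have hwE : w ∈ ESet h k := hw.2
    -- w₀ ≥ 0
    have hw0 : 0 ≤ w 0 := by
      have := hwPhi.1 1 (by simp)
      rw [one_pow, show (1 : MvPolynomial (Fin n) ℝ) = C 1 by simp, riesz_C, one_mul] at this
      exact this
    -- riesz w fhat = 1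
    have hfw : riesz w fhat = 1 := by
      rw [hfhatdef, toPoly, riesz_sum]
      rw [← hpair, pairA]
      refine Finset.sum_congr rfl fun β _ => ?_
      rw [riesz_monomial]
      rw [hcoe ↑β, hwy β]
    -- upper bound on w₀
    have hub : ts * w 0 ≤ 1 := by
      have hkNf : Nf ≤ k := le_trans (le_max_left _ _) hk
      have := hNf k hkNf w hwPhi hwE
      rw [riesz_sub, riesz_C, hfw] at this
      linarith
    have hw0ub : w 0 ≤ 1 / ts := by
      rw [le_div_iff₀ hts1]
      linarith [hub]
    -- per-α bounds
    have hkα : max (NF1 (α : Exp n)) (NF2 (α : Exp n)) ≤ k := by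
      calc max (NF1 (α : Exp n)) (NF2 (α : Exp n))
          ≤ A.sup (fun β => max (NF1 β) (NF2 β)) := Finset.le_sup (f := fun β => max (NF1 β) (NF2 β)) α.2
        _ ≤ max Nf (A.sup fun β => max (NF1 β) (NF2 β)) := le_max_right _ _
        _ ≤ k := hk
    have hrm : riesz w (xmon (α : Exp n)) = y α := by
      rw [hxmon]
      rw [riesz_monomial, hcoe ↑α, one_mul, hwy α]
    have hp1 := hNF1 (α : Exp n) k (le_trans (le_max_left _ _) hkα) w hwPhi hwE
    have hp2 := hNF2 (α : Exp n) k (le_trans (le_max_right _ _) hkα) w hwPhi hwE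
    rw [riesz_add, riesz_C, hrm] at hp1
    rw [riesz_sub, riesz_C, hrm] at hp2
    have habs : |y α| ≤ lamF (α : Exp n) * w 0 := by
      rw [abs_le]
      constructor <;> linarith
    have hstep : lamF (α : Exp n) * w 0 ≤ lamF (α : Exp n) * (1/ts) :=
      mul_le_mul_of_nonneg_left hw0ub (hlam0 _).le
    have hsumb : lamF (α : Exp n) ≤ ∑ β ∈ A, lamF β :=
      Finset.single_le_sum (fun β _ => (hlam0 β).le) α.2
    have hfin : lamF (α : Exp n) * (1/ts) ≤ (∑ β ∈ A, lamF β) / ts := by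
      rw [mul_one_div]
      gcongr
    linarith

end
end

section
/- Let K be the nonempty semialgebraic set defined by h and g, let A ⊆ ℕ^n be finite, suppose ℝ[x]_A is K-full and I(h)+Q(g) is archimedean. Define Q_A^k(K) = {p ∈ ℝ[x]_A : p ∈ Q_k(g) + I_{2k}(h)}. Then int(P_A(K)) ⊆ ∪_{k=1}^∞ Q_A^k(K) ⊆ P_A(K); that is, every polynomial in the interior of P_A(K) belongs to Q_k(g)+I_{2k}(h) for some k, and every p ∈ ℝ[x]_A lying in some Q_k(g)+I_{2k}(h) is nonnegative on K. -/
open MeasureTheory MvPolynomial Finset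

noncomputable section

namespace S7


variable {n : ℕ}

/-- Sums of squares basic lemmas -/
lemma isSumSq_sq (x : MvPolynomial (Fin n) ℝ) : IsSumSq (x^2) := by
  have h : x^2 = x*x + 0 := by ring
  rw [h]; exact IsSumSq.sq_add x IsSumSq.zero

lemma isSumSq_one : IsSumSq (1 : MvPolynomial (Fin n) ℝ) := by
  have h : (1 : MvPolynomial (Fin n) ℝ) = 1^2 := by ring
  rw [h]; exact isSumSq_sq _

lemma isSumSq_sqmul {s : MvPolynomial (Fin n) ℝ} (x : MvPolynomial (Fin n) ℝ)
    (hs : IsSumSq s) : IsSumSq (x^2 * s) := by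
  induction hs with
  | zero => rw [mul_zero]; exact IsSumSq.zero
  | @sq_add a S pS ih =>
      have h : x^2 * (a*a + S) = (x*a)*(x*a) + x^2*S := by ring
      rw [h]; exact IsSumSq.sq_add _ ih

lemma isSumSq_mul {s t : MvPolynomial (Fin n) ℝ} (hs : IsSumSq s) (ht : IsSumSq t) :
    IsSumSq (s * t) := by
  induction hs with
  | zero => rw [zero_mul]; exact IsSumSq.zero
  | @sq_add a S pS ih =>
      have h : (a*a + S) * t = a^2 * t + S * t := by ring
      rw [h]; exact IsSumSq.add (isSumSq_sqmul a ht) ih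

lemma isSumSq_C {c : ℝ} (hc : 0 ≤ c) : IsSumSq (C c : MvPolynomial (Fin n) ℝ) := by
  have h : (C c : MvPolynomial (Fin n) ℝ) = (C (Real.sqrt c))^2 := by
    rw [← map_pow]
    congr 1
    rw [sq]
    exact (Real.mul_self_sqrt hc).symm
  rw [h]; exact isSumSq_sq _

lemma isSumSq_eval_nonneg {s : MvPolynomial (Fin n) ℝ} (hs : IsSumSq s) (u : Fin n → ℝ) :
    0 ≤ eval u s := by
  induction hs with
  | zero => simp
  | @sq_add a S pS ih =>
      rw [map_add, map_mul]
      exact add_nonneg (mul_self_nonneg _) ih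

/-- Quadratic module predicate -/
structure IsQM (S : Set (MvPolynomial (Fin n) ℝ)) : Prop where
  one_mem : (1 : MvPolynomial (Fin n) ℝ) ∈ S
  add_mem : ∀ {a b : MvPolynomial (Fin n) ℝ}, a ∈ S → b ∈ S → a + b ∈ S
  sqmul_mem : ∀ (x : MvPolynomial (Fin n) ℝ) {a : MvPolynomial (Fin n) ℝ}, a ∈ S → x^2 * a ∈ S

namespace IsQM

variable {S : Set (MvPolynomial (Fin n) ℝ)} (hS : IsQM S)
include hS

lemma sq_mem (x : MvPolynomial (Fin n) ℝ) : x^2 ∈ S := by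
  have h : x^2 = x^2 * 1 := by ring
  rw [h]; exact hS.sqmul_mem x hS.one_mem

lemma zero_mem : (0 : MvPolynomial (Fin n) ℝ) ∈ S := by
  have h : (0 : MvPolynomial (Fin n) ℝ) = 0^2 := by ring
  rw [h]; exact hS.sq_mem 0

lemma sos_mem {s : MvPolynomial (Fin n) ℝ} (hs : IsSumSq s) : s ∈ S := by
  induction hs with
  | zero => exact hS.zero_mem
  | @sq_add a S' pS ih =>
      have h : a * a = a^2 := by ring
      exact hS.add_mem (h ▸ hS.sq_mem a) ih

lemma sosmul_mem {s a : MvPolynomial (Fin n) ℝ} (hs : IsSumSq s) (ha : a ∈ S) :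
    s * a ∈ S := by
  induction hs with
  | zero => rw [zero_mul]; exact hS.zero_mem
  | @sq_add b S' pS ih =>
      have h : (b*b + S') * a = b^2 * a + S' * a := by ring
      rw [h]; exact hS.add_mem (hS.sqmul_mem b ha) ih

lemma cmul_mem {c : ℝ} (hc : 0 ≤ c) {a : MvPolynomial (Fin n) ℝ} (ha : a ∈ S) :
    C c * a ∈ S := by
  have h : (C c : MvPolynomial (Fin n) ℝ) = (C (Real.sqrt c))^2 := by
    rw [← map_pow]; congr 1; rw [sq]; exact (Real.mul_self_sqrt hc).symm
  rw [h]; exact hS.sqmul_mem _ ha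

lemma const_mem {c : ℝ} (hc : 0 ≤ c) : (C c : MvPolynomial (Fin n) ℝ) ∈ S := by
  have h : (C c : MvPolynomial (Fin n) ℝ) = C c * 1 := by ring
  rw [h]; exact hS.cmul_mem hc hS.one_mem

/-- cancel a positive constant factor -/
lemma mem_of_cmul_mem {c : ℝ} (hc : 0 < c) {x : MvPolynomial (Fin n) ℝ}
    (h : C c * x ∈ S) : x ∈ S := by
  have h2 := hS.cmul_mem (le_of_lt (by positivity : (0:ℝ) < 1/c)) h
  have h3 : C (1/c) * (C c * x) = x := by
    rw [← mul_assoc, ← map_mul, one_div, inv_mul_cancel₀ (ne_of_gt hc), map_one, one_mul]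
  rwa [h3] at h2

/-- If a negative constant is in S, everything is. -/
lemma univ_of_negconst {c : ℝ} (hc : c < 0) (h : (C c : MvPolynomial (Fin n) ℝ) ∈ S)
    (x : MvPolynomial (Fin n) ℝ) : x ∈ S := by
  -- first: -1 ∈ S
  have hm1 : (-1 : MvPolynomial (Fin n) ℝ) ∈ S := by
    have hnc : (0:ℝ) < -c := neg_pos.mpr hc
    have h2 := hS.cmul_mem (le_of_lt (div_pos one_pos hnc)) h
    have h3 : C (1/(-c)) * (C c : MvPolynomial (Fin n) ℝ) = -1 := by
      rw [← map_mul]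
      have he : 1/(-c) * c = -1 := by
        rw [div_mul_eq_mul_div, one_mul, div_neg, div_self hc.ne]
      rw [he, map_neg, map_one]
    rwa [h3] at h2
  have key : x = ((x+1) * C (1/2:ℝ))^2 * 1 + ((x-1) * C (1/2:ℝ))^2 * (-1) := by
    have hC : (C (1/2:ℝ) : MvPolynomial (Fin n) ℝ) * C (2:ℝ) = 1 := by
      rw [← map_mul]; norm_num
    have h2 : (C (2:ℝ) : MvPolynomial (Fin n) ℝ) * C (2:ℝ) * x
        = (C (2:ℝ) * C (2:ℝ)) * (((x+1) * C (1/2:ℝ))^2 * 1 + ((x-1) * C (1/2:ℝ))^2 * (-1)) := by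
      have expand : ((x+1) * C (1/2:ℝ))^2 * 1 + ((x-1) * C (1/2:ℝ))^2 * (-1)
          = (C (1/2:ℝ))^2 * ((x+1)^2 - (x-1)^2) := by ring
      rw [expand]
      have h4 : ((x:MvPolynomial (Fin n) ℝ)+1)^2 - (x-1)^2 = C (2:ℝ) * C (2:ℝ) * x := by
        have : (C (2:ℝ) : MvPolynomial (Fin n) ℝ) = 2 := by
          rw [map_ofNat]
        rw [this]; ring
      rw [h4]
      have h5 : (C (2:ℝ) : MvPolynomial (Fin n) ℝ) * C 2 * ((C (1/2:ℝ))^2 * (C 2 * C 2 * x))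
          = ((C (1/2:ℝ) * C 2) * (C (1/2:ℝ) * C 2)) * (C 2 * C 2 * x) := by ring
      rw [h5, hC]; ring
    have h6 : (C (2:ℝ) : MvPolynomial (Fin n) ℝ) * C 2 = C 4 := by
      rw [← map_mul]; norm_num
    rw [h6] at h2
    have h7 : x = C (1/4:ℝ) * (C (4:ℝ) * x) := by
      rw [← mul_assoc, ← map_mul]; norm_num
    calc x = C (1/4:ℝ) * (C (4:ℝ) * x) := h7
    _ = C (1/4:ℝ) * (C 4 * (((x+1) * C (1/2:ℝ))^2 * 1 + ((x-1) * C (1/2:ℝ))^2 * (-1))) := by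
          rw [h2]
    _ = (C (1/4:ℝ) * C 4) * (((x+1) * C (1/2:ℝ))^2 * 1 + ((x-1) * C (1/2:ℝ))^2 * (-1)) := by
          ring
    _ = ((x+1) * C (1/2:ℝ))^2 * 1 + ((x-1) * C (1/2:ℝ))^2 * (-1) := by
          rw [← map_mul]; norm_num
  rw [key]
  exact hS.add_mem (hS.sqmul_mem _ hS.one_mem) (hS.sqmul_mem _ hm1)


/-- Fact A : `l² - a² ∈ S → l - a ∈ S` for `l > 0`. -/
lemma factA {l : ℝ} (hl : 0 < l) {a : MvPolynomial (Fin n) ℝ}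
    (h : C (l^2) - a^2 ∈ S) : C l - a ∈ S := by
  apply hS.mem_of_cmul_mem (by linarith : (0:ℝ) < 2*l)
  have hY : (C l - a)^2 + (C (l^2) - a^2) ∈ S := hS.add_mem (hS.sq_mem _) h
  have hid : C (2*l) * (C l - a) = (C l - a)^2 + (C (l^2) - a^2) := by
    simp only [map_mul, map_pow, map_ofNat]
    ring
  rwa [hid]

/-- If `l ± a ∈ S` then `l² - a² ∈ S`, `l > 0`. -/
lemma sqBound {l : ℝ} (hl : 0 < l) {a : MvPolynomial (Fin n) ℝ}
    (h1 : C l - a ∈ S) (h2 : C l + a ∈ S) : C (l^2) - a^2 ∈ S := by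
  apply hS.mem_of_cmul_mem (by linarith : (0:ℝ) < 2*l)
  have hY : (C l - a)^2 * (C l + a) + (C l + a)^2 * (C l - a) ∈ S :=
    hS.add_mem (hS.sqmul_mem _ h2) (hS.sqmul_mem _ h1)
  have hid : C (2*l) * (C (l^2) - a^2)
      = (C l - a)^2 * (C l + a) + (C l + a)^2 * (C l - a) := by
    simp only [map_mul, map_pow, map_ofNat]
    ring
  rwa [hid]

end IsQM

section Closed

variable {S : Set (MvPolynomial (Fin n) ℝ)} (hS : IsQM S)
    (hcl : ∀ x : MvPolynomial (Fin n) ℝ, (∀ ε : ℝ, 0 < ε → x + C ε ∈ S) → x ∈ S)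

include hS in
lemma prod_aux (m : ℕ) : ∀ a b : MvPolynomial (Fin n) ℝ, a ∈ S → 1 - a ∈ S →
    b ∈ S → 1 - b ∈ S → a * b + C ((1/4:ℝ)^m) ∈ S := by
  induction m with
  | zero =>
      intro a b ha ha' hb hb'
      apply hS.mem_of_cmul_mem (by norm_num : (0:ℝ) < 4)
      have hab1 : C (1:ℝ) - (a - b) ∈ S := by
        have : C (1:ℝ) - (a - b) = (1 - a) + b := by
          rw [map_one]; ring
        rw [this]; exact hS.add_mem ha' hb
      have hab2 : C (1:ℝ) + (a - b) ∈ S := by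
        have : C (1:ℝ) + (a - b) = a + (1 - b) := by
          rw [map_one]; ring
        rw [this]; exact hS.add_mem ha hb'
      have hsq : C ((1:ℝ)^2) - (a - b)^2 ∈ S := hS.sqBound one_pos hab1 hab2
      have hY : (a+b)^2 + (C ((1:ℝ)^2) - (a-b)^2) + C (3:ℝ) ∈ S :=
        hS.add_mem (hS.add_mem (hS.sq_mem _) hsq) (hS.const_mem (by norm_num))
      have hid : C (4:ℝ) * (a * b + C ((1/4:ℝ)^0))
          = (a+b)^2 + (C ((1:ℝ)^2) - (a-b)^2) + C (3:ℝ) := by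
        simp only [pow_zero, map_one, one_pow, map_ofNat]
        ring
      rwa [hid]
  | succ m ih =>
      intro a b ha ha' hb hb'
      have hx : a * (1 - a) ∈ S := by
        have hid : a * (1 - a) = (1-a)^2 * a + a^2 * (1 - a) := by ring
        rw [hid]; exact hS.add_mem (hS.sqmul_mem _ ha) (hS.sqmul_mem _ ha')
      have hu : C (4:ℝ) * (a * (1-a)) ∈ S := hS.cmul_mem (by norm_num) hx
      have hu' : 1 - C (4:ℝ) * (a * (1-a)) ∈ S := by
        have hid : 1 - C (4:ℝ) * (a * (1-a)) = (1 - C (2:ℝ) * a)^2 := by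
          simp only [map_ofNat]
          ring
        rw [hid]; exact hS.sq_mem _
      have hIH := ih (C (4:ℝ) * (a * (1-a))) b hu hu' hb hb'
      apply hS.mem_of_cmul_mem (by norm_num : (0:ℝ) < 4)
      have hY : C (4:ℝ) * (a^2 * b) + (C (4:ℝ) * (a * (1-a)) * b + C ((1/4:ℝ)^m)) ∈ S :=
        hS.add_mem (hS.cmul_mem (by norm_num) (hS.sqmul_mem _ hb)) hIH
      have hC4 : (C (4:ℝ) : MvPolynomial (Fin n) ℝ) * C (1/4:ℝ) = 1 := by
        rw [← map_mul]; norm_num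
      have hpow : C ((1/4:ℝ)^(m+1)) = C ((1/4:ℝ)^m) * (C (1/4:ℝ) : MvPolynomial (Fin n) ℝ) := by
        rw [← map_mul, pow_succ]
      have hid : C (4:ℝ) * (a * b + C ((1/4:ℝ)^(m+1)))
          = C (4:ℝ) * (a^2 * b) + (C (4:ℝ) * (a * (1-a)) * b + C ((1/4:ℝ)^m)) := by
        rw [hpow]
        linear_combination (C ((1/4:ℝ)^m) : MvPolynomial (Fin n) ℝ) * hC4
      rwa [hid]

include hS hcl in
lemma mul_mem_unit {a b : MvPolynomial (Fin n) ℝ} (ha : a ∈ S) (ha' : 1 - a ∈ S)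
    (hb : b ∈ S) (hb' : 1 - b ∈ S) : a * b ∈ S := by
  apply hcl
  intro ε hε
  obtain ⟨m, hm⟩ := exists_pow_lt_of_lt_one hε (by norm_num : (1/4:ℝ) < 1)
  have h1 := prod_aux hS m a b ha ha' hb hb'
  have hid : a * b + C ε = (a * b + C ((1/4:ℝ)^m)) + C (ε - (1/4:ℝ)^m) := by
    rw [map_sub]; ring
  rw [hid]
  exact hS.add_mem h1 (hS.const_mem (by linarith))

include hS hcl in
lemma mul_mem_scaled {α β : ℝ} (hα : 0 < α) (hβ : 0 < β) {a b : MvPolynomial (Fin n) ℝ}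
    (ha : a ∈ S) (ha' : C α - a ∈ S) (hb : b ∈ S) (hb' : C β - b ∈ S) : a * b ∈ S := by
  have hia : C (1/α) * a ∈ S := hS.cmul_mem (by positivity) ha
  have hia' : 1 - C (1/α) * a ∈ S := by
    have hid : (1:MvPolynomial (Fin n) ℝ) - C (1/α) * a = C (1/α) * (C α - a) := by
      have h1 : (C (1/α) : MvPolynomial (Fin n) ℝ) * C α = 1 := by
        rw [← map_mul]
        rw [show (1/α) * α = 1 by field_simp]
        exact map_one C
      linear_combination -h1
    rw [hid]; exact hS.cmul_mem (by positivity) ha'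
  have hib : C (1/β) * b ∈ S := hS.cmul_mem (by positivity) hb
  have hib' : 1 - C (1/β) * b ∈ S := by
    have hid : (1:MvPolynomial (Fin n) ℝ) - C (1/β) * b = C (1/β) * (C β - b) := by
      have h1 : (C (1/β) : MvPolynomial (Fin n) ℝ) * C β = 1 := by
        rw [← map_mul]
        rw [show (1/β) * β = 1 by field_simp]
        exact map_one C
      linear_combination -h1
    rw [hid]; exact hS.cmul_mem (by positivity) hb'
  have hmul := mul_mem_unit hS hcl hia hia' hib hib'
  have hid : a * b = C (α*β) * ((C (1/α) * a) * (C (1/β) * b)) := by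
    have h1 : (C (α*β) : MvPolynomial (Fin n) ℝ) * (C (1/α) * C (1/β)) = 1 := by
      rw [← map_mul, ← map_mul]
      rw [show α*β*(1/α*(1/β)) = 1 by field_simp]
      exact map_one C
    linear_combination (-(a*b)) * h1
  rw [hid]
  exact hS.cmul_mem (by positivity) hmul

include hS hcl in
lemma descend {σ p : MvPolynomial (Fin n) ℝ} {k lam c : ℝ} (hk : 0 < k)
    (hσ : σ ∈ S) (hσk : C k - σ ∈ S) (hrel : σ * p - 1 ∈ S)
    (hup : C lam - p ∈ S) (hlam : 0 < lam) (hc : 0 ≤ c) (hp : p + C c ∈ S) :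
    p + C (c - 1/k) ∈ S := by
  have hX : (C k - σ) * (p + C c) ∈ S := by
    apply mul_mem_scaled hS hcl hk (by linarith : (0:ℝ) < lam + c) hσk ?_ hp ?_
    · have hid : C k - (C k - σ) = σ := by ring
      rw [hid]; exact hσ
    · have hid : C (lam + c) - (p + C c) = C lam - p := by
        rw [map_add]; ring
      rw [hid]; exact hup
  apply hS.mem_of_cmul_mem hk
  have hY : (C k - σ) * (p + C c) + (σ * p - 1) + C c * σ ∈ S :=
    hS.add_mem (hS.add_mem hX hrel) (hS.cmul_mem hc hσ)
  have hCk : (C k : MvPolynomial (Fin n) ℝ) * C (1/k) = 1 := by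
    rw [← map_mul]
    rw [show k * (1/k) = 1 by field_simp]
    exact map_one C
  have hid : C k * (p + C (c - 1/k))
      = (C k - σ) * (p + C c) + (σ * p - 1) + C c * σ := by
    rw [map_sub]
    linear_combination -hCk
  rwa [hid]

include hS hcl in
lemma iter_mem {σ p : MvPolynomial (Fin n) ℝ} {k lam : ℝ} (hk : 0 < k) (hlam : 0 < lam)
    (hσ : σ ∈ S) (hσk : C k - σ ∈ S) (hrel : σ * p - 1 ∈ S)
    (hup : C lam - p ∈ S) (hlo : p + C lam ∈ S) : p ∈ S := by
  have key : ∀ j : ℕ, p ∈ S ∨ (0 ≤ lam - j*(1/k) ∧ p + C (lam - j*(1/k)) ∈ S) := by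
    intro j
    induction j with
    | zero =>
        right
        constructor
        · simpa using hlam.le
        · have : lam - (0:ℕ)*(1/k) = lam := by simp
          rw [this]; exact hlo
    | succ j ih =>
        rcases ih with hdone | ⟨hc, hp⟩
        · exact Or.inl hdone
        · have hstep := descend hS hcl hk hσ hσk hrel hup hlam hc hp
          have hval : lam - (j:ℕ)*(1/k) - 1/k = lam - ((j:ℕ)+1)*(1/k) := by ring
          by_cases hpos : 0 ≤ lam - ((j+1:ℕ):ℝ)*(1/k)
          · right
            refine ⟨hpos, ?_⟩
            have : lam - ((j+1:ℕ):ℝ)*(1/k) = lam - (j:ℕ)*(1/k) - 1/k := by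
              push_cast; ring
            rw [this]; exact hstep
          · left
            push_neg at hpos
            set c' := lam - ((j+1:ℕ):ℝ)*(1/k) with hc'
            have hmem : p + C c' ∈ S := by
              have : c' = lam - (j:ℕ)*(1/k) - 1/k := by
                rw [hc']; push_cast; ring
              rw [this]; exact hstep
            have hid : p = (p + C c') + C (-c') := by
              rw [map_neg]; ring
            rw [hid]
            exact hS.add_mem hmem (hS.const_mem (by linarith))
  rcases key (Nat.ceil (lam * k) + 1) with hdone | ⟨hciter, _⟩
  · exact hdone
  · exfalso
    have h1 : lam * k ≤ (Nat.ceil (lam * k) : ℝ) := Nat.le_ceil _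
    have h2 : ((Nat.ceil (lam * k) + 1 : ℕ) : ℝ) = (Nat.ceil (lam * k) : ℝ) + 1 := by
      push_cast; ring
    rw [h2] at hciter
    have h3 : 0 ≤ (lam - ((Nat.ceil (lam*k):ℝ)+1) * (1/k)) * k := mul_nonneg hciter hk.le
    have h4 : (lam - ((Nat.ceil (lam*k):ℝ)+1) * (1/k)) * k = lam*k - ((Nat.ceil (lam*k):ℝ)+1) := by
      field_simp
    rw [h4] at h3
    linarith

end Closed

/-! ### Maximal proper quadratic modules and their characters -/

section Maximal

variable {base Q : Set (MvPolynomial (Fin n) ℝ)}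
variable (hQ : IsQM Q) (hbQ : base ⊆ Q) (hproper : (-1 : MvPolynomial (Fin n) ℝ) ∉ Q)
variable (hmax : ∀ T : Set (MvPolynomial (Fin n) ℝ), IsQM T → base ⊆ T →
    ((-1 : MvPolynomial (Fin n) ℝ) ∉ T) → Q ⊆ T → T = Q)
variable (harch : ∀ x : MvPolynomial (Fin n) ℝ,
    ∃ N : ℝ, 0 < N ∧ C N - x ∈ base ∧ C N + x ∈ base)

include hQ hproper in
lemma const_nonneg_of_mem {t : ℝ} (h : (C t : MvPolynomial (Fin n) ℝ) ∈ Q) : 0 ≤ t := by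
  by_contra hneg
  push_neg at hneg
  exact hproper (hQ.univ_of_negconst hneg h _)

include hQ hbQ hproper hmax in
lemma notmem_rel {x : MvPolynomial (Fin n) ℝ} (hx : x ∉ Q) :
    ∃ q ∈ Q, ∃ s, IsSumSq s ∧ (-1 : MvPolynomial (Fin n) ℝ) = q + x * s := by
  set T : Set (MvPolynomial (Fin n) ℝ) :=
    {y | ∃ q ∈ Q, ∃ s, IsSumSq s ∧ y = q + x * s} with hT
  have hTQM : IsQM T := by
    constructor
    · exact ⟨1, hQ.one_mem, 0, IsSumSq.zero, by ring⟩
    · rintro a b ⟨q1, hq1, s1, hs1, rfl⟩ ⟨q2, hq2, s2, hs2, rfl⟩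
      exact ⟨q1 + q2, hQ.add_mem hq1 hq2, s1 + s2, IsSumSq.add hs1 hs2, by ring⟩
    · rintro z a ⟨q1, hq1, s1, hs1, rfl⟩
      exact ⟨z^2 * q1, hQ.sqmul_mem z hq1, z^2 * s1, isSumSq_sqmul z hs1, by ring⟩
  have hQT : Q ⊆ T := fun q hq => ⟨q, hq, 0, IsSumSq.zero, by ring⟩
  have hxT : x ∈ T := ⟨0, hQ.zero_mem, 1, isSumSq_one, by ring⟩
  by_contra hcon
  push_neg at hcon
  have hm1 : (-1 : MvPolynomial (Fin n) ℝ) ∉ T := by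
    intro hmem
    obtain ⟨q, hq, s, hs, heq⟩ := hmem
    exact hcon q hq s hs heq
  have := hmax T hTQM (Set.Subset.trans hbQ hQT) hm1 hQT
  rw [this] at hxT
  exact hx hxT

include hQ hbQ hproper hmax harch in
lemma closedQ {x : MvPolynomial (Fin n) ℝ}
    (h : ∀ ε : ℝ, 0 < ε → x + C ε ∈ Q) : x ∈ Q := by
  by_contra hx
  obtain ⟨q, hq, s, hs, heq⟩ := notmem_rel hQ hbQ hproper hmax hx
  obtain ⟨N, hN, hN1, hN2⟩ := harch s
  set ε : ℝ := 1/(2*N) with hε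
  have hεpos : 0 < ε := by positivity
  have hx1 : s * (x + C ε) ∈ Q := hQ.sosmul_mem hs (h ε hεpos)
  have hy1 : s * (x + C ε) + q + C ε * (C N - s) ∈ Q :=
    hQ.add_mem (hQ.add_mem hx1 hq) (hQ.cmul_mem hεpos.le (hbQ hN1))
  have hCC : (C ε : MvPolynomial (Fin n) ℝ) * C N = C (1/2:ℝ) := by
    rw [← map_mul, hε]
    congr 1
    field_simp
  have hCm : (C (-1/2:ℝ) : MvPolynomial (Fin n) ℝ) = C (1/2:ℝ) - 1 := by
    rw [show (-1/2:ℝ) = 1/2 - 1 by norm_num, map_sub, map_one]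
  have hid : s * (x + C ε) + q + C ε * (C N - s) = C (-1/2:ℝ) := by
    rw [hCm]
    linear_combination -heq + hCC
  rw [hid] at hy1
  have := const_nonneg_of_mem hQ hproper hy1
  linarith

/-- the set of lower bounds certified by Q -/
def vset (Q : Set (MvPolynomial (Fin n) ℝ)) (b : MvPolynomial (Fin n) ℝ) : Set ℝ :=
  {r : ℝ | b - C r ∈ Q}

/-- the value of `b` along `Q` -/
noncomputable def val (Q : Set (MvPolynomial (Fin n) ℝ)) (b : MvPolynomial (Fin n) ℝ) : ℝ :=
  sSup (vset Q b)

include hbQ harch in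
lemma vset_nonempty (b : MvPolynomial (Fin n) ℝ) : (vset Q b).Nonempty := by
  obtain ⟨N, hN, hN1, hN2⟩ := harch b
  refine ⟨-N, ?_⟩
  show b - C (-N) ∈ Q
  rw [map_neg, sub_neg_eq_add]
  exact hbQ (by rwa [add_comm (C N) b] at hN2)

include hQ hbQ hproper harch in
lemma vset_bddAbove (b : MvPolynomial (Fin n) ℝ) : BddAbove (vset Q b) := by
  obtain ⟨N, hN, hN1, hN2⟩ := harch b
  refine ⟨N, ?_⟩
  intro r hr
  have hsum : (b - C r) + (C N - b) ∈ Q := hQ.add_mem hr (hbQ hN1)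
  have hid : (b - C r) + (C N - b) = C (N - r) := by
    rw [map_sub]; ring
  rw [hid] at hsum
  have := const_nonneg_of_mem hQ hproper hsum
  linarith

include hQ hbQ hproper harch in
lemma val_le {b : MvPolynomial (Fin n) ℝ} {r : ℝ} (h : b - C r ∈ Q) : r ≤ val Q b :=
  le_csSup (vset_bddAbove hQ hbQ hproper harch b) h

include hQ hbQ hproper hmax harch in
lemma val_mem (b : MvPolynomial (Fin n) ℝ) : b - C (val Q b) ∈ Q := by
  apply closedQ hQ hbQ hproper hmax harch
  intro ε hε
  have hlt : val Q b - ε < sSup (vset Q b) := by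
    rw [show sSup (vset Q b) = val Q b from rfl]
    linarith
  obtain ⟨r, hr, hrlt⟩ := exists_lt_of_lt_csSup (vset_nonempty hbQ harch b) hlt
  have hconst : (0:ℝ) ≤ r - (val Q b - ε) := by linarith
  have hmem : (b - C r) + C (r - val Q b + ε) ∈ Q :=
    hQ.add_mem hr (hQ.const_mem (by linarith))
  have hid : (b - C r) + C (r - val Q b + ε) = b - C (val Q b) + C ε := by
    simp only [map_add, map_sub]; ring
  rwa [hid] at hmem

include hQ hproper in
lemma uniq_le {x : MvPolynomial (Fin n) ℝ} {α β : ℝ}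
    (h1 : x - C α ∈ Q) (h2 : C β - x ∈ Q) : α ≤ β := by
  have hsum : (x - C α) + (C β - x) ∈ Q := hQ.add_mem h1 h2
  have hid : (x - C α) + (C β - x) = C (β - α) := by rw [map_sub]; ring
  rw [hid] at hsum
  have := const_nonneg_of_mem hQ hproper hsum
  linarith

include hQ hbQ hproper hmax harch in
lemma val_upper (b : MvPolynomial (Fin n) ℝ) : C (val Q b) - b ∈ Q := by
  obtain ⟨s, hs⟩ : ∃ s, s = val Q b := ⟨_, rfl⟩
  obtain ⟨Sv, hSv⟩ : ∃ Sv, Sv = -(val Q (-b)) := ⟨_, rfl⟩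
  have hmem1 : b - C s ∈ Q := by
    rw [hs]; exact val_mem hQ hbQ hproper hmax harch b
  have hmem2 : C Sv - b ∈ Q := by
    have h2 := val_mem hQ hbQ hproper hmax harch (-b)
    have hid : C Sv - b = -b - C (val Q (-b)) := by
      rw [hSv, map_neg]; ring
    rwa [hid]
  have hsS : s ≤ Sv := uniq_le hQ hproper hmem1 hmem2
  rcases eq_or_lt_of_le hsS with heq | hlt
  · rw [← hs, heq]; exact hmem2
  · exfalso
    obtain ⟨r, hr⟩ : ∃ r : ℝ, r = s + (Sv - s)/3 := ⟨_, rfl⟩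
    obtain ⟨Rr, hRr⟩ : ∃ Rr : ℝ, Rr = Sv - (Sv - s)/3 := ⟨_, rfl⟩
    have hrR : r < Rr := by rw [hr, hRr]; linarith
    have hbr : b - C r ∉ Q := by
      intro hmem
      have := val_le hQ hbQ hproper harch hmem
      rw [← hs] at this
      rw [hr] at this
      linarith
    have hRb : C Rr - b ∉ Q := by
      intro hmem
      have hid : -b - C (-Rr) ∈ Q := by
        rwa [map_neg, sub_neg_eq_add, neg_add_eq_sub]
      have := val_le hQ hbQ hproper harch hid
      have hSv' : val Q (-b) = -Sv := by rw [hSv]; ring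
      rw [hSv'] at this
      rw [hRr] at this
      linarith
    obtain ⟨q₁, hq₁, t₁, ht₁, he₁⟩ := notmem_rel hQ hbQ hproper hmax hbr
    obtain ⟨q₂, hq₂, t₂, ht₂, he₂⟩ := notmem_rel hQ hbQ hproper hmax hRb
    have hτeq : -(t₁ + t₂) = t₂ * q₁ + t₁ * q₂ + C (Rr - r) * (t₁ * t₂) := by
      rw [map_sub]
      linear_combination t₂ * he₁ + t₁ * he₂
    have hτmem : -(t₁ + t₂) ∈ Q := by
      rw [hτeq]
      exact hQ.add_mem (hQ.add_mem (hQ.sosmul_mem ht₂ hq₁) (hQ.sosmul_mem ht₁ hq₂))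
        (hQ.cmul_mem (by linarith) (hQ.sos_mem (isSumSq_mul ht₁ ht₂)))
    obtain ⟨μ, hμ⟩ : ∃ μ : ℝ, μ = Sv - s + 1 := ⟨_, rfl⟩
    have hμpos : (0:ℝ) < μ := by rw [hμ]; linarith
    have hμc : C μ + (b - C r) ∈ Q := by
      have hid : C μ + (b - C r) = (b - C s) + C (μ - r + s) := by
        simp only [map_add, map_sub]; ring
      rw [hid]
      exact hQ.add_mem hmem1 (hQ.const_mem (by rw [hμ, hr] at *; linarith))
    have hμd : C μ + (C Rr - b) ∈ Q := by
      have hid : C μ + (C Rr - b) = (C Sv - b) + C (μ + Rr - Sv) := by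
        simp only [map_add, map_sub]; ring
      rw [hid]
      exact hQ.add_mem hmem2 (hQ.const_mem (by rw [hμ, hRr] at *; linarith))
    have hw₁ : t₁ * (C μ + (b - C r)) + q₁ ∈ Q :=
      hQ.add_mem (hQ.sosmul_mem ht₁ hμc) hq₁
    have hw₂ : t₂ * (C μ + (C Rr - b)) + q₂ ∈ Q :=
      hQ.add_mem (hQ.sosmul_mem ht₂ hμd) hq₂
    have hy : C μ * (-(t₁ + t₂)) ∈ Q := hQ.cmul_mem hμpos.le hτmem
    have htotal : (t₁ * (C μ + (b - C r)) + q₁) + (t₂ * (C μ + (C Rr - b)) + q₂)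
        + C μ * (-(t₁ + t₂)) ∈ Q :=
      hQ.add_mem (hQ.add_mem hw₁ hw₂) hy
    have hCm2 : (C (-2:ℝ) : MvPolynomial (Fin n) ℝ) = -2 := by
      rw [show (-2:ℝ) = -(2:ℝ) by norm_num, map_neg, map_ofNat]
    have hid : (t₁ * (C μ + (b - C r)) + q₁) + (t₂ * (C μ + (C Rr - b)) + q₂)
        + C μ * (-(t₁ + t₂)) = C (-2:ℝ) := by
      rw [hCm2]
      linear_combination -he₁ - he₂
    rw [hid] at htotal
    have := const_nonneg_of_mem hQ hproper htotal
    linarith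

include hQ hbQ hproper hmax harch in
lemma val_unique {x : MvPolynomial (Fin n) ℝ} {α : ℝ}
    (h1 : x - C α ∈ Q) (h2 : C α - x ∈ Q) : val Q x = α := by
  have hle : α ≤ val Q x := val_le hQ hbQ hproper harch h1
  have hge : val Q x ≤ α :=
    uniq_le hQ hproper (val_mem hQ hbQ hproper hmax harch x) h2
  linarith

include hQ hbQ hproper hmax harch in
lemma val_add (x y : MvPolynomial (Fin n) ℝ) : val Q (x + y) = val Q x + val Q y := by
  apply val_unique hQ hbQ hproper hmax harch
  · have h1 := val_mem hQ hbQ hproper hmax harch x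
    have h2 := val_mem hQ hbQ hproper hmax harch y
    have hid : (x + y) - C (val Q x + val Q y) = (x - C (val Q x)) + (y - C (val Q y)) := by
      simp only [map_add]; ring
    rw [hid]; exact hQ.add_mem h1 h2
  · have h1 := val_upper hQ hbQ hproper hmax harch x
    have h2 := val_upper hQ hbQ hproper hmax harch y
    have hid : C (val Q x + val Q y) - (x + y) = (C (val Q x) - x) + (C (val Q y) - y) := by
      simp only [map_add]; ring
    rw [hid]; exact hQ.add_mem h1 h2

include hQ hbQ hproper hmax harch in
lemma val_C (r : ℝ) : val Q (C r) = r := by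
  apply val_unique hQ hbQ hproper hmax harch
  · rw [sub_self]; exact hQ.zero_mem
  · rw [sub_self]; exact hQ.zero_mem

include hQ hbQ hproper harch in
lemma val_nonneg {x : MvPolynomial (Fin n) ℝ} (hx : x ∈ Q) : 0 ≤ val Q x := by
  apply val_le hQ hbQ hproper harch
  rw [map_zero, sub_zero]
  exact hx

include hQ in
lemma I_mul (y : MvPolynomial (Fin n) ℝ) {x : MvPolynomial (Fin n) ℝ}
    (hx : x ∈ Q) (hx' : -x ∈ Q) : y * x ∈ Q ∧ -(y * x) ∈ Q := by
  constructor
  · apply hQ.mem_of_cmul_mem (by norm_num : (0:ℝ) < 4)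
    have hY : (y+1)^2 * x + (y-1)^2 * (-x) ∈ Q :=
      hQ.add_mem (hQ.sqmul_mem _ hx) (hQ.sqmul_mem _ hx')
    have hid : C (4:ℝ) * (y * x) = (y+1)^2 * x + (y-1)^2 * (-x) := by
      simp only [map_ofNat]; ring
    rwa [hid]
  · apply hQ.mem_of_cmul_mem (by norm_num : (0:ℝ) < 4)
    have hY : (y+1)^2 * (-x) + (y-1)^2 * x ∈ Q :=
      hQ.add_mem (hQ.sqmul_mem _ hx') (hQ.sqmul_mem _ hx)
    have hid : C (4:ℝ) * (-(y * x)) = (y+1)^2 * (-x) + (y-1)^2 * x := by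
      simp only [map_ofNat]; ring
    rwa [hid]

include hQ hbQ hproper hmax harch in
lemma val_mul (x y : MvPolynomial (Fin n) ℝ) : val Q (x * y) = val Q x * val Q y := by
  have hyI : (y - C (val Q y)) ∈ Q ∧ -(y - C (val Q y)) ∈ Q := by
    refine ⟨val_mem hQ hbQ hproper hmax harch y, ?_⟩
    have hid : -(y - C (val Q y)) = C (val Q y) - y := by ring
    rw [hid]; exact val_upper hQ hbQ hproper hmax harch y
  have hxI : (x - C (val Q x)) ∈ Q ∧ -(x - C (val Q x)) ∈ Q := by
    refine ⟨val_mem hQ hbQ hproper hmax harch x, ?_⟩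
    have hid : -(x - C (val Q x)) = C (val Q x) - x := by ring
    rw [hid]; exact val_upper hQ hbQ hproper hmax harch x
  have h1 := I_mul hQ x hyI.1 hyI.2
  have h2 := I_mul hQ (C (val Q y)) hxI.1 hxI.2
  have hzQ : x * y - C (val Q x * val Q y) ∈ Q := by
    have hid : x * y - C (val Q x * val Q y)
        = x * (y - C (val Q y)) + C (val Q y) * (x - C (val Q x)) := by
      rw [map_mul]; ring
    rw [hid]; exact hQ.add_mem h1.1 h2.1
  have hzQ' : C (val Q x * val Q y) - x * y ∈ Q := by
    have hid : C (val Q x * val Q y) - x * y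
        = -(x * (y - C (val Q y))) + -(C (val Q y) * (x - C (val Q x))) := by
      rw [map_mul]; ring
    rw [hid]; exact hQ.add_mem h1.2 h2.2
  exact val_unique hQ hbQ hproper hmax harch hzQ hzQ'

include hQ hbQ hproper hmax harch in
lemma val_eval (x : MvPolynomial (Fin n) ℝ) :
    val Q x = eval (fun i => val Q (X i)) x := by
  induction x using MvPolynomial.induction_on with
  | C a => rw [val_C hQ hbQ hproper hmax harch]; simp
  | add p q hp hq =>
      rw [val_add hQ hbQ hproper hmax harch, map_add, hp, hq]
  | mul_X p i hp =>
      rw [val_mul hQ hbQ hproper hmax harch, map_mul, hp, eval_X]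

end Maximal


/-! ### The union of truncated quadratic modules -/

section MsetSec

variable {m1 m2 : ℕ} (h : Fin m1 → MvPolynomial (Fin n) ℝ)
  (g : Fin m2 → MvPolynomial (Fin n) ℝ)

def Mset : Set (MvPolynomial (Fin n) ℝ) := {x | ∃ k : ℕ, x ∈ IQSet h g k}

lemma degOK_add {d k : ℕ} {q1 q2 : MvPolynomial (Fin n) ℝ}
    (h1 : q1 = 0 ∨ d + q1.totalDegree ≤ 2*k) (h2 : q2 = 0 ∨ d + q2.totalDegree ≤ 2*k) :
    q1 + q2 = 0 ∨ d + (q1+q2).totalDegree ≤ 2*k := by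
  rcases h1 with h1 | h1
  · rcases h2 with h2 | h2
    · exact Or.inl (by rw [h1, h2, add_zero])
    · rw [h1, zero_add]; exact Or.inr h2
  · rcases h2 with h2 | h2
    · rw [h2, add_zero]; exact Or.inr h1
    · right
      have hadd := totalDegree_add q1 q2
      rcases max_cases q1.totalDegree q2.totalDegree with ⟨he, _⟩ | ⟨he, _⟩ <;>
        rw [he] at hadd <;> omega

lemma degOK_sqmul {d k : ℕ} (z : MvPolynomial (Fin n) ℝ) {q : MvPolynomial (Fin n) ℝ}
    (h1 : q = 0 ∨ d + q.totalDegree ≤ 2*k) :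
    z^2 * q = 0 ∨ d + (z^2 * q).totalDegree ≤ 2*(k + z.totalDegree) := by
  rcases h1 with h1 | h1
  · exact Or.inl (by rw [h1, mul_zero])
  · right
    have hmul := totalDegree_mul (z^2) q
    have hpow := totalDegree_pow z 2
    omega

lemma IQ_mono {k k' : ℕ} (hkk : k ≤ k') : IQSet h g k ⊆ IQSet h g k' := by
  rintro x ⟨a, ⟨q, hq, rfl⟩, b, ⟨σ₀, σ, hσ₀, hd₀, hσ, rfl⟩, rfl⟩
  refine ⟨_, ⟨q, ?_, rfl⟩, _, ⟨σ₀, σ, hσ₀, le_trans hd₀ (by omega), ?_, rfl⟩, rfl⟩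
  · intro i
    rcases hq i with h0 | hle
    · exact Or.inl h0
    · exact Or.inr (le_trans hle (by omega))
  · intro j
    refine ⟨(hσ j).1, ?_⟩
    rcases (hσ j).2 with h0 | hle
    · exact Or.inl h0
    · exact Or.inr (le_trans hle (by omega))

lemma IQ_add {k : ℕ} {x y : MvPolynomial (Fin n) ℝ}
    (hx : x ∈ IQSet h g k) (hy : y ∈ IQSet h g k) : x + y ∈ IQSet h g k := by
  obtain ⟨a1, ⟨q1, hq1, rfl⟩, b1, ⟨σ1, τ1, hσ1, hd1, hτ1, rfl⟩, rfl⟩ := hx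
  obtain ⟨a2, ⟨q2, hq2, rfl⟩, b2, ⟨σ2, τ2, hσ2, hd2, hτ2, rfl⟩, rfl⟩ := hy
  refine ⟨∑ i, h i * (q1 i + q2 i), ⟨fun i => q1 i + q2 i,
      fun i => degOK_add (hq1 i) (hq2 i), rfl⟩,
    (σ1 + σ2) + ∑ j, g j * (τ1 j + τ2 j), ⟨σ1 + σ2, fun j => τ1 j + τ2 j,
      IsSumSq.add hσ1 hσ2, le_trans (totalDegree_add _ _) (max_le hd1 hd2),
      fun j => ⟨IsSumSq.add (hτ1 j).1 (hτ2 j).1, degOK_add (hτ1 j).2 (hτ2 j).2⟩, rfl⟩, ?_⟩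
  have hs1 : ∑ i, h i * (q1 i + q2 i) = (∑ i, h i * q1 i) + ∑ i, h i * q2 i := by
    rw [← Finset.sum_add_distrib]
    exact Finset.sum_congr rfl (fun i _ => by ring)
  have hs2 : ∑ j, g j * (τ1 j + τ2 j) = (∑ j, g j * τ1 j) + ∑ j, g j * τ2 j := by
    rw [← Finset.sum_add_distrib]
    exact Finset.sum_congr rfl (fun j _ => by ring)
  rw [hs1, hs2]; ring

lemma IQ_sqmul {k : ℕ} (z : MvPolynomial (Fin n) ℝ) {x : MvPolynomial (Fin n) ℝ}
    (hx : x ∈ IQSet h g k) : z^2 * x ∈ IQSet h g (k + z.totalDegree) := by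
  obtain ⟨a1, ⟨q1, hq1, rfl⟩, b1, ⟨σ1, τ1, hσ1, hd1, hτ1, rfl⟩, rfl⟩ := hx
  refine ⟨∑ i, h i * (z^2 * q1 i), ⟨fun i => z^2 * q1 i,
      fun i => degOK_sqmul z (hq1 i), rfl⟩,
    z^2 * σ1 + ∑ j, g j * (z^2 * τ1 j), ⟨z^2 * σ1, fun j => z^2 * τ1 j,
      isSumSq_sqmul z hσ1, ?_,
      fun j => ⟨isSumSq_sqmul z (hτ1 j).1, degOK_sqmul z (hτ1 j).2⟩, rfl⟩, ?_⟩
  · have hmul := totalDegree_mul (z^2) σ1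
    have hpow := totalDegree_pow z 2
    omega
  · have hs1 : ∑ i, h i * (z^2 * q1 i) = z^2 * ∑ i, h i * q1 i := by
      rw [Finset.mul_sum]
      exact Finset.sum_congr rfl (fun i _ => by ring)
    have hs2 : ∑ j, g j * (z^2 * τ1 j) = z^2 * ∑ j, g j * τ1 j := by
      rw [Finset.mul_sum]
      exact Finset.sum_congr rfl (fun j _ => by ring)
    rw [hs1, hs2]; ring

lemma Mset_isQM : IsQM (Mset h g) := by
  constructor
  · refine ⟨0, ∑ i, h i * 0, ⟨fun _ => 0, fun i => Or.inl rfl, rfl⟩,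
      1 + ∑ j, g j * 0, ⟨1, fun _ => 0, isSumSq_one, by rw [totalDegree_one], 
      fun j => ⟨IsSumSq.zero, Or.inl rfl⟩, rfl⟩, by simp⟩
  · rintro a b ⟨k1, ha⟩ ⟨k2, hb⟩
    exact ⟨max k1 k2, IQ_add h g (IQ_mono h g (le_max_left _ _) ha)
      (IQ_mono h g (le_max_right _ _) hb)⟩
  · rintro z a ⟨k1, ha⟩
    exact ⟨k1 + z.totalDegree, IQ_sqmul h g z ha⟩

lemma h_mem_Mset (i : Fin m1) : h i ∈ Mset h g := by
  refine ⟨(h i).totalDegree, ∑ i', h i' * (if i' = i then 1 else 0), 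
    ⟨fun i' => if i' = i then 1 else 0, ?_, rfl⟩,
    0 + ∑ j, g j * 0, ⟨0, fun _ => 0, IsSumSq.zero, by rw [totalDegree_zero]; omega,
      fun j => ⟨IsSumSq.zero, Or.inl rfl⟩, rfl⟩, ?_⟩
  · intro i'
    dsimp only
    by_cases hii : i' = i
    · rw [if_pos hii, totalDegree_one]
      right; subst hii; omega
    · rw [if_neg hii]; exact Or.inl rfl
  · simp [Finset.sum_ite_eq', mul_ite]

lemma negh_mem_Mset (i : Fin m1) : -h i ∈ Mset h g := by
  refine ⟨(h i).totalDegree, ∑ i', h i' * (if i' = i then -1 else 0),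
    ⟨fun i' => if i' = i then -1 else 0, ?_, rfl⟩,
    0 + ∑ j, g j * 0, ⟨0, fun _ => 0, IsSumSq.zero, by rw [totalDegree_zero]; omega,
      fun j => ⟨IsSumSq.zero, Or.inl rfl⟩, rfl⟩, ?_⟩
  · intro i'
    dsimp only
    by_cases hii : i' = i
    · rw [if_pos hii, totalDegree_neg, totalDegree_one]
      right; subst hii; omega
    · rw [if_neg hii]; exact Or.inl rfl
  · simp [Finset.sum_ite_eq', mul_ite]

lemma g_mem_Mset (j : Fin m2) : g j ∈ Mset h g := by
  refine ⟨(g j).totalDegree, ∑ i, h i * 0, ⟨fun _ => 0, fun i => Or.inl rfl, rfl⟩,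
    0 + ∑ j', g j' * (if j' = j then 1 else 0), ⟨0, fun j' => if j' = j then 1 else 0,
      IsSumSq.zero, by rw [totalDegree_zero]; omega, ?_, rfl⟩, ?_⟩
  · intro j'
    dsimp only
    by_cases hjj : j' = j
    · rw [if_pos hjj]
      refine ⟨isSumSq_one, ?_⟩
      rw [totalDegree_one]; right; subst hjj; omega
    · rw [if_neg hjj]; exact ⟨IsSumSq.zero, Or.inl rfl⟩
  · simp [Finset.sum_ite_eq', mul_ite]

lemma IQ_eval_nonneg {k : ℕ} {x : MvPolynomial (Fin n) ℝ} (hx : x ∈ IQSet h g k)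
    {u : Fin n → ℝ} (hu : u ∈ semiK h g) : 0 ≤ eval u x := by
  obtain ⟨a1, ⟨q1, hq1, rfl⟩, b1, ⟨σ1, τ1, hσ1, hd1, hτ1, rfl⟩, rfl⟩ := hx
  rw [map_add]
  have ha : eval u (∑ i, h i * q1 i) = 0 := by
    rw [map_sum]
    apply Finset.sum_eq_zero
    intro i _
    rw [map_mul, hu.1 i, zero_mul]
  rw [ha, zero_add, map_add, map_sum]
  apply add_nonneg (isSumSq_eval_nonneg hσ1 u)
  apply Finset.sum_nonneg
  intro j _
  rw [map_mul]
  exact mul_nonneg (hu.2 j) (isSumSq_eval_nonneg (hτ1 j).1 u)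

lemma Mset_eval_nonneg {x : MvPolynomial (Fin n) ℝ} (hx : x ∈ Mset h g)
    {u : Fin n → ℝ} (hu : u ∈ semiK h g) : 0 ≤ eval u x := by
  obtain ⟨k, hk⟩ := hx
  exact IQ_eval_nonneg h g hk hu

end MsetSec

section ArchSec

variable {m1 m2 : ℕ} (h : Fin m1 → MvPolynomial (Fin n) ℝ)
  (g : Fin m2 → MvPolynomial (Fin n) ℝ)

lemma sum_sq_mem {S : Set (MvPolynomial (Fin n) ℝ)} (hS : IsQM S) {ι : Type*}
    (s : Finset ι) (f : ι → MvPolynomial (Fin n) ℝ) : (∑ j ∈ s, (f j)^2) ∈ S := by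
  classical
  induction s using Finset.induction_on with
  | empty => simpa using hS.zero_mem
  | insert a s hx ih =>
      rw [Finset.sum_insert hx]
      exact hS.add_mem (hS.sq_mem _) ih

lemma arch_Mset (hA : ArchQM h g) (x : MvPolynomial (Fin n) ℝ) :
    ∃ N : ℝ, 0 < N ∧ C N - x ∈ Mset h g ∧ C N + x ∈ Mset h g := by
  obtain ⟨R₀, hR₀, k₀, hmem⟩ := hA
  have hM := Mset_isQM h g
  have hR : C R₀ - ∑ i : Fin n, (X i : MvPolynomial (Fin n) ℝ)^2 ∈ Mset h g := ⟨k₀, hmem⟩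
  have hXsq : ∀ i : Fin n, C R₀ - (X i : MvPolynomial (Fin n) ℝ)^2 ∈ Mset h g := by
    intro i
    have hsplit : ∑ j ∈ Finset.univ.erase i, (X j : MvPolynomial (Fin n) ℝ)^2 + (X i)^2
        = ∑ j : Fin n, (X j)^2 := Finset.sum_erase_add _ _ (Finset.mem_univ i)
    have hsos := sum_sq_mem hM (Finset.univ.erase i) (fun j => (X j : MvPolynomial (Fin n) ℝ))
    have hid : C R₀ - (X i : MvPolynomial (Fin n) ℝ)^2
        = (C R₀ - ∑ j : Fin n, (X j)^2) + ∑ j ∈ Finset.univ.erase i, (X j)^2 := by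
      linear_combination -hsplit
    rw [hid]
    exact hM.add_mem hR hsos
  have hXbnd : ∀ i : Fin n, C (R₀+1) - X i ∈ Mset h g ∧ C (R₀+1) + X i ∈ Mset h g := by
    intro i
    constructor
    · apply hM.mem_of_cmul_mem (by norm_num : (0:ℝ) < 2)
      have hY : (C R₀ - (X i)^2) + (X i - 1)^2 + C (R₀+1) ∈ Mset h g :=
        hM.add_mem (hM.add_mem (hXsq i) (hM.sq_mem _)) (hM.const_mem (by linarith))
      have hid : C (2:ℝ) * (C (R₀+1) - X i)
          = (C R₀ - (X i)^2) + (X i - 1)^2 + C (R₀+1) := by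
        simp only [map_add, map_one, map_ofNat]
        ring
      rwa [hid]
    · apply hM.mem_of_cmul_mem (by norm_num : (0:ℝ) < 2)
      have hY : (C R₀ - (X i)^2) + (X i + 1)^2 + C (R₀+1) ∈ Mset h g :=
        hM.add_mem (hM.add_mem (hXsq i) (hM.sq_mem _)) (hM.const_mem (by linarith))
      have hid : C (2:ℝ) * (C (R₀+1) + X i)
          = (C R₀ - (X i)^2) + (X i + 1)^2 + C (R₀+1) := by
        simp only [map_add, map_one, map_ofNat]
        ring
      rwa [hid]
  -- closure of the bounded predicate
  have Pconst : ∀ a : ℝ, ∃ N : ℝ, 0 < N ∧ C N - C a ∈ Mset h g ∧ C N + C a ∈ Mset h g := by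
    intro a
    refine ⟨|a| + 1, by positivity, ?_, ?_⟩
    · rw [← map_sub]
      exact hM.const_mem (by cases abs_cases a <;> linarith)
    · rw [← map_add]
      exact hM.const_mem (by cases abs_cases a <;> linarith)
  have Padd : ∀ x y : MvPolynomial (Fin n) ℝ,
      (∃ N : ℝ, 0 < N ∧ C N - x ∈ Mset h g ∧ C N + x ∈ Mset h g) →
      (∃ N : ℝ, 0 < N ∧ C N - y ∈ Mset h g ∧ C N + y ∈ Mset h g) →
      (∃ N : ℝ, 0 < N ∧ C N - (x+y) ∈ Mset h g ∧ C N + (x+y) ∈ Mset h g) := by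
    rintro x y ⟨N1, h1, h1a, h1b⟩ ⟨N2, h2, h2a, h2b⟩
    refine ⟨N1 + N2, by linarith, ?_, ?_⟩
    · have hid : C (N1+N2) - (x+y) = (C N1 - x) + (C N2 - y) := by
        rw [map_add]; ring
      rw [hid]; exact hM.add_mem h1a h2a
    · have hid : C (N1+N2) + (x+y) = (C N1 + x) + (C N2 + y) := by
        rw [map_add]; ring
      rw [hid]; exact hM.add_mem h1b h2b
  have Pmul : ∀ x y : MvPolynomial (Fin n) ℝ,
      (∃ N : ℝ, 0 < N ∧ C N - x ∈ Mset h g ∧ C N + x ∈ Mset h g) →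
      (∃ N : ℝ, 0 < N ∧ C N - y ∈ Mset h g ∧ C N + y ∈ Mset h g) →
      (∃ N : ℝ, 0 < N ∧ C N - (x*y) ∈ Mset h g ∧ C N + (x*y) ∈ Mset h g) := by
    rintro x y ⟨N1, h1, h1a, h1b⟩ ⟨N2, h2, h2a, h2b⟩
    have hsq1 : C (N1^2) - x^2 ∈ Mset h g := hM.sqBound h1 h1a h1b
    have hsq2 : C (N2^2) - y^2 ∈ Mset h g := hM.sqBound h2 h2a h2b
    refine ⟨N1^2 + N2^2, by positivity, ?_, ?_⟩
    · apply hM.mem_of_cmul_mem (by norm_num : (0:ℝ) < 2)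
      have hY : (x - y)^2 + (C (N1^2) - x^2) + (C (N2^2) - y^2) + C (N1^2 + N2^2) ∈ Mset h g :=
        hM.add_mem (hM.add_mem (hM.add_mem (hM.sq_mem _) hsq1) hsq2)
          (hM.const_mem (by positivity))
      have hid : C (2:ℝ) * (C (N1^2 + N2^2) - x*y)
          = (x - y)^2 + (C (N1^2) - x^2) + (C (N2^2) - y^2) + C (N1^2 + N2^2) := by
        simp only [map_add, map_ofNat]
        ring
      rwa [hid]
    · apply hM.mem_of_cmul_mem (by norm_num : (0:ℝ) < 2)
      have hY : (x + y)^2 + (C (N1^2) - x^2) + (C (N2^2) - y^2) + C (N1^2 + N2^2) ∈ Mset h g :=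
        hM.add_mem (hM.add_mem (hM.add_mem (hM.sq_mem _) hsq1) hsq2)
          (hM.const_mem (by positivity))
      have hid : C (2:ℝ) * (C (N1^2 + N2^2) + x*y)
          = (x + y)^2 + (C (N1^2) - x^2) + (C (N2^2) - y^2) + C (N1^2 + N2^2) := by
        simp only [map_add, map_ofNat]
        ring
      rwa [hid]
  induction x using MvPolynomial.induction_on with
  | C a => exact Pconst a
  | add p q hp hq => exact Padd p q hp hq
  | mul_X p i hp => exact Pmul p (X i) hp ⟨R₀ + 1, by linarith, hXbnd i⟩

/-- the ε-closure of Mset -/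
def Mbar : Set (MvPolynomial (Fin n) ℝ) :=
  {x | ∀ ε : ℝ, 0 < ε → x + C ε ∈ Mset h g}

lemma Mset_subset_Mbar : Mset h g ⊆ Mbar h g := fun x hx ε hε =>
  (Mset_isQM h g).add_mem hx ((Mset_isQM h g).const_mem hε.le)

lemma Mbar_isQM (hA : ArchQM h g) : IsQM (Mbar h g) := by
  have hM := Mset_isQM h g
  constructor
  · exact Mset_subset_Mbar h g hM.one_mem
  · intro a b ha hb
    intro ε hε
    have hid : (a + b) + C ε = (a + C (ε/2)) + (b + C (ε/2)) := by
      rw [show ε = ε/2 + ε/2 by ring, map_add]; ring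
    rw [hid]
    exact hM.add_mem (ha (ε/2) (by linarith)) (hb (ε/2) (by linarith))
  · intro z a ha
    intro ε hε
    obtain ⟨N, hN, hN1, _⟩ := arch_Mset h g hA (z^2)
    have hδ : (0:ℝ) < ε/N := by positivity
    have hCC : (C (ε/N) : MvPolynomial (Fin n) ℝ) * C N = C ε := by
      rw [← map_mul]
      congr 1
      field_simp
    have hid : z^2 * a + C ε = z^2 * (a + C (ε/N)) + C (ε/N) * (C N - z^2) := by
      linear_combination -hCC
    rw [hid]
    exact hM.add_mem (hM.sqmul_mem z (ha (ε/N) hδ)) (hM.cmul_mem hδ.le hN1)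

lemma Mbar_closed : ∀ x : MvPolynomial (Fin n) ℝ,
    (∀ ε : ℝ, 0 < ε → x + C ε ∈ Mbar h g) → x ∈ Mbar h g := by
  intro x hx ε hε
  have h1 := hx (ε/2) (by linarith) (ε/2) (by linarith)
  have hid : x + C ε = (x + C (ε/2)) + C (ε/2) := by
    rw [show ε = ε/2 + ε/2 by ring, map_add]; ring
  rwa [hid]

end ArchSec

section Putinar

variable {m1 m2 : ℕ} (h : Fin m1 → MvPolynomial (Fin n) ℝ)
  (g : Fin m2 → MvPolynomial (Fin n) ℝ)

lemma putinar_bar (hA : ArchQM h g) {P : MvPolynomial (Fin n) ℝ}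
    (hpos : ∀ u ∈ semiK h g, 0 < eval u P) : P ∈ Mbar h g := by
  classical
  have hM := Mset_isQM h g
  have hMb := Mbar_isQM h g hA
  have hMbcl := Mbar_closed h g
  have harchMb : ∀ x : MvPolynomial (Fin n) ℝ,
      ∃ N : ℝ, 0 < N ∧ C N - x ∈ Mbar h g ∧ C N + x ∈ Mbar h g := by
    intro x
    obtain ⟨N, h0, h1, h2⟩ := arch_Mset h g hA x
    exact ⟨N, h0, Mset_subset_Mbar h g h1, Mset_subset_Mbar h g h2⟩
  by_cases hex : ∃ s, IsSumSq s ∧ s * P - 1 ∈ Mbar h g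
  · obtain ⟨s, hs, hrel⟩ := hex
    obtain ⟨k, hk0, hk1, _⟩ := harchMb s
    obtain ⟨lam, hl0, hl1, hl2⟩ := harchMb P
    have hlo : P + C lam ∈ Mbar h g := by rwa [add_comm] at hl2
    exact iter_mem hMb hMbcl hk0 hl0 (hMb.sos_mem hs) hk1 hrel hl1 hlo
  · exfalso
    set T1 : Set (MvPolynomial (Fin n) ℝ) :=
      {y | ∃ q ∈ Mbar h g, ∃ s, IsSumSq s ∧ y = q - P * s} with hT1def
    have hT1QM : IsQM T1 := by
      constructor
      · exact ⟨1, hMb.one_mem, 0, IsSumSq.zero, by ring⟩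
      · rintro a b ⟨q1, hq1, s1, hs1, rfl⟩ ⟨q2, hq2, s2, hs2, rfl⟩
        exact ⟨q1 + q2, hMb.add_mem hq1 hq2, s1 + s2, IsSumSq.add hs1 hs2, by ring⟩
      · rintro z a ⟨q1, hq1, s1, hs1, rfl⟩
        exact ⟨z^2 * q1, hMb.sqmul_mem z hq1, z^2 * s1, isSumSq_sqmul z hs1, by ring⟩
    have hMbT1 : Mbar h g ⊆ T1 := fun q hq => ⟨q, hq, 0, IsSumSq.zero, by ring⟩
    have hnegP : -P ∈ T1 := ⟨0, hMb.zero_mem, 1, isSumSq_one, by ring⟩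
    have hproperT1 : (-1 : MvPolynomial (Fin n) ℝ) ∉ T1 := by
      rintro ⟨q, hq, s, hs, heq⟩
      apply hex
      refine ⟨s, hs, ?_⟩
      have hid : s * P - 1 = q := by linear_combination heq
      rwa [hid]
    set Scal : Set (Set (MvPolynomial (Fin n) ℝ)) :=
      {T | IsQM T ∧ T1 ⊆ T ∧ (-1 : MvPolynomial (Fin n) ℝ) ∉ T} with hScal
    have hT1S : T1 ∈ Scal := ⟨hT1QM, subset_rfl, hproperT1⟩
    have hchain : ∀ c ⊆ Scal, IsChain (· ⊆ ·) c → c.Nonempty →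
        ∃ ub ∈ Scal, ∀ s ∈ c, s ⊆ ub := by
      intro c hcS hch ⟨t0, ht0⟩
      refine ⟨⋃₀ c, ⟨?_, ?_, ?_⟩, fun s hs => Set.subset_sUnion_of_mem hs⟩
      · constructor
        · exact ⟨t0, ht0, (hcS ht0).1.one_mem⟩
        · rintro a b ⟨s1, hs1, ha⟩ ⟨s2, hs2, hb⟩
          rcases hch.total hs1 hs2 with h12 | h21
          · exact ⟨s2, hs2, (hcS hs2).1.add_mem (h12 ha) hb⟩
          · exact ⟨s1, hs1, (hcS hs1).1.add_mem ha (h21 hb)⟩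
        · rintro z a ⟨s1, hs1, ha⟩
          exact ⟨s1, hs1, (hcS hs1).1.sqmul_mem z ha⟩
      · exact subset_trans (hcS ht0).2.1 (Set.subset_sUnion_of_mem ht0)
      · rintro ⟨t, ht, hmem⟩
        exact (hcS ht).2.2 hmem
    obtain ⟨Q, hT1Q, hQmax⟩ := zorn_subset_nonempty Scal hchain T1 hT1S
    obtain ⟨hQ, hT1Q', hprop⟩ := hQmax.1
    have hmax' : ∀ T : Set (MvPolynomial (Fin n) ℝ), IsQM T → T1 ⊆ T →
        ((-1 : MvPolynomial (Fin n) ℝ) ∉ T) → Q ⊆ T → T = Q := by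
      intro T h1 h2 h3 hQT
      exact subset_antisymm (hQmax.2 ⟨h1, h2, h3⟩ hQT) hQT
    have harchT1 : ∀ x : MvPolynomial (Fin n) ℝ,
        ∃ N : ℝ, 0 < N ∧ C N - x ∈ T1 ∧ C N + x ∈ T1 := by
      intro x
      obtain ⟨N, h0, h1, h2⟩ := harchMb x
      exact ⟨N, h0, hMbT1 h1, hMbT1 h2⟩
    set u : Fin n → ℝ := fun i => val Q (X i) with hu_def
    have hevalval : ∀ w, val Q w = eval u w :=
      val_eval hQ hT1Q' hprop hmax' harchT1
    have hvalnonneg : ∀ w ∈ Q, 0 ≤ val Q w := fun w hw =>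
      val_nonneg hQ hT1Q' hprop harchT1 hw
    have hval0 : val Q 0 = 0 := by
      rw [show (0 : MvPolynomial (Fin n) ℝ) = C 0 by rw [map_zero]]
      exact val_C hQ hT1Q' hprop hmax' harchT1 0
    have hvalneg : ∀ w : MvPolynomial (Fin n) ℝ, val Q (-w) = - val Q w := by
      intro w
      have := val_add hQ hT1Q' hprop hmax' harchT1 w (-w)
      rw [add_neg_cancel, hval0] at this
      linarith
    have hMQ : Mset h g ⊆ Q :=
      subset_trans (Mset_subset_Mbar h g) (subset_trans hMbT1 hT1Q)
    have hu : u ∈ semiK h g := by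
      constructor
      · intro i
        have h1 : 0 ≤ val Q (h i) := hvalnonneg _ (hMQ (h_mem_Mset h g i))
        have h2 : 0 ≤ val Q (-(h i)) := hvalnonneg _ (hMQ (negh_mem_Mset h g i))
        rw [hvalneg] at h2
        have h3 : val Q (h i) = 0 := by linarith
        rw [← hevalval]
        exact h3
      · intro j
        rw [← hevalval]
        exact hvalnonneg _ (hMQ (g_mem_Mset h g j))
    have hPu := hpos u hu
    have h2 : 0 ≤ val Q (-P) := hvalnonneg _ (hT1Q hnegP)
    rw [hvalneg] at h2
    have h3 : (0:ℝ) < val Q P := by rw [hevalval]; exact hPu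
    linarith

end Putinar

section Geometry

variable {m1 m2 : ℕ} (h : Fin m1 → MvPolynomial (Fin n) ℝ)
  (g : Fin m2 → MvPolynomial (Fin n) ℝ)

lemma eval_toPoly {A : Finset (Exp n)} (p : A → ℝ) (u : Fin n → ℝ) :
    eval u (toPoly A p) = evalA A p u := by
  unfold toPoly evalA
  rw [map_sum]
  apply Finset.sum_congr rfl
  intro α _
  rw [eval_monomial]
  unfold monoEval
  congr 1
  rw [Finsupp.prod_fintype _ _ (fun i => pow_zero _)]
  apply Finset.prod_congr rfl
  intro i _
  simp

lemma continuous_evalPoly (w : MvPolynomial (Fin n) ℝ) :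
    Continuous (fun u : Fin n → ℝ => eval u w) := by
  induction w using MvPolynomial.induction_on with
  | C a => simpa using continuous_const
  | add p q hp hq =>
      simp only [map_add]
      exact hp.add hq
  | mul_X p i hp =>
      simp only [map_mul, eval_X]
      exact hp.mul (continuous_apply i)

lemma semiK_compact (hA : ArchQM h g) : IsCompact (semiK h g) := by
  obtain ⟨R₀, hR₀, k₀, hmem⟩ := hA
  have hbound : ∀ u ∈ semiK h g, ∀ i, |u i| ≤ Real.sqrt R₀ := by
    intro u hu i
    have h1 : 0 ≤ eval u (C R₀ - ∑ i : Fin n, (X i : MvPolynomial (Fin n) ℝ)^2) :=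
      IQ_eval_nonneg h g hmem hu
    have h2 : eval u (C R₀ - ∑ i : Fin n, (X i : MvPolynomial (Fin n) ℝ)^2)
        = R₀ - ∑ i, (u i)^2 := by
      simp [map_sub, map_sum]
    have h3 : (u i)^2 ≤ R₀ := by
      have h4 : (u i)^2 ≤ ∑ j, (u j)^2 :=
        Finset.single_le_sum (fun j _ => sq_nonneg (u j)) (Finset.mem_univ i)
      rw [h2] at h1
      linarith
    rw [← Real.sqrt_sq_eq_abs]
    exact Real.sqrt_le_sqrt h3
  have hclosed : IsClosed (semiK h g) := by
    have hset : semiK h g = (⋂ i, {u : Fin n → ℝ | eval u (h i) = 0})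
        ∩ ⋂ j, {u : Fin n → ℝ | 0 ≤ eval u (g j)} := by
      ext u
      simp only [semiK, Set.mem_setOf_eq, Set.mem_inter_iff, Set.mem_iInter]
    rw [hset]
    apply IsClosed.inter
    · exact isClosed_iInter fun i => isClosed_eq (continuous_evalPoly (h i)) continuous_const
    · exact isClosed_iInter fun j => isClosed_le continuous_const (continuous_evalPoly (g j))
  have hsub : semiK h g ⊆
      Set.pi Set.univ (fun _ : Fin n => Set.Icc (-(Real.sqrt R₀)) (Real.sqrt R₀)) := by
    intro u hu i _
    have := hbound u hu i
    rw [abs_le] at this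
    exact ⟨this.1, this.2⟩
  exact IsCompact.of_isClosed_subset (isCompact_univ_pi fun _ => isCompact_Icc) hclosed hsub

lemma interior_pos {A : Finset (Exp n)} (hfull : KFull A (semiK h g))
    {p : A → ℝ} (hp : p ∈ interior (PAcone A (semiK h g))) :
    ∀ u ∈ semiK h g, 0 < evalA A p u := by
  intro u hu
  have hp0 : p ∈ PAcone A (semiK h g) := interior_subset hp
  have h0 : 0 ≤ evalA A p u := hp0 u hu
  rcases eq_or_lt_of_le h0 with heq | hlt
  · exfalso
    obtain ⟨q, hq⟩ := hfull
    obtain ⟨ε, hε, hball⟩ := Metric.isOpen_iff.mp isOpen_interior p hp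
    set t : ℝ := ε / (2 * (‖q‖ + 1)) with ht_def
    have hqpos : (0:ℝ) < ‖q‖ + 1 := by positivity
    have ht : 0 < t := by positivity
    have hmem : p - t • q ∈ PAcone A (semiK h g) := by
      apply interior_subset
      apply hball
      rw [Metric.mem_ball, dist_eq_norm]
      have hsub : p - t • q - p = -(t • q) := by abel
      rw [hsub, norm_neg, norm_smul, Real.norm_eq_abs, abs_of_pos ht]
      have hle : t * ‖q‖ ≤ t * (‖q‖ + 1) := by
        apply mul_le_mul_of_nonneg_left _ ht.le
        linarith
      have heq2 : t * (‖q‖ + 1) = ε / 2 := by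
        rw [ht_def]
        field_simp
      linarith
    have hval := hmem u hu
    have hlin : evalA A (p - t • q) u = evalA A p u - t * evalA A q u := by
      unfold evalA
      rw [Finset.mul_sum, ← Finset.sum_sub_distrib]
      apply Finset.sum_congr rfl
      intro α _
      simp only [Pi.sub_apply, Pi.smul_apply, smul_eq_mul]
      ring
    rw [hlin, ← heq] at hval
    have hqu := hq u hu
    nlinarith
  · exact hlt

end Geometry

end S7

/-- If `ℝ[x]_A` is `K`-full and `I(h)+Q(g)` is archimedean, then
`int(P_A(K)) ⊆ ⋃_k Q_A^k(K) ⊆ P_A(K)`. -/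
theorem statement_7 {n m1 m2 : ℕ} (hn : 1 ≤ n)
    (h : Fin m1 → MvPolynomial (Fin n) ℝ) (g : Fin m2 → MvPolynomial (Fin n) ℝ)
    {A : Finset (Exp n)} (hA : A.Nonempty)
    (hKne : (semiK h g).Nonempty) (hfull : KFull A (semiK h g)) (harch : ArchQM h g) :
    (∀ p ∈ interior (PAcone A (semiK h g)), ∃ k : ℕ, toPoly A p ∈ IQSet h g k) ∧
    (∀ p : A → ℝ, (∃ k : ℕ, toPoly A p ∈ IQSet h g k) → p ∈ PAcone A (semiK h g)) := by
  constructor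
  · intro p hp
    have hpos : ∀ u ∈ semiK h g, 0 < eval u (toPoly A p) := by
      intro u hu
      rw [S7.eval_toPoly]
      exact S7.interior_pos h g hfull hp u hu
    have hKcomp := S7.semiK_compact h g harch
    obtain ⟨u₀, hu₀K, hu₀min'⟩ := hKcomp.exists_isMinOn hKne
      (S7.continuous_evalPoly (toPoly A p)).continuousOn
    have hu₀min : ∀ u ∈ semiK h g, eval u₀ (toPoly A p) ≤ eval u (toPoly A p) :=
      fun u hu => hu₀min' hu
    set μ : ℝ := eval u₀ (toPoly A p) / 2 with hμ
    have hμpos : 0 < μ := by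
      have := hpos u₀ hu₀K
      rw [hμ]
      linarith
    have hpos' : ∀ u ∈ semiK h g, 0 < eval u (toPoly A p - C μ) := by
      intro u hu
      rw [map_sub, eval_C]
      have h1 := hu₀min u hu
      have h2 := hpos u₀ hu₀K
      rw [hμ]
      linarith
    have hbar := S7.putinar_bar h g harch hpos'
    have hmem : toPoly A p ∈ S7.Mset h g := by
      have h3 := hbar μ hμpos
      rwa [sub_add_cancel] at h3
    exact hmem
  · rintro p ⟨k, hk⟩ u hu
    have h1 : 0 ≤ eval u (toPoly A p) := S7.IQ_eval_nonneg h g hk hu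
    rwa [S7.eval_toPoly] at h1

end
end
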